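/- arXiv:2111.03273 — 7 statements merged into one kernel-verified Lean document; each statement's English description precedes it below -/
import Mathlib

section
/- Let d ≥ 1, k ≥ 0, and let φ ∈ ℂ^d be a unit vector. Then: (i) ∫ |⟨φ,u⟩|^{2k} dμ_d(u) = 1/C(d+k-1, k); (ii) C(d+k-1, k) · ∫ |⟨φ,u⟩|^{2(k+1)} dμ_d(u) = (k+1)/(d+k); (iii) C(d+k-1, k) · ∫ |⟨φ,u⟩|^{2(k+2)} dμ_d(u) = (k+1)(k+2)/((d+k)(d+k+1)); consequently the variance of |⟨φ,u⟩|^2 when u is drawn from the measure with density C(d+k-1,k)·|⟨φ,u⟩|^{2k} with respect to μ_d equals (d-1)(k+1)/((d+k)^2 (d+k+1)). -/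
open MeasureTheory

noncomputable section

/-- `ℂ^d`. -/
abbrev Cvec (d : ℕ) : Type := EuclideanSpace ℂ (Fin d)

instance (d : ℕ) : MeasurableSpace (Cvec d) := borel _
instance (d : ℕ) : BorelSpace (Cvec d) := ⟨rfl⟩

/-- The unit sphere of `ℂ^d`. -/
abbrev USphere (d : ℕ) := Metric.sphere (0 : Cvec d) 1

/-- The action of a unitary (linear isometric equivalence) on the unit sphere. -/
def sphereRot (d : ℕ) (e : Cvec d ≃ₗᵢ[ℂ] Cvec d) (x : USphere d) : USphere d :=
  ⟨e x, by
    have hx : ‖(x : Cvec d)‖ = 1 := mem_sphere_zero_iff_norm.mp x.2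
    simp [mem_sphere_zero_iff_norm, e.norm_map, hx]⟩

/-- `μ` is the uniform (rotation-invariant) probability measure on the unit sphere of `ℂ^d`. -/
def IsUniformOnSphere (d : ℕ) (μ : Measure (USphere d)) : Prop :=
  IsProbabilityMeasure μ ∧
    ∀ e : Cvec d ≃ₗᵢ[ℂ] Cvec d, μ.map (sphereRot d e) = μ

namespace Stmt1Aux

variable {d : ℕ}

/-- inner ℂ product with a fixed vector, as a function on the sphere -/
def zf (φ : Cvec d) : USphere d → ℂ := fun u => inner ℂ φ (u : Cvec d)

lemma zf_continuous (φ : Cvec d) : Continuous (zf φ) :=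
  Continuous.inner continuous_const continuous_subtype_val

lemma continuous_sphereRot (e : Cvec d ≃ₗᵢ[ℂ] Cvec d) : Continuous (sphereRot d e) :=
  Continuous.subtype_mk (e.continuous.comp continuous_subtype_val) _

lemma integral_rot {E : Type*} [NormedAddCommGroup E] [NormedSpace ℝ E]
    {μ : Measure (USphere d)} (hμ : IsUniformOnSphere d μ)
    (e : Cvec d ≃ₗᵢ[ℂ] Cvec d) {f : USphere d → E} (hf : Continuous f) :
    ∫ u, f (sphereRot d e u) ∂μ = ∫ u, f u ∂μ := by
  conv_rhs => rw [← hμ.2 e]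
  rw [integral_map (continuous_sphereRot e).aemeasurable hf.aestronglyMeasurable]

lemma zf_rot (φ : Cvec d) (e : Cvec d ≃ₗᵢ[ℂ] Cvec d) (u : USphere d) :
    zf φ (sphereRot d e u) = zf (e.symm φ) u := by
  simp only [zf, sphereRot]
  rw [← LinearIsometryEquiv.inner_map_map e (e.symm φ) (u : Cvec d),
    e.apply_symm_apply]

/-- existence of a unitary sending a chosen unit vector to another -/
lemma exists_rot (hd : 1 ≤ d) {φ ψ : Cvec d} (hφ : ‖φ‖ = 1) (hψ : ‖ψ‖ = 1) :
    ∃ e : Cvec d ≃ₗᵢ[ℂ] Cvec d, e φ = ψ := by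
  have hcard : Module.finrank ℂ (Cvec d) = Fintype.card (Fin d) := by simp
  have hb : ∀ χ : Cvec d, ‖χ‖ = 1 → ∃ b : OrthonormalBasis (Fin d) ℂ (Cvec d),
      b ⟨0, hd⟩ = χ := by
    intro χ hχ
    have horth : Orthonormal ℂ (Set.restrict {(⟨0, hd⟩ : Fin d)} (fun _ => χ)) := by
      constructor
      · intro i; exact hχ
      · intro i j hij
        exact absurd (Subsingleton.elim i j) hij
    obtain ⟨b, hbb⟩ := Orthonormal.exists_orthonormalBasis_extension_of_card_eq hcard horth
    exact ⟨b, hbb _ rfl⟩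
  obtain ⟨b₁, hb₁⟩ := hb φ hφ
  obtain ⟨b₂, hb₂⟩ := hb ψ hψ
  refine ⟨(b₁.repr).trans (b₂.repr).symm, ?_⟩
  have : b₁.repr φ = EuclideanSpace.single ⟨0, hd⟩ (1 : ℂ) := by
    rw [← hb₁]; exact b₁.repr_self _
  simp only [LinearIsometryEquiv.trans_apply, this]
  rw [OrthonormalBasis.repr_symm_single, hb₂]

/-- integrals of ‖⟨φ,u⟩‖-powers only depend on the norm of φ -/
lemma moment_indep (hd : 1 ≤ d) {μ : Measure (USphere d)} (hμ : IsUniformOnSphere d μ)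
    {φ ψ : Cvec d} (hφ : ‖φ‖ = 1) (hψ : ‖ψ‖ = 1) (m : ℕ) :
    ∫ u, ‖zf φ u‖ ^ m ∂μ = ∫ u, ‖zf ψ u‖ ^ m ∂μ := by
  obtain ⟨e, he⟩ := exists_rot hd hψ hφ
  have hcont : Continuous fun u => ‖zf φ u‖ ^ m := ((zf_continuous φ).norm).pow m
  have := integral_rot hμ e hcont
  rw [← this]
  congr 1
  ext u
  rw [zf_rot]
  congr 2
  rw [← he, e.symm_apply_apply]

lemma exists_phase_rot {φ : Cvec d} (hφ : ‖φ‖ = 1) {ω : ℂ} (hω : ‖ω‖ = 1) :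
    ∃ e : Cvec d ≃ₗᵢ[ℂ] Cvec d, e φ = ω • φ ∧
      ∀ ψ : Cvec d, (inner ℂ φ ψ : ℂ) = 0 → e ψ = ψ := by
  have hφφ : (inner ℂ φ φ : ℂ) = 1 := by
    rw [inner_self_eq_norm_sq_to_K, hφ]; norm_num
  have hω1 : (starRingEnd ℂ) ω * ω = 1 := by
    rw [mul_comm, Complex.mul_conj]
    norm_cast
    rw [Complex.normSq_eq_norm_sq, hω]; norm_num
  set L : Cvec d →ₗ[ℂ] Cvec d :=
    LinearMap.id + (ω - 1) • ((innerSL ℂ φ).toLinearMap.smulRight φ) with hL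
  have hLapply : ∀ x, L x = x + ((ω - 1) * (inner ℂ φ x : ℂ)) • φ := by
    intro x
    simp [hL, smul_smul]
  have hinner : ∀ x y : Cvec d, (inner ℂ (L x) (L y) : ℂ) = inner ℂ x y := by
    intro x y
    rw [hLapply, hLapply]
    rw [inner_add_left, inner_add_right, inner_add_right, inner_smul_left,
      inner_smul_right, inner_smul_left, inner_smul_right, hφφ]
    rw [map_mul, map_sub, map_one]
    have h1 : (inner ℂ x φ : ℂ) = (starRingEnd ℂ) (inner ℂ φ x : ℂ) := (inner_conj_symm _ _).symm
    rw [h1]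
    linear_combination ((starRingEnd ℂ) (inner ℂ φ x : ℂ) * (inner ℂ φ y : ℂ)) * hω1
  set Li := L.isometryOfInner hinner with hLi
  set e := Li.toLinearIsometryEquiv rfl with he
  have heapply : ∀ x, e x = L x := fun x => rfl
  have h1 : e φ = ω • φ := by
    rw [heapply, hLapply, hφφ]
    rw [mul_one]
    rw [sub_smul, one_smul]
    abel
  refine ⟨e, h1, fun ψ hψ => ?_⟩
  rw [heapply, hLapply, hψ, mul_zero, zero_smul, add_zero]

/-- the special phase `ω` used for killing off-diagonal terms -/
lemma exists_phase {p q : ℕ} (hpq : p ≠ q) :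
    ∃ ω : ℂ, ‖ω‖ = 1 ∧ ω ^ p * (starRingEnd ℂ ω) ^ q = -1 := by
  set n : ℤ := (p : ℤ) - q with hn
  have hn0 : (n : ℝ) ≠ 0 := by
    simp only [hn]
    push_cast
    intro h
    exact hpq (by exact_mod_cast sub_eq_zero.mp h)
  set θ : ℝ := Real.pi / (n : ℝ) with hθ
  refine ⟨Complex.exp ((θ : ℂ) * Complex.I), ?_, ?_⟩
  · rw [Complex.norm_exp]
    simp
  · have hconj : (starRingEnd ℂ) (Complex.exp ((θ : ℂ) * Complex.I))
        = Complex.exp (-((θ : ℂ) * Complex.I)) := by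
      rw [← Complex.exp_conj]
      congr 1
      simp [Complex.conj_I, mul_comm]
    rw [hconj, ← Complex.exp_nat_mul, ← Complex.exp_nat_mul, ← Complex.exp_add]
    have : (p : ℂ) * ((θ : ℂ) * Complex.I) + (q : ℂ) * -((θ : ℂ) * Complex.I)
        = ((Real.pi : ℂ)) * Complex.I := by
      have hnc : (p : ℂ) - q ≠ 0 := by
        intro h
        exact hpq (by exact_mod_cast sub_eq_zero.mp h)
      have hcast : ((θ : ℝ) : ℂ) = (Real.pi : ℂ) / ((p : ℂ) - q) := by
        rw [hθ, hn]; push_cast; ring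
      rw [hcast]
      field_simp
      ring
    rw [this, Complex.exp_pi_mul_I]

lemma offdiag_vanish {μ : Measure (USphere d)} (hμ : IsUniformOnSphere d μ)
    {φ ψ : Cvec d} (hφ : ‖φ‖ = 1) (hortho : (inner ℂ φ ψ : ℂ) = 0)
    {p q : ℕ} (r s : ℕ) (hpq : p ≠ q) :
    ∫ u, (zf φ u) ^ p * (starRingEnd ℂ (zf φ u)) ^ q *
      ((zf ψ u) ^ r * (starRingEnd ℂ (zf ψ u)) ^ s) ∂μ = 0 := by
  obtain ⟨ω, hω, hωpow⟩ := exists_phase hpq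
  obtain ⟨e, heφ, heψ⟩ := exists_phase_rot hφ hω
  set F : USphere d → ℂ := fun u => (zf φ u) ^ p * (starRingEnd ℂ (zf φ u)) ^ q *
      ((zf ψ u) ^ r * (starRingEnd ℂ (zf ψ u)) ^ s) with hF
  have hFc : Continuous F := by
    have h1 := zf_continuous (d := d) φ
    have h2 := zf_continuous (d := d) ψ
    exact ((h1.pow p).mul ((h1.star).pow q)).mul ((h2.pow r).mul ((h2.star).pow s))
  have hω1 : (starRingEnd ℂ) ω * ω = 1 := by
    rw [mul_comm, Complex.mul_conj]
    norm_cast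
    rw [Complex.normSq_eq_norm_sq, hω]; norm_num
  have hsymmφ : e.symm φ = (starRingEnd ℂ ω) • φ := by
    have h2 : e ((starRingEnd ℂ ω) • φ) = φ := by
      rw [_root_.map_smul, heφ, smul_smul, hω1, one_smul]
    apply e.injective
    rw [e.apply_symm_apply, h2]
  have hsymmψ : e.symm ψ = ψ := by
    conv_lhs => rw [← heψ ψ hortho]
    rw [e.symm_apply_apply]
  have key := integral_rot hμ e hFc
  have hrot : ∀ u, F (sphereRot d e u) = (ω ^ p * (starRingEnd ℂ ω) ^ q) * F u := by
    intro u
    have hzφ : zf φ (sphereRot d e u) = ω * zf φ u := by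
      rw [zf_rot, hsymmφ]
      simp only [zf, inner_smul_left, Complex.conj_conj]
    have hzψ : zf ψ (sphereRot d e u) = zf ψ u := by rw [zf_rot, hsymmψ]
    simp only [hF, hzφ, hzψ, map_mul, mul_pow]
    ring
  simp only [hrot, integral_const_mul, hωpow] at key
  linear_combination -key / 2



lemma ofReal_norm_pow (z : ℂ) (m : ℕ) :
    ((‖z‖ ^ (2 * m) : ℝ) : ℂ) = z ^ m * (starRingEnd ℂ z) ^ m := by
  have h : ‖z‖ ^ (2 * m) = (Complex.normSq z) ^ m := by
    rw [pow_mul, Complex.sq_norm]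
  rw [h, ← mul_pow, Complex.mul_conj]
  push_cast
  ring

lemma expansion {μ : Measure (USphere d)} (hμ : IsUniformOnSphere d μ)
    {φ ψ : Cvec d} (hφ : ‖φ‖ = 1) (hortho : (inner ℂ φ ψ : ℂ) = 0) (m : ℕ) (a b : ℝ) :
    ∫ u, ‖zf ((a : ℂ) • φ + (b : ℂ) • ψ) u‖ ^ (2 * m) ∂μ
      = ∑ j ∈ Finset.range (m + 1), (m.choose j : ℝ) ^ 2 * a ^ (2 * j) * b ^ (2 * (m - j)) *
          ∫ u, ‖zf φ u‖ ^ (2 * j) * ‖zf ψ u‖ ^ (2 * (m - j)) ∂μ := by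
  haveI : IsProbabilityMeasure μ := hμ.1
  have hz1c : Continuous (zf φ) := zf_continuous φ
  have hz2c : Continuous (zf ψ) := zf_continuous ψ
  set T : ℕ → ℕ → USphere d → ℂ := fun j l u =>
      zf φ u ^ j * (starRingEnd ℂ) (zf φ u) ^ l *
        (zf ψ u ^ (m - j) * (starRingEnd ℂ) (zf ψ u) ^ (m - l)) with hT
  have hTc : ∀ j l, Continuous (T j l) := fun j l =>
    ((hz1c.pow j).mul ((hz1c.star).pow l)).mul
      ((hz2c.pow (m - j)).mul ((hz2c.star).pow (m - l)))
  have hTint : ∀ j l, Integrable (T j l) μ := fun j l =>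
    (hTc j l).integrable_of_hasCompactSupport (HasCompactSupport.of_compactSpace _)
  have hsum : ∀ u, zf ((a : ℂ) • φ + (b : ℂ) • ψ) u = (a : ℂ) * zf φ u + (b : ℂ) * zf ψ u := by
    intro u
    simp [zf, inner_add_left, inner_smul_left, Complex.conj_ofReal, Finset.mul_sum, mul_assoc]
  have hpoint : ∀ u : USphere d, ((‖zf ((a : ℂ) • φ + (b : ℂ) • ψ) u‖ ^ (2 * m) : ℝ) : ℂ)
      = ∑ j ∈ Finset.range (m + 1), ∑ l ∈ Finset.range (m + 1),
          ((m.choose j : ℂ) * (m.choose l : ℂ) * (a : ℂ) ^ (j + l) *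
            (b : ℂ) ^ ((m - j) + (m - l))) * T j l u := by
    intro u
    rw [ofReal_norm_pow, hsum]
    have hconj : (starRingEnd ℂ) ((a : ℂ) * zf φ u + (b : ℂ) * zf ψ u)
        = (a : ℂ) * (starRingEnd ℂ) (zf φ u) + (b : ℂ) * (starRingEnd ℂ) (zf ψ u) := by
      simp [map_add, map_mul, Complex.conj_ofReal]
    rw [hconj, add_pow, add_pow, Finset.sum_mul_sum]
    apply Finset.sum_congr rfl; intro j hj
    apply Finset.sum_congr rfl; intro l hl
    simp only [hT, pow_add]
    ring
  apply Complex.ofReal_injective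
  calc ((∫ u, ‖zf ((a : ℂ) • φ + (b : ℂ) • ψ) u‖ ^ (2 * m) ∂μ : ℝ) : ℂ)
      = ∫ u, ((‖zf ((a : ℂ) • φ + (b : ℂ) • ψ) u‖ ^ (2 * m) : ℝ) : ℂ) ∂μ :=
        integral_ofReal.symm
    _ = ∫ u, ∑ j ∈ Finset.range (m + 1), ∑ l ∈ Finset.range (m + 1),
          ((m.choose j : ℂ) * (m.choose l : ℂ) * (a : ℂ) ^ (j + l) *
            (b : ℂ) ^ ((m - j) + (m - l))) * T j l u ∂μ := by
        exact integral_congr_ae (Filter.Eventually.of_forall hpoint)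
    _ = ∑ j ∈ Finset.range (m + 1), ∑ l ∈ Finset.range (m + 1),
          ((m.choose j : ℂ) * (m.choose l : ℂ) * (a : ℂ) ^ (j + l) *
            (b : ℂ) ^ ((m - j) + (m - l))) * ∫ u, T j l u ∂μ := by
        rw [integral_finset_sum _ (fun j hj => integrable_finset_sum _
          (fun l hl => ((hTint j l).const_mul _)))]
        exact Finset.sum_congr rfl (fun j hj => by
          rw [integral_finset_sum _ (fun l hl => ((hTint j l).const_mul _))]
          exact Finset.sum_congr rfl (fun l hl => integral_const_mul _ _))
    _ = ∑ j ∈ Finset.range (m + 1),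
          ((m.choose j : ℂ) * (m.choose j : ℂ) * (a : ℂ) ^ (j + j) *
            (b : ℂ) ^ ((m - j) + (m - j))) * ∫ u, T j j u ∂μ := by
        apply Finset.sum_congr rfl; intro j hj
        apply Finset.sum_eq_single_of_mem j hj
        intro l hl hne
        rw [offdiag_vanish hμ hφ hortho (m - j) (m - l) (fun h => hne h.symm), mul_zero]
    _ = ((∑ j ∈ Finset.range (m + 1), (m.choose j : ℝ) ^ 2 * a ^ (2 * j) * b ^ (2 * (m - j)) *
          ∫ u, ‖zf φ u‖ ^ (2 * j) * ‖zf ψ u‖ ^ (2 * (m - j)) ∂μ : ℝ) : ℂ) := by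
        push_cast
        apply Finset.sum_congr rfl; intro j hj
        have hTj : ∀ u, T j j u
            = ((‖zf φ u‖ ^ (2 * j) * ‖zf ψ u‖ ^ (2 * (m - j)) : ℝ) : ℂ) := by
          intro u
          rw [Complex.ofReal_mul, ofReal_norm_pow, ofReal_norm_pow]
        rw [integral_congr_ae (Filter.Eventually.of_forall hTj),
          show (∫ u, ((‖zf φ u‖ ^ (2 * j) * ‖zf ψ u‖ ^ (2 * (m - j)) : ℝ) : ℂ) ∂μ)
              = ((∫ u, ‖zf φ u‖ ^ (2 * j) * ‖zf ψ u‖ ^ (2 * (m - j)) ∂μ : ℝ) : ℂ)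
            from integral_ofReal]
        rw [← two_mul, ← two_mul]
        push_cast
        ring


lemma poly_zero (m : ℕ) (a : ℕ → ℝ)
    (h : ∀ s : ℝ, 0 < s → ∑ j ∈ Finset.range (m + 1), a j * s ^ j = 0) :
    ∀ j ∈ Finset.range (m + 1), a j = 0 := by
  set P : Polynomial ℝ := ∑ j ∈ Finset.range (m + 1), Polynomial.C (a j) * Polynomial.X ^ j
    with hP
  have heval : ∀ s : ℝ, P.eval s = ∑ j ∈ Finset.range (m + 1), a j * s ^ j := by
    intro s
    simp [hP, Polynomial.eval_finset_sum]
  have hP0 : P = 0 := by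
    apply Polynomial.eq_zero_of_infinite_isRoot
    apply Set.Infinite.mono (s := Set.Ioi (0 : ℝ))
    · intro s hs
      simp only [Set.mem_setOf_eq, Polynomial.IsRoot, heval]
      exact h s hs
    · exact Set.Ioi_infinite 0
  intro j hj
  have := congrArg (fun Q => Polynomial.coeff Q j) hP0
  simp only [hP, Polynomial.finset_sum_coeff, Polynomial.coeff_C_mul,
    Polynomial.coeff_X_pow, Polynomial.coeff_zero] at this
  rw [Finset.sum_eq_single_of_mem j hj] at this
  · simpa using this
  · intro l hl hne
    simp [Ne.symm hne]

lemma unit_combo {φ ψ : Cvec d} (hφ : ‖φ‖ = 1) (hψ : ‖ψ‖ = 1)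
    (hortho : (inner ℂ φ ψ : ℂ) = 0) {a b : ℝ} (hab : a ^ 2 + b ^ 2 = 1) :
    ‖(a : ℂ) • φ + (b : ℂ) • ψ‖ = 1 := by
  have h2 : ‖(a : ℂ) • φ + (b : ℂ) • ψ‖ ^ 2 = 1 := by
    rw [@norm_add_sq ℂ]
    have h3 : (inner ℂ ((a : ℂ) • φ) ((b : ℂ) • ψ) : ℂ) = 0 := by
      rw [inner_smul_left, inner_smul_right, hortho, mul_zero, mul_zero]
    rw [h3]
    simp [norm_smul, hφ, hψ, mul_pow]
    exact hab
  have h4 : (0:ℝ) ≤ ‖(a : ℂ) • φ + (b : ℂ) • ψ‖ := norm_nonneg _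
  nlinarith [h2, h4]

lemma M_eq (hd : 1 ≤ d) {μ : Measure (USphere d)} (hμ : IsUniformOnSphere d μ)
    {φ ψ : Cvec d} (hφ : ‖φ‖ = 1) (hψ : ‖ψ‖ = 1) (hortho : (inner ℂ φ ψ : ℂ) = 0)
    {m j : ℕ} (hj : j ≤ m) :
    (m.choose j : ℝ) * ∫ u, ‖zf φ u‖ ^ (2 * j) * ‖zf ψ u‖ ^ (2 * (m - j)) ∂μ
      = ∫ u, ‖zf φ u‖ ^ (2 * m) ∂μ := by
  set M : ℕ → ℝ := fun i => ∫ u, ‖zf φ u‖ ^ (2 * i) * ‖zf ψ u‖ ^ (2 * (m - i)) ∂μ with hM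
  set c : ℝ := ∫ u, ‖zf φ u‖ ^ (2 * m) ∂μ with hc
  have hkey : ∀ i ∈ Finset.range (m + 1),
      (m.choose i : ℝ) ^ 2 * M i - (m.choose i : ℝ) * c = 0 := by
    apply poly_zero
    intro s hs
    set x : ℝ := Real.sqrt s with hx
    set r : ℝ := Real.sqrt (s + 1) with hr
    have hx2 : x ^ 2 = s := Real.sq_sqrt hs.le
    have hr2 : r ^ 2 = s + 1 := Real.sq_sqrt (by linarith)
    have hrpos : 0 < r := Real.sqrt_pos.mpr (by linarith)
    set a : ℝ := x / r with ha
    set b : ℝ := 1 / r with hb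
    have hab : a ^ 2 + b ^ 2 = 1 := by
      rw [ha, hb, div_pow, div_pow, hx2, hr2]
      field_simp
    have hunit := unit_combo hφ hψ hortho hab
    have hexp := expansion hμ hφ hortho m a b
    have hmom := moment_indep hd hμ hunit hφ (2 * m)
    rw [hmom] at hexp
    -- hexp : c = ∑ i, C² a^{2i} b^{2(m-i)} M i
    have hterm : ∀ i ∈ Finset.range (m + 1),
        (m.choose i : ℝ) ^ 2 * a ^ (2 * i) * b ^ (2 * (m - i)) * M i * (s + 1) ^ m
          = (m.choose i : ℝ) ^ 2 * M i * s ^ i := by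
      intro i hi
      have him : i ≤ m := Nat.lt_succ_iff.mp (Finset.mem_range.mp hi)
      have hsplit : (s + 1) ^ m = (s + 1) ^ i * (s + 1) ^ (m - i) := by
        rw [← pow_add, Nat.add_sub_cancel' him]
      have ha2 : a ^ 2 = s / (s + 1) := by rw [ha, div_pow, hx2, hr2]
      have hb2 : b ^ 2 = 1 / (s + 1) := by rw [hb, div_pow, one_pow, hr2]
      have h1 : a ^ (2 * i) = s ^ i / (s + 1) ^ i := by
        rw [pow_mul, ha2, div_pow]
      have h2 : b ^ (2 * (m - i)) = 1 / (s + 1) ^ (m - i) := by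
        rw [pow_mul, hb2, div_pow, one_pow]
      rw [h1, h2, hsplit]
      have hs1 : (s + 1) ^ i ≠ 0 := by positivity
      have hs2 : (s + 1) ^ (m - i) ≠ 0 := by positivity
      field_simp
    have hmul := congrArg (fun y => y * (s + 1) ^ m) hexp
    simp only [Finset.sum_mul] at hmul
    rw [Finset.sum_congr rfl hterm] at hmul
    -- hmul : c * (s+1)^m = ∑ i, C² M i s^i
    have hbinom : (s + 1) ^ m = ∑ i ∈ Finset.range (m + 1), (m.choose i : ℝ) * s ^ i := by
      rw [add_pow]
      apply Finset.sum_congr rfl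
      intro i hi
      rw [one_pow]
      ring
    calc ∑ i ∈ Finset.range (m + 1),
          ((m.choose i : ℝ) ^ 2 * M i - (m.choose i : ℝ) * c) * s ^ i
        = (∑ i ∈ Finset.range (m + 1), (m.choose i : ℝ) ^ 2 * M i * s ^ i)
            - c * ∑ i ∈ Finset.range (m + 1), (m.choose i : ℝ) * s ^ i := by
          rw [Finset.mul_sum, ← Finset.sum_sub_distrib]
          apply Finset.sum_congr rfl
          intro i hi
          ring
      _ = 0 := by rw [← hmul, ← hbinom]; ring
  have hj' := hkey j (Finset.mem_range.mpr (Nat.lt_succ_iff.mpr hj))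
  have hcj : (m.choose j : ℝ) ≠ 0 := by
    have := Nat.choose_pos hj
    positivity
  have : (m.choose j : ℝ) * ((m.choose j : ℝ) * M j - c) = 0 := by ring_nf; ring_nf at hj'; linarith [hj']
  have h5 := mul_eq_zero.mp this
  rcases h5 with h5 | h5
  · exact absurd h5 hcj
  · linarith [h5]

lemma sum_norm_sq_one (u : USphere d) :
    ∑ i : Fin d, ‖zf (EuclideanSpace.single i (1 : ℂ)) u‖ ^ 2 = 1 := by
  have hz : ∀ i : Fin d, zf (EuclideanSpace.single i (1 : ℂ)) u = (u : Cvec d) i := by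
    intro i
    simp [zf, EuclideanSpace.inner_single_left]
  simp only [hz]
  have hn : ‖(u : Cvec d)‖ = 1 := mem_sphere_zero_iff_norm.mp u.2
  have := EuclideanSpace.norm_eq (u : Cvec d)
  rw [hn] at this
  exact Real.sqrt_eq_one.mp this.symm

lemma recursion (hd : 1 ≤ d) {μ : Measure (USphere d)} (hμ : IsUniformOnSphere d μ)
    {φ : Cvec d} (hφ : ‖φ‖ = 1) (m : ℕ) :
    ((m : ℝ) + d) * ∫ u, ‖zf φ u‖ ^ (2 * (m + 1)) ∂μ
      = ((m : ℝ) + 1) * ∫ u, ‖zf φ u‖ ^ (2 * m) ∂μ := by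
  haveI : IsProbabilityMeasure μ := hμ.1
  set i0 : Fin d := ⟨0, hd⟩ with hi0
  set φ₀ : Cvec d := EuclideanSpace.single i0 (1 : ℂ) with hφ₀
  have hφ₀n : ‖φ₀‖ = 1 := by simp [hφ₀, EuclideanSpace.norm_single]
  -- reduce to φ₀
  rw [moment_indep hd hμ hφ hφ₀n (2 * (m + 1)), moment_indep hd hμ hφ hφ₀n (2 * m)]
  have hz0c : Continuous (zf φ₀) := zf_continuous φ₀
  have hEn : ∀ i : Fin d, ‖EuclideanSpace.single i (1 : ℂ)‖ = 1 := by
    intro i; simp [EuclideanSpace.norm_single]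
  have hEo : ∀ i : Fin d, i ≠ i0 → (inner ℂ φ₀ (EuclideanSpace.single i (1 : ℂ)) : ℂ) = 0 := by
    intro i hi
    rw [hφ₀]
    simp [EuclideanSpace.inner_single_left, EuclideanSpace.single_apply, hi, Ne.symm hi]
  have hsplit : ∫ u, ‖zf φ₀ u‖ ^ (2 * m) ∂μ
      = ∑ i : Fin d, ∫ u, ‖zf φ₀ u‖ ^ (2 * m) *
          ‖zf (EuclideanSpace.single i (1 : ℂ)) u‖ ^ 2 ∂μ := by
    rw [← integral_finset_sum]
    · apply integral_congr_ae
      apply Filter.Eventually.of_forall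
      intro u
      show ‖zf φ₀ u‖ ^ (2 * m)
        = ∑ i : Fin d, ‖zf φ₀ u‖ ^ (2 * m) * ‖zf (EuclideanSpace.single i (1 : ℂ)) u‖ ^ 2
      rw [← Finset.mul_sum, sum_norm_sq_one u, mul_one]
    · intro i _
      apply Continuous.integrable_of_hasCompactSupport
      · exact ((hz0c.norm).pow _).mul (((zf_continuous _).norm).pow 2)
      · exact HasCompactSupport.of_compactSpace _
  have hterm0 : ∫ u, ‖zf φ₀ u‖ ^ (2 * m) * ‖zf φ₀ u‖ ^ 2 ∂μ
      = ∫ u, ‖zf φ₀ u‖ ^ (2 * (m + 1)) ∂μ := by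
    apply integral_congr_ae
    apply Filter.Eventually.of_forall
    intro u
    show ‖zf φ₀ u‖ ^ (2 * m) * ‖zf φ₀ u‖ ^ 2 = ‖zf φ₀ u‖ ^ (2 * (m + 1))
    rw [← pow_add]
    ring
  have htermi : ∀ i : Fin d, i ≠ i0 →
      ((m : ℝ) + 1) * ∫ u, ‖zf φ₀ u‖ ^ (2 * m) *
        ‖zf (EuclideanSpace.single i (1 : ℂ)) u‖ ^ 2 ∂μ
        = ∫ u, ‖zf φ₀ u‖ ^ (2 * (m + 1)) ∂μ := by
    intro i hi
    have := M_eq hd hμ hφ₀n (hEn i) (hEo i hi) (m := m + 1) (j := m) (Nat.le_succ m)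
    rw [Nat.choose_succ_self_right] at this
    have hms : m + 1 - m = 1 := by omega
    rw [hms] at this
    push_cast at this
    convert this using 3
  -- assemble
  have hcard : (Finset.univ.erase i0).card = d - 1 := by
    rw [Finset.card_erase_of_mem (Finset.mem_univ i0), Finset.card_univ, Fintype.card_fin]
  have hsum2 : ∫ u, ‖zf φ₀ u‖ ^ (2 * m) ∂μ
      = (∫ u, ‖zf φ₀ u‖ ^ (2 * (m + 1)) ∂μ) + ∑ i ∈ Finset.univ.erase i0,
          ∫ u, ‖zf φ₀ u‖ ^ (2 * m) * ‖zf (EuclideanSpace.single i (1 : ℂ)) u‖ ^ 2 ∂μ := by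
    rw [hsplit, ← Finset.add_sum_erase _ _ (Finset.mem_univ i0), ← hφ₀, hterm0]
  have hsum3 : ((m : ℝ) + 1) * ∑ i ∈ Finset.univ.erase i0,
      ∫ u, ‖zf φ₀ u‖ ^ (2 * m) * ‖zf (EuclideanSpace.single i (1 : ℂ)) u‖ ^ 2 ∂μ
        = ((d : ℝ) - 1) * ∫ u, ‖zf φ₀ u‖ ^ (2 * (m + 1)) ∂μ := by
    rw [Finset.mul_sum]
    rw [Finset.sum_congr rfl (fun i hi => htermi i (Finset.ne_of_mem_erase hi))]
    rw [Finset.sum_const, hcard, nsmul_eq_mul]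
    have hdc : ((d - 1 : ℕ) : ℝ) = (d : ℝ) - 1 := by
      push_cast [Nat.cast_sub hd]
      ring
    rw [hdc]
  rw [hsum2]
  linear_combination -hsum3

lemma closed_form (hd : 1 ≤ d) {μ : Measure (USphere d)} (hμ : IsUniformOnSphere d μ)
    {φ : Cvec d} (hφ : ‖φ‖ = 1) : ∀ k : ℕ,
    ((d + k - 1).choose k : ℝ) * ∫ u, ‖zf φ u‖ ^ (2 * k) ∂μ = 1 := by
  haveI : IsProbabilityMeasure μ := hμ.1
  intro k
  induction k with
  | zero =>
      simp
  | succ k ih =>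
      have hrec := recursion hd hμ hφ k
      set C1 : ℝ := ((d + k - 1).choose k : ℝ) with hC1
      set C2 : ℝ := ((d + (k + 1) - 1).choose (k + 1) : ℝ) with hC2
      have hidx : d + (k + 1) - 1 = d + k := by omega
      have hNat : (d + k) * ((d + k - 1).choose k) = ((d + k).choose (k + 1)) * (k + 1) := by
        have h := Nat.add_one_mul_choose_eq (d + k - 1) k
        rw [Nat.sub_add_cancel (by omega : 1 ≤ d + k)] at h
        exact h
      have hNatR : ((d : ℝ) + k) * C1 = C2 * ((k : ℝ) + 1) := by
        rw [hC1, hC2, hidx]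
        exact_mod_cast hNat
      have hkd : ((k : ℝ) + d) ≠ 0 := by
        have : (0 : ℝ) < (k : ℝ) + d := by
          have : (1 : ℝ) ≤ (d : ℝ) := by exact_mod_cast hd
          positivity
        linarith
      apply mul_left_cancel₀ hkd
      calc ((k : ℝ) + d) * (C2 * ∫ u, ‖zf φ u‖ ^ (2 * (k + 1)) ∂μ)
          = C2 * (((k : ℝ) + d) * ∫ u, ‖zf φ u‖ ^ (2 * (k + 1)) ∂μ) := by ring
        _ = C2 * (((k : ℝ) + 1) * ∫ u, ‖zf φ u‖ ^ (2 * k) ∂μ) := by rw [hrec]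
        _ = (C2 * ((k : ℝ) + 1)) * ∫ u, ‖zf φ u‖ ^ (2 * k) ∂μ := by ring
        _ = (((d : ℝ) + k) * C1) * ∫ u, ‖zf φ u‖ ^ (2 * k) ∂μ := by rw [hNatR]
        _ = ((d : ℝ) + k) * (C1 * ∫ u, ‖zf φ u‖ ^ (2 * k) ∂μ) := by ring
        _ = ((k : ℝ) + d) * 1 := by rw [ih]; ring

end Stmt1Aux

/-- Moments of `|⟨φ,u⟩|²` under the standard POVM outcome distribution:
(i) `∫ |⟨φ,u⟩|^{2k} dμ = 1/C(d+k-1,k)`;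
(ii) `C(d+k-1,k) · ∫ |⟨φ,u⟩|^{2(k+1)} dμ = (k+1)/(d+k)`;
(iii) `C(d+k-1,k) · ∫ |⟨φ,u⟩|^{2(k+2)} dμ = (k+1)(k+2)/((d+k)(d+k+1))`;
and consequently the variance of `|⟨φ,u⟩|²` under the density `C(d+k-1,k)·|⟨φ,u⟩|^{2k}`
equals `(d-1)(k+1)/((d+k)²(d+k+1))`. -/
theorem stmt1 (d k : ℕ) (hd : 1 ≤ d)
    (μ : Measure (USphere d)) (hμ : IsUniformOnSphere d μ)
    (φ : Cvec d) (hφ : ‖φ‖ = 1) :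
    (∫ u : USphere d, ‖(inner ℂ φ (u : Cvec d) : ℂ)‖ ^ (2 * k) ∂μ)
        = 1 / (Nat.choose (d + k - 1) k : ℝ) ∧
    (Nat.choose (d + k - 1) k : ℝ) *
        (∫ u : USphere d, ‖(inner ℂ φ (u : Cvec d) : ℂ)‖ ^ (2 * (k + 1)) ∂μ)
        = ((k : ℝ) + 1) / ((d : ℝ) + k) ∧
    (Nat.choose (d + k - 1) k : ℝ) *
        (∫ u : USphere d, ‖(inner ℂ φ (u : Cvec d) : ℂ)‖ ^ (2 * (k + 2)) ∂μ)
        = (((k : ℝ) + 1) * ((k : ℝ) + 2)) / (((d : ℝ) + k) * ((d : ℝ) + k + 1)) ∧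
    (Nat.choose (d + k - 1) k : ℝ) *
        (∫ u : USphere d, ‖(inner ℂ φ (u : Cvec d) : ℂ)‖ ^ (2 * (k + 2)) ∂μ)
      - ((Nat.choose (d + k - 1) k : ℝ) *
          (∫ u : USphere d, ‖(inner ℂ φ (u : Cvec d) : ℂ)‖ ^ (2 * (k + 1)) ∂μ)) ^ 2
        = ((d : ℝ) - 1) * ((k : ℝ) + 1) / (((d : ℝ) + k) ^ 2 * ((d : ℝ) + k + 1)) := by
  have hIk := Stmt1Aux.closed_form hd hμ hφ k
  have hrec1 := Stmt1Aux.recursion hd hμ hφ k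
  have hrec2 := Stmt1Aux.recursion hd hμ hφ (k + 1)
  simp only [Stmt1Aux.zf] at hIk hrec1 hrec2
  set C : ℝ := ((d + k - 1).choose k : ℝ) with hC
  set I0 : ℝ := ∫ u : USphere d, ‖(inner ℂ φ (u : Cvec d) : ℂ)‖ ^ (2 * k) ∂μ with hI0
  set I1 : ℝ := ∫ u : USphere d, ‖(inner ℂ φ (u : Cvec d) : ℂ)‖ ^ (2 * (k + 1)) ∂μ with hI1
  set I2 : ℝ := ∫ u : USphere d, ‖(inner ℂ φ (u : Cvec d) : ℂ)‖ ^ (2 * (k + 2)) ∂μ with hI2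
  -- positivity facts
  have hd1 : (1 : ℝ) ≤ (d : ℝ) := by exact_mod_cast hd
  have hdk0 : ((d : ℝ) + k) ≠ 0 := by positivity
  have hdk10 : ((d : ℝ) + k + 1) ≠ 0 := by positivity
  have hC0 : C ≠ 0 := by
    rw [hC]
    have : 0 < (d + k - 1).choose k := Nat.choose_pos (by omega)
    positivity
  -- pre-division forms
  have r1 : C * I0 = 1 := hIk
  have r2 : ((d : ℝ) + k) * (C * I1) = (k : ℝ) + 1 := by
    linear_combination C * hrec1 + ((k : ℝ) + 1) * r1
  have r3 : (((d : ℝ) + k) * ((d : ℝ) + k + 1)) * (C * I2) = ((k : ℝ) + 1) * ((k : ℝ) + 2) := by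
    have h2 : ((k : ℝ) + 1 + d) * I2 = ((k : ℝ) + 1 + 1) * I1 := by
      push_cast at hrec2 ⊢
      linear_combination hrec2
    linear_combination (((d : ℝ) + k) * C) * h2 + ((k : ℝ) + 2) * r2
  have p1 : I0 = 1 / C := by
    rw [eq_div_iff hC0]
    linear_combination r1
  have p2 : C * I1 = ((k : ℝ) + 1) / ((d : ℝ) + k) := by
    rw [eq_div_iff hdk0]
    linear_combination r2
  have p3 : C * I2 = (((k : ℝ) + 1) * ((k : ℝ) + 2)) / (((d : ℝ) + k) * ((d : ℝ) + k + 1)) := by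
    rw [eq_div_iff (mul_ne_zero hdk0 hdk10)]
    linear_combination r3
  refine ⟨p1, p2, p3, ?_⟩
  rw [p3, p2]
  field_simp
  ring



end
end

section
/- Let d ≥ 2 and let e ∈ ℂ^d be a fixed unit vector. The pushforward of the uniform probability measure μ_d on the unit sphere of ℂ^d under the map u ↦ |⟨e,u⟩|² equals the measure on ℝ with density x ↦ (d-1)(1-x)^{d-2}·1_{[0,1]}(x) with respect to Lebesgue measure. -/
open MeasureTheory

noncomputable section

namespace Stmt2Aux

instance (d : ℕ) : InnerProductSpace ℝ (Cvec d) := InnerProductSpace.complexToReal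

/-- volume of annulus in the plane -/
lemma annulus_vol {c1 : ℝ} (c2 : ℝ) (h1 : 0 ≤ c1) :
    volume {p : Fin 2 → ℝ | c1 < p 0 ^ 2 + p 1 ^ 2 ∧ p 0 ^ 2 + p 1 ^ 2 < c2}
      = ENNReal.ofReal (c2 - c1) * volume (Metric.ball (0 : EuclideanSpace ℝ (Fin 2)) 1) := by
  have hmp := EuclideanSpace.volume_preserving_symm_measurableEquiv_toLp (Fin 2)
  set A := {p : Fin 2 → ℝ | c1 < p 0 ^ 2 + p 1 ^ 2 ∧ p 0 ^ 2 + p 1 ^ 2 < c2} with hA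
  have hAmeas : MeasurableSet A := by
    apply MeasurableSet.inter
    · exact measurableSet_lt measurable_const
        (((measurable_pi_apply 0).pow_const 2).add ((measurable_pi_apply 1).pow_const 2))
    · exact measurableSet_lt
        (((measurable_pi_apply 0).pow_const 2).add ((measurable_pi_apply 1).pow_const 2))
        measurable_const
  have hvol : volume A = volume ((MeasurableEquiv.toLp 2 (Fin 2 → ℝ)).symm ⁻¹' A) :=
    (hmp.measure_preimage hAmeas.nullMeasurableSet).symm
  have hnorm : ∀ x : EuclideanSpace ℝ (Fin 2),
      ‖x‖ ^ 2 = x 0 ^ 2 + x 1 ^ 2 := by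
    intro x
    rw [EuclideanSpace.norm_eq, Real.sq_sqrt (by positivity)]
    simp [Fin.sum_univ_two, sq_abs]
  have hpre : (MeasurableEquiv.toLp 2 (Fin 2 → ℝ)).symm ⁻¹' A
      = {x : EuclideanSpace ℝ (Fin 2) | c1 < ‖x‖ ^ 2 ∧ ‖x‖ ^ 2 < c2} := by
    ext x
    simp only [Set.mem_preimage, hA, Set.mem_setOf_eq, hnorm x]
    rfl
  rw [hvol, hpre]
  rcases le_or_gt c2 c1 with hle | hlt
  · have : {x : EuclideanSpace ℝ (Fin 2) | c1 < ‖x‖ ^ 2 ∧ ‖x‖ ^ 2 < c2} = ∅ := by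
      ext x; simp only [Set.mem_setOf_eq, Set.mem_empty_iff_false, iff_false, not_and]
      intro h; linarith
    rw [this, measure_empty, ENNReal.ofReal_eq_zero.2 (by linarith), zero_mul]
  · have hc2 : 0 < c2 := lt_of_le_of_lt h1 hlt
    have hset : {x : EuclideanSpace ℝ (Fin 2) | c1 < ‖x‖ ^ 2 ∧ ‖x‖ ^ 2 < c2}
        = Metric.ball 0 (Real.sqrt c2) \ Metric.closedBall 0 (Real.sqrt c1) := by
      ext x
      simp only [Set.mem_setOf_eq, Set.mem_diff, Metric.mem_ball, Metric.mem_closedBall,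
        dist_zero_right, not_le]
      constructor
      · rintro ⟨hx1, hx2⟩
        refine ⟨?_, ?_⟩
        · rw [← Real.sqrt_sq (norm_nonneg x)]
          exact Real.sqrt_lt_sqrt (by positivity) hx2
        · rw [← Real.sqrt_sq (norm_nonneg x)]
          exact Real.sqrt_lt_sqrt h1 hx1
      · rintro ⟨hx1, hx2⟩
        have h1' : c1 < ‖x‖ ^ 2 := by
          have := pow_lt_pow_left₀ hx2 (Real.sqrt_nonneg c1) (by norm_num : 2 ≠ 0)
          rwa [Real.sq_sqrt h1] at this
        have h2' : ‖x‖ ^ 2 < c2 := by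
          have := pow_lt_pow_left₀ hx1 (norm_nonneg x) (by norm_num : 2 ≠ 0)
          rwa [Real.sq_sqrt hc2.le] at this
        exact ⟨h1', h2'⟩
    rw [hset]
    have hsub : Metric.closedBall (0 : EuclideanSpace ℝ (Fin 2)) (Real.sqrt c1)
        ⊆ Metric.ball 0 (Real.sqrt c2) :=
      Metric.closedBall_subset_ball (Real.sqrt_lt_sqrt h1 hlt)
    have hfin : volume (Metric.closedBall (0 : EuclideanSpace ℝ (Fin 2)) (Real.sqrt c1)) ≠ ⊤ :=
      measure_closedBall_lt_top.ne
    rw [measure_diff hsub measurableSet_closedBall.nullMeasurableSet hfin]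
    have hdim : Module.finrank ℝ (EuclideanSpace ℝ (Fin 2)) = 2 := finrank_euclideanSpace_fin
    rw [Measure.addHaar_closedBall_eq_addHaar_ball]
    rw [Measure.addHaar_ball _ _ (Real.sqrt_nonneg c2), Measure.addHaar_ball _ _ (Real.sqrt_nonneg c1)]
    rw [hdim, Real.sq_sqrt hc2.le, Real.sq_sqrt h1]
    rw [← ENNReal.sub_mul (fun _ _ => measure_ball_lt_top.ne), ENNReal.ofReal_sub _ h1]

/-- scaling of the model integral -/
lemma lintegral_scale (m : ℕ) {c : ℝ} (hc : 0 < c) :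
    ∫⁻ y : Fin m → ℝ, ENNReal.ofReal (1 - c * ∑ j, (y j) ^ 2)
      = ENNReal.ofReal ((Real.sqrt c)⁻¹ ^ m) *
        ∫⁻ y : Fin m → ℝ, ENNReal.ofReal (1 - ∑ j, (y j) ^ 2) := by
  have hr : Real.sqrt c ≠ 0 := by positivity
  have hg : Measurable fun y : Fin m → ℝ => ENNReal.ofReal (1 - ∑ j, (y j) ^ 2) := by
    apply ENNReal.measurable_ofReal.comp
    apply Measurable.const_sub
    exact Finset.measurable_sum _ (fun j _ => (measurable_pi_apply j).pow_const 2)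
  have hφ : Measurable fun y : Fin m → ℝ => Real.sqrt c • y :=
    measurable_const_smul _
  have hmap := Measure.map_addHaar_smul (volume : Measure (Fin m → ℝ)) hr
  have hdim : Module.finrank ℝ (Fin m → ℝ) = m := by
    simp [Module.finrank_pi]
  rw [hdim] at hmap
  have hlm : ∫⁻ y, ENNReal.ofReal (1 - ∑ j, (y j) ^ 2)
        ∂(Measure.map (fun x : Fin m → ℝ => Real.sqrt c • x) volume)
      = ∫⁻ y : Fin m → ℝ, ENNReal.ofReal (1 - ∑ j, ((Real.sqrt c • y) j) ^ 2) ∂volume :=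
    lintegral_map hg hφ
  rw [hmap, lintegral_smul_measure] at hlm
  have hfun : ∀ y : Fin m → ℝ,
      (fun y : Fin m → ℝ => ENNReal.ofReal (1 - ∑ j, (y j) ^ 2)) (Real.sqrt c • y)
        = ENNReal.ofReal (1 - c * ∑ j, (y j) ^ 2) := by
    intro y
    congr 1
    have : ∑ j, (Real.sqrt c * y j) ^ 2 = c * ∑ j, (y j) ^ 2 := by
      rw [Finset.mul_sum]
      congr 1; ext j
      rw [mul_pow, Real.sq_sqrt hc.le]
    simp only [Pi.smul_apply, smul_eq_mul]
    rw [this]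
  simp only [hfun] at hlm
  rw [← hlm]
  congr 1
  rw [abs_of_nonneg (by positivity)]
  rw [← inv_pow]


variable {d : ℕ}

lemma exists_onb (hd : 0 < d) (v : Cvec d) (hv : ‖v‖ = 1) :
    ∃ b : OrthonormalBasis (Fin d) ℂ (Cvec d), b ⟨0, hd⟩ = v := by
  have card : Module.finrank ℂ (Cvec d) = Fintype.card (Fin d) := by simp
  have horth : Orthonormal ℂ (Set.restrict {(⟨0, hd⟩ : Fin d)} (fun _ : Fin d => v)) := by
    constructor
    · intro i; exact hv
    · intro i j hij
      exact absurd (Subsingleton.elim i j) hij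
  obtain ⟨b, hb⟩ := horth.exists_orthonormalBasis_extension_of_card_eq card
  exact ⟨b, hb _ rfl⟩

lemma exists_unitary (hd : 0 < d) (v w : Cvec d) (hv : ‖v‖ = 1) (hw : ‖w‖ = 1) :
    ∃ g : Cvec d ≃ₗᵢ[ℂ] Cvec d, g v = w := by
  obtain ⟨b, hb⟩ := exists_onb hd v hv
  obtain ⟨c, hc⟩ := exists_onb hd w hw
  refine ⟨b.repr.trans c.repr.symm, ?_⟩
  have h1 : b.repr v = EuclideanSpace.single ⟨0, hd⟩ (1 : ℂ) := by
    rw [← hb]; exact b.repr_self _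
  simp only [LinearIsometryEquiv.trans_apply, h1]
  rw [c.repr_symm_single, hc]


lemma finrank_real_cvec : Module.finrank ℝ (Cvec d) = 2 * d := by
  have := Module.finrank_mul_finrank ℝ ℂ (Cvec d)
  rw [Complex.finrank_real_complex, finrank_euclideanSpace_fin] at this
  omega

lemma real_inner_cvec (x y : Cvec d) :
    (inner ℝ x y : ℝ) = Complex.re (inner ℂ x y : ℂ) := rfl

lemma exists_onb_real (hd : 2 ≤ d) (e : Cvec d) (he : ‖e‖ = 1) :
    ∃ b : OrthonormalBasis (Fin 2 ⊕ Fin (2 * d - 2)) ℝ (Cvec d),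
      b (Sum.inl 0) = e ∧ b (Sum.inl 1) = Complex.I • e := by
  have card : Module.finrank ℝ (Cvec d) = Fintype.card (Fin 2 ⊕ Fin (2 * d - 2)) := by
    simp [finrank_real_cvec]; omega
  classical
  set v : Fin 2 ⊕ Fin (2 * d - 2) → Cvec d :=
    fun i => if i = Sum.inl 0 then e else Complex.I • e with hv
  have hIe : ‖Complex.I • e‖ = 1 := by
    rw [norm_smul, Complex.norm_I, he, one_mul]
  have hinner : (inner ℝ e (Complex.I • e) : ℝ) = 0 := by
    rw [real_inner_cvec]
    rw [inner_smul_right]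
    rw [@inner_self_eq_norm_sq_to_K ℂ]
    simp [he]
  have horth : Orthonormal ℝ
      (Set.restrict {Sum.inl 0, Sum.inl 1} v) := by
    constructor
    · rintro ⟨i, hi⟩
      rcases hi with h | h <;> subst h <;> [show ‖v (Sum.inl 0)‖ = 1; show ‖v (Sum.inl 1)‖ = 1] <;> simp [hv, hIe, he]
    · rintro ⟨i, hi⟩ ⟨j, hj⟩ hij
      have hne : i ≠ j := fun h => hij (Subtype.ext h)
      rcases hi with h | h <;> rcases hj with h' | h' <;> subst h <;> subst h' <;>
        simp_all [hv]
      · exact hinner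
      · rw [real_inner_comm]; exact hinner
  obtain ⟨b, hb⟩ := horth.exists_orthonormalBasis_extension_of_card_eq card
  refine ⟨b, ?_, ?_⟩
  · have := hb (Sum.inl 0) (by simp)
    simpa [hv] using this
  · have := hb (Sum.inl 1) (by simp)
    simpa [hv] using this


lemma cone_volume (hd : 2 ≤ d) (e : Cvec d) (he : ‖e‖ = 1) {a : ℝ} (ha0 : 0 ≤ a) (ha1 : a < 1) :
    volume {z : Cvec d | ‖z‖ < 1 ∧ a * ‖z‖ ^ 2 < ‖(inner ℂ e z : ℂ)‖ ^ 2}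
      = ENNReal.ofReal ((1 - a) ^ (d - 1)) *
        volume {z : Cvec d | ‖z‖ < 1 ∧ (0:ℝ) * ‖z‖ ^ 2 < ‖(inner ℂ e z : ℂ)‖ ^ 2} := by
  obtain ⟨b, hb0, hb1⟩ := exists_onb_real hd e he
  set T : ℝ → Set (Cvec d) :=
    fun t => {z : Cvec d | ‖z‖ < 1 ∧ t * ‖z‖ ^ 2 < ‖(inner ℂ e z : ℂ)‖ ^ 2} with hT
  set Qy : (Fin (2*d-2) → ℝ) → ℝ := fun y => ∑ j, y j ^ 2 with hQy
  set S : ℝ → Set ((Fin 2 → ℝ) × (Fin (2*d-2) → ℝ)) :=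
    fun t => {q | (q.1 0 ^ 2 + q.1 1 ^ 2) + Qy q.2 < 1 ∧
      t * ((q.1 0 ^ 2 + q.1 1 ^ 2) + Qy q.2) < q.1 0 ^ 2 + q.1 1 ^ 2} with hS
  set Θ : Cvec d → (Fin 2 → ℝ) × (Fin (2*d-2) → ℝ) :=
    fun z => (MeasurableEquiv.sumPiEquivProdPi (fun _ : Fin 2 ⊕ Fin (2*d-2) => ℝ))
      ((MeasurableEquiv.toLp 2 _).symm (b.measurableEquiv z)) with hΘ
  -- Θ is measure preserving
  have hmp3 : MeasurePreserving
      (MeasurableEquiv.sumPiEquivProdPi (fun _ : Fin 2 ⊕ Fin (2*d-2) => ℝ)) volume volume := by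
    have := (volume_measurePreserving_sumPiEquivProdPi_symm (fun _ : Fin 2 ⊕ Fin (2*d-2) => ℝ)).symm
      (MeasurableEquiv.sumPiEquivProdPi _).symm
    simpa using this
  have hΘmp : MeasurePreserving Θ volume volume :=
    hmp3.comp ((EuclideanSpace.volume_preserving_symm_measurableEquiv_toLp _).comp
      b.measurePreserving_measurableEquiv)
  -- coordinates of Θ
  have hcoord1 : ∀ z : Cvec d, (Θ z).1 0 = b.repr z (Sum.inl 0) := fun _ => rfl
  have hcoord2 : ∀ z : Cvec d, (Θ z).1 1 = b.repr z (Sum.inl 1) := fun _ => rfl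
  have hcoord3 : ∀ (z : Cvec d) (j : Fin (2*d-2)), (Θ z).2 j = b.repr z (Sum.inr j) := fun _ _ => rfl
  -- pointwise identities
  have hinner : ∀ z : Cvec d,
      ‖(inner ℂ e z : ℂ)‖ ^ 2 = b.repr z (Sum.inl 0) ^ 2 + b.repr z (Sum.inl 1) ^ 2 := by
    intro z
    have h0 : b.repr z (Sum.inl 0) = Complex.re (inner ℂ e z : ℂ) := by
      rw [b.repr_apply_apply, hb0]
      exact real_inner_cvec e z
    have h1 : b.repr z (Sum.inl 1) = Complex.im (inner ℂ e z : ℂ) := by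
      rw [b.repr_apply_apply, hb1, real_inner_cvec, inner_smul_left]
      simp [Complex.mul_re, Complex.conj_I]
    rw [h0, h1, Complex.sq_norm, Complex.normSq_apply]
    ring
  have hnorm : ∀ z : Cvec d,
      ‖z‖ ^ 2 = (b.repr z (Sum.inl 0) ^ 2 + b.repr z (Sum.inl 1) ^ 2) +
        ∑ j, b.repr z (Sum.inr j) ^ 2 := by
    intro z
    have h1 : ‖z‖ = ‖b.repr z‖ := (b.repr.norm_map z).symm
    rw [h1, EuclideanSpace.norm_eq, Real.sq_sqrt (by positivity)]
    rw [Fintype.sum_sum_type]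
    simp [Fin.sum_univ_two, sq_abs]
  -- membership transfer
  have hmemb : ∀ (t : ℝ) (z : Cvec d), z ∈ T t ↔ Θ z ∈ S t := by
    intro t z
    have hlt1 : ‖z‖ < 1 ↔ ‖z‖ ^ 2 < 1 := by
      constructor
      · intro h
        have := pow_lt_pow_left₀ h (norm_nonneg z) (by norm_num : 2 ≠ 0)
        simpa using this
      · intro h
        by_contra hc
        push_neg at hc
        have : (1:ℝ) ≤ ‖z‖ ^ 2 := by nlinarith
        linarith
    simp only [hT, hS, Set.mem_setOf_eq, hcoord1, hcoord2, hQy]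
    have hc3 : ∀ j : Fin (2*d-2), (Θ z).2 j = b.repr z (Sum.inr j) := hcoord3 z
    rw [Finset.sum_congr rfl (fun j _ => by rw [hc3 j])]
    rw [← hnorm z, ← hinner z, ← hlt1]
  have hTS : ∀ t : ℝ, T t = Θ ⁻¹' (S t) := by
    intro t; ext z; exact hmemb t z
  -- S is measurable
  have hQycont : Continuous Qy := by
    apply continuous_finset_sum
    exact fun j _ => (continuous_apply j).pow 2
  have hR2 : Continuous (fun p : Fin 2 → ℝ => p 0 ^ 2 + p 1 ^ 2) :=
    ((continuous_apply (0 : Fin 2)).pow 2).add ((continuous_apply (1 : Fin 2)).pow 2)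
  have hSmeas : ∀ t : ℝ, MeasurableSet (S t) := by
    intro t
    apply MeasurableSet.inter
    · exact measurableSet_lt ((hR2.comp continuous_fst).add
        (hQycont.comp continuous_snd)).measurable measurable_const
    · exact measurableSet_lt (((continuous_const.mul ((hR2.comp continuous_fst).add
        (hQycont.comp continuous_snd)))).measurable)
        (hR2.comp continuous_fst).measurable
  -- volume of T t via the product decomposition
  have hTvol : ∀ t : ℝ, volume (T t) = (Measure.prod volume volume) (S t) := by
    intro t
    rw [hTS t, hΘmp.measure_preimage (hSmeas t).nullMeasurableSet, ← Measure.volume_eq_prod]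
  -- the key computation
  have key : ∀ t : ℝ, 0 ≤ t → t < 1 →
      volume (T t) = ENNReal.ofReal ((1 - t) ^ (d - 1)) *
        ((∫⁻ y : Fin (2*d-2) → ℝ, ENNReal.ofReal (1 - Qy y)) *
          volume (Metric.ball (0 : EuclideanSpace ℝ (Fin 2)) 1)) := by
    intro t ht0 ht1
    have h1t : (0:ℝ) < 1 - t := by linarith
    rw [hTvol t, Measure.prod_apply_symm (hSmeas t)]
    -- sections are annuli
    have hsec : ∀ y : Fin (2*d-2) → ℝ,
        (fun p => (p, y)) ⁻¹' (S t) =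
          {p : Fin 2 → ℝ | t * Qy y / (1 - t) < p 0 ^ 2 + p 1 ^ 2 ∧
            p 0 ^ 2 + p 1 ^ 2 < 1 - Qy y} := by
      intro y
      ext p
      simp only [Set.mem_preimage, hS, Set.mem_setOf_eq]
      constructor
      · rintro ⟨h1, h2⟩
        constructor
        · rw [div_lt_iff₀ h1t]; nlinarith
        · linarith
      · rintro ⟨h1, h2⟩
        rw [div_lt_iff₀ h1t] at h1
        constructor
        · linarith
        · nlinarith
    have hQy0 : ∀ y : Fin (2*d-2) → ℝ, 0 ≤ Qy y := fun y => by positivity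
    have hintg : ∀ y : Fin (2*d-2) → ℝ,
        volume ((fun p => (p, y)) ⁻¹' (S t))
          = ENNReal.ofReal (1 - (1/(1-t)) * Qy y) *
            volume (Metric.ball (0 : EuclideanSpace ℝ (Fin 2)) 1) := by
      intro y
      rw [hsec y, annulus_vol _ (by positivity)]
      congr 2
      field_simp
      ring
    rw [lintegral_congr hintg]
    rw [lintegral_mul_const' _ _ measure_ball_lt_top.ne]
    have hsc := lintegral_scale (2*d-2) (c := 1/(1-t)) (by positivity)
    simp only [hQy] at hsc ⊢
    rw [hsc]
    have hpow : (Real.sqrt (1/(1-t)))⁻¹ ^ (2*d-2) = (1 - t) ^ (d - 1) := by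
      rw [one_div, Real.sqrt_inv, inv_inv]
      have hm2 : 2*d-2 = 2 * (d - 1) := by omega
      rw [hm2, pow_mul, Real.sq_sqrt h1t.le]
    rw [hpow, mul_assoc]
  rw [show {z : Cvec d | ‖z‖ < 1 ∧ a * ‖z‖ ^ 2 < ‖(inner ℂ e z : ℂ)‖ ^ 2} = T a from rfl,
      show {z : Cvec d | ‖z‖ < 1 ∧ (0:ℝ) * ‖z‖ ^ 2 < ‖(inner ℂ e z : ℂ)‖ ^ 2} = T 0 from rfl]
  rw [key a ha0 ha1, key 0 le_rfl one_pos]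
  simp


/-- real-linear version of a unitary -/
def unitaryReal (g : Cvec d ≃ₗᵢ[ℂ] Cvec d) : Cvec d ≃ₗᵢ[ℝ] Cvec d where
  toLinearEquiv := g.toLinearEquiv.restrictScalars ℝ
  norm_map' := g.norm_map

lemma vol_preimage_unitary (g : Cvec d ≃ₗᵢ[ℂ] Cvec d) {A : Set (Cvec d)}
    (hA : MeasurableSet A) : volume (⇑g ⁻¹' A) = volume A := by
  have h : (⇑(unitaryReal g) : Cvec d → Cvec d) = ⇑g := rfl
  rw [← h]
  exact (unitaryReal g).measurePreserving.measure_preimage hA.nullMeasurableSet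

lemma continuous_sphereRot (g : Cvec d ≃ₗᵢ[ℂ] Cvec d) : Continuous (sphereRot d g) :=
  Continuous.subtype_mk (g.continuous.comp continuous_subtype_val) _

lemma sphere_measure_inv (μ : Measure (USphere d))
    (hinv : ∀ g : Cvec d ≃ₗᵢ[ℂ] Cvec d, μ.map (sphereRot d g) = μ)
    (g : Cvec d ≃ₗᵢ[ℂ] Cvec d) {A : Set (USphere d)} (hA : MeasurableSet A) :
    μ A = μ (sphereRot d g ⁻¹' A) := by
  conv_lhs => rw [← hinv g]
  exact Measure.map_apply (continuous_sphereRot g).measurable hA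

lemma measure_slice (μ : Measure (USphere d))
    (hinv : ∀ g : Cvec d ≃ₗᵢ[ℂ] Cvec d, μ.map (sphereRot d g) = μ)
    (hd : 0 < d) (e w : Cvec d) (he : ‖e‖ = 1) (hw : ‖w‖ = 1) (a : ℝ) :
    μ {u : USphere d | a < ‖(inner ℂ w ((u : Cvec d)) : ℂ)‖ ^ 2}
      = μ {u : USphere d | a < ‖(inner ℂ e ((u : Cvec d)) : ℂ)‖ ^ 2} := by
  obtain ⟨g, hg⟩ := exists_unitary hd e w he hw
  have hA : MeasurableSet {u : USphere d | a < ‖(inner ℂ w ((u : Cvec d)) : ℂ)‖ ^ 2} := by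
    apply measurableSet_lt measurable_const
    have : Continuous fun u : USphere d => ‖(inner ℂ w ((u : Cvec d)) : ℂ)‖ ^ 2 := by
      apply Continuous.pow
      exact continuous_norm.comp (Continuous.inner continuous_const continuous_subtype_val)
    exact this.measurable
  rw [sphere_measure_inv μ hinv g hA]
  congr 1
  ext u
  simp only [Set.mem_preimage, Set.mem_setOf_eq, sphereRot]
  have : (inner ℂ w (g (u : Cvec d)) : ℂ) = inner ℂ e ((u : Cvec d)) := by
    conv_lhs => rw [← hg]
    exact g.inner_map_map e (u : Cvec d)
  rw [this]

lemma fubini_key (hd : 2 ≤ d) (μ : Measure (USphere d)) (hμ : IsUniformOnSphere d μ)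
    (e : Cvec d) (he : ‖e‖ = 1) (a : ℝ) :
    μ {u : USphere d | a < ‖(inner ℂ e ((u : Cvec d)) : ℂ)‖ ^ 2}
        * volume (Metric.ball (0 : Cvec d) 1)
      = volume {z : Cvec d | ‖z‖ < 1 ∧ a * ‖z‖ ^ 2 < ‖(inner ℂ e z : ℂ)‖ ^ 2} := by
  obtain ⟨hprob, hinv⟩ := hμ
  haveI := hprob
  have hd0 : 0 < d := by omega
  haveI : Nontrivial (Cvec d) := ⟨⟨e, 0, by intro h; rw [h] at he; simp at he⟩⟩
  set T : Set (Cvec d) := {z | ‖z‖ < 1 ∧ a * ‖z‖ ^ 2 < ‖(inner ℂ e z : ℂ)‖ ^ 2} with hTdef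
  set s : Set (USphere d × Cvec d) :=
    {p | ‖p.2‖ < 1 ∧ a * ‖p.2‖ ^ 2 < ‖(inner ℂ ((p.1 : Cvec d)) p.2 : ℂ)‖ ^ 2} with hs
  have hinner_cont : Continuous fun p : USphere d × Cvec d =>
      (inner ℂ ((p.1 : Cvec d)) p.2 : ℂ) :=
    Continuous.inner (continuous_subtype_val.comp continuous_fst) continuous_snd
  have hsmeas : MeasurableSet s := by
    apply MeasurableSet.inter
    · exact measurableSet_lt (continuous_norm.comp continuous_snd).measurable measurable_const
    · exact measurableSet_lt
        (continuous_const.mul ((continuous_norm.comp continuous_snd).pow 2)).measurable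
        ((continuous_norm.comp hinner_cont).pow 2).measurable
  have hTmeas : MeasurableSet T := by
    apply MeasurableSet.inter
    · exact measurableSet_lt continuous_norm.measurable measurable_const
    · exact measurableSet_lt
        (continuous_const.mul (continuous_norm.pow 2)).measurable
        ((continuous_norm.comp (Continuous.inner continuous_const continuous_id)).pow 2).measurable
  -- first Fubini direction : sections over u
  have h1 : (μ.prod volume) s = volume T := by
    rw [Measure.prod_apply hsmeas]
    have hsec : ∀ u : USphere d, volume (Prod.mk u ⁻¹' s) = volume T := by
      intro u
      have hu : ‖(u : Cvec d)‖ = 1 := mem_sphere_zero_iff_norm.mp u.2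
      obtain ⟨g, hg⟩ := exists_unitary hd0 (u : Cvec d) e hu he
      have hpre : Prod.mk u ⁻¹' s = ⇑g ⁻¹' T := by
        ext z
        simp only [Set.mem_preimage, hs, hTdef, Set.mem_setOf_eq, g.norm_map]
        have : (inner ℂ e (g z) : ℂ) = inner ℂ ((u : Cvec d)) z := by
          conv_lhs => rw [← hg]
          exact g.inner_map_map _ z
        rw [this]
      rw [hpre, vol_preimage_unitary g hTmeas]
    rw [lintegral_congr hsec, lintegral_const, measure_univ, mul_one]
  -- second Fubini direction : sections over z
  have h2 : (μ.prod volume) s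
      = μ {u : USphere d | a < ‖(inner ℂ e ((u : Cvec d)) : ℂ)‖ ^ 2}
        * volume (Metric.ball (0 : Cvec d) 1) := by
    rw [Measure.prod_apply_symm hsmeas]
    set G := μ {u : USphere d | a < ‖(inner ℂ e ((u : Cvec d)) : ℂ)‖ ^ 2} with hG
    have hsec : ∀ z : Cvec d, z ≠ 0 →
        μ ((fun u => (u, z)) ⁻¹' s)
          = (Metric.ball (0 : Cvec d) 1).indicator (fun _ => G) z := by
      intro z hz
      by_cases hz1 : ‖z‖ < 1
      · have hzmem : z ∈ Metric.ball (0 : Cvec d) 1 := by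
          simpa [Metric.mem_ball, dist_zero_right] using hz1
        rw [Set.indicator_of_mem hzmem]
        have hnz : (0:ℝ) < ‖z‖ := norm_pos_iff.mpr hz
        set w : Cvec d := ‖z‖⁻¹ • z with hwdef
        have hw : ‖w‖ = 1 := norm_smul_inv_norm hz
        have hzw : z = ‖z‖ • w := by
          rw [hwdef, smul_inv_smul₀ (ne_of_gt hnz)]
        have hsect : (fun u => (u, z)) ⁻¹' s
            = {u : USphere d | a < ‖(inner ℂ w ((u : Cvec d)) : ℂ)‖ ^ 2} := by
          ext u
          simp only [Set.mem_preimage, hs, Set.mem_setOf_eq, hz1, true_and]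
          have hinner2 : (inner ℂ ((u : Cvec d)) z : ℂ) = (‖z‖ : ℝ) • (inner ℂ ((u : Cvec d)) w : ℂ) := by
            conv_lhs => rw [hzw]
            exact inner_smul_real_right _ _ _
          rw [hinner2]
          rw [norm_smul]
          have hns : ‖(inner ℂ ((u : Cvec d)) w : ℂ)‖ = ‖(inner ℂ w ((u : Cvec d)) : ℂ)‖ :=
            norm_inner_symm _ _
          rw [hns]
          rw [mul_pow]
          simp only [Real.norm_eq_abs, abs_of_pos hnz]
          constructor
          · intro h
            have h2 := (mul_lt_mul_iff_right₀ (by positivity : (0:ℝ) < ‖z‖^2)).mp (by linarith [h] : ‖z‖^2 * a < ‖z‖^2 * ‖(inner ℂ w ((u : Cvec d)) : ℂ)‖^2)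
            exact h2
          · intro h
            have := (mul_lt_mul_iff_right₀ (by positivity : (0:ℝ) < ‖z‖^2)).mpr h
            linarith [this]
        rw [hsect, measure_slice μ hinv hd0 e w he hw a]
      · have : (fun u => (u, z)) ⁻¹' s = ∅ := by
          ext u
          simp only [Set.mem_preimage, hs, Set.mem_setOf_eq, Set.mem_empty_iff_false, iff_false,
            not_and]
          intro h; exact absurd h hz1
        rw [this, measure_empty, Set.indicator_of_notMem]
        simp only [Metric.mem_ball, dist_zero_right, not_lt]
        linarith [not_lt.mp hz1]
    have hae : ∀ᵐ z : Cvec d ∂volume, μ ((fun u => (u, z)) ⁻¹' s)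
        = (Metric.ball (0 : Cvec d) 1).indicator (fun _ => G) z := by
      filter_upwards [compl_mem_ae_iff.mpr (measure_singleton (0 : Cvec d))] with z hz
      exact hsec z hz
    rw [lintegral_congr_ae hae, lintegral_indicator Metric.isOpen_ball.measurableSet,
      setLIntegral_const, mul_comm]
  rw [← h2, h1]


lemma T0_vol (e : Cvec d) (he : ‖e‖ = 1) :
    volume {z : Cvec d | ‖z‖ < 1 ∧ (0:ℝ) * ‖z‖ ^ 2 < ‖(inner ℂ e z : ℂ)‖ ^ 2}
      = volume (Metric.ball (0 : Cvec d) 1) := by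
  set N : Submodule ℝ (Cvec d) :=
    LinearMap.ker (((innerSL ℂ e).toLinearMap).restrictScalars ℝ) with hN
  have hNtop : N ≠ ⊤ := by
    intro h
    have he2 : e ∈ N := h ▸ Submodule.mem_top
    have : (inner ℂ e e : ℂ) = 0 := he2
    rw [inner_self_eq_norm_sq_to_K, he] at this
    norm_num at this
  have hNnull : volume (N : Set (Cvec d)) = 0 :=
    Measure.addHaar_submodule volume N hNtop
  have hset : {z : Cvec d | ‖z‖ < 1 ∧ (0:ℝ) * ‖z‖ ^ 2 < ‖(inner ℂ e z : ℂ)‖ ^ 2}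
      = Metric.ball (0 : Cvec d) 1 \ (N : Set (Cvec d)) := by
    ext z
    simp only [Set.mem_setOf_eq, Set.mem_diff, Metric.mem_ball, dist_zero_right, zero_mul]
    constructor
    · rintro ⟨h1, h2⟩
      refine ⟨h1, fun hmem => ?_⟩
      have : (inner ℂ e z : ℂ) = 0 := hmem
      rw [this] at h2; simp at h2
    · rintro ⟨h1, h2⟩
      refine ⟨h1, ?_⟩
      have hne : (inner ℂ e z : ℂ) ≠ 0 := fun h => h2 h
      exact pow_pos (norm_pos_iff.mpr hne) 2
  rw [hset, measure_diff_null hNnull]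

lemma rhs_calc (hd : 2 ≤ d) {t : ℝ} (ht0 : 0 ≤ t) (ht1 : t ≤ 1) :
    ∫⁻ x in Set.Icc (0:ℝ) t, ENNReal.ofReal (((d : ℝ) - 1) * (1 - x) ^ (d - 2))
      = ENNReal.ofReal (1 - (1 - t) ^ (d - 1)) := by
  have hd1R : (1:ℝ) ≤ (d:ℝ) := by exact_mod_cast Nat.one_le_of_lt hd
  set g : ℝ → ℝ := fun x => ((d : ℝ) - 1) * (1 - x) ^ (d - 2) with hg
  have hgcont : Continuous g := by continuity
  have hnn : ∀ x ∈ Set.Icc (0:ℝ) t, 0 ≤ g x := by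
    intro x hx
    have : x ≤ 1 := le_trans hx.2 ht1
    have h1x : 0 ≤ 1 - x := by linarith
    apply mul_nonneg (by linarith) (pow_nonneg h1x _)
  have hint : IntegrableOn g (Set.Icc 0 t) volume := hgcont.integrableOn_Icc
  rw [← ofReal_integral_eq_lintegral_ofReal hint
      ((ae_restrict_iff' measurableSet_Icc).2 (Filter.Eventually.of_forall hnn))]
  congr 1
  rw [MeasureTheory.integral_Icc_eq_integral_Ioc,
    ← intervalIntegral.integral_of_le ht0]
  have hderiv : ∀ x ∈ Set.uIcc (0:ℝ) t,
      HasDerivAt (fun x : ℝ => -((1 - x) ^ (d - 1))) (g x) x := by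
    intro x _
    have h1 : HasDerivAt (fun x : ℝ => 1 - x) (-1) x := by
      simpa using (hasDerivAt_id x).const_sub 1
    have h2 := h1.pow (d - 1)
    have h3 := h2.neg
    have h4 : -(((d - 1 : ℕ) : ℝ) * (1 - x) ^ (d - 1 - 1) * (-1)) = g x := by
      have hd2 : d - 1 - 1 = d - 2 := by omega
      rw [hd2, Nat.cast_sub (by omega : 1 ≤ d), Nat.cast_one, hg]
      ring
    rw [← h4]
    exact h3
  rw [intervalIntegral.integral_eq_sub_of_hasDerivAt hderiv
    (hgcont.intervalIntegrable 0 t)]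
  norm_num
  ring


end Stmt2Aux

open Stmt2Aux

/-- The pushforward of the uniform measure on the unit sphere of `ℂ^d`
under `u ↦ |⟨e,u⟩|²` has density `(d-1)(1-x)^{d-2}·1_{[0,1]}(x)` w.r.t. Lebesgue measure. -/
theorem stmt2 (d : ℕ) (hd : 2 ≤ d)
    (μ : Measure (USphere d)) (hμ : IsUniformOnSphere d μ)
    (e : Cvec d) (he : ‖e‖ = 1) :
    μ.map (fun u : USphere d => ‖(inner ℂ e (u : Cvec d) : ℂ)‖ ^ 2)
      = volume.withDensity (fun x : ℝ =>
          ENNReal.ofReal (Set.indicator (Set.Icc (0 : ℝ) 1)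
            (fun x => ((d : ℝ) - 1) * (1 - x) ^ (d - 2)) x)) := by
  classical
  have hprob : IsProbabilityMeasure μ := hμ.1
  haveI := hprob
  have hd0 : 0 < d := by omega
  set X : USphere d → ℝ := fun u : USphere d => ‖(inner ℂ e (u : Cvec d) : ℂ)‖ ^ 2 with hX
  have hXcont : Continuous X :=
    (continuous_norm.comp (Continuous.inner continuous_const continuous_subtype_val)).pow 2
  have hXmeas : Measurable X := hXcont.measurable
  haveI : IsProbabilityMeasure (μ.map X) := Measure.isProbabilityMeasure_map hXmeas.aemeasurable
  set f : ℝ → ENNReal := fun x : ℝ =>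
    ENNReal.ofReal (Set.indicator (Set.Icc (0 : ℝ) 1)
      (fun x => ((d : ℝ) - 1) * (1 - x) ^ (d - 2)) x) with hf
  have hfeq : ∀ x, f x = Set.indicator (Set.Icc (0:ℝ) 1)
      (fun x => ENNReal.ofReal (((d:ℝ) - 1) * (1 - x) ^ (d - 2))) x := by
    intro x
    by_cases hx : x ∈ Set.Icc (0:ℝ) 1
    · simp [hf, Set.indicator_of_mem hx]
    · simp [hf, Set.indicator_of_notMem hx]
  have hfmeas : Measurable f := by
    rw [hf]
    apply ENNReal.measurable_ofReal.comp
    exact Measurable.indicator (by fun_prop) measurableSet_Icc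
  have hRHS : ∀ t : ℝ, (volume.withDensity f) (Set.Iic t)
      = ∫⁻ x in Set.Icc (0:ℝ) 1 ∩ Set.Iic t,
          ENNReal.ofReal (((d:ℝ) - 1) * (1 - x) ^ (d - 2)) := by
    intro t
    rw [withDensity_apply _ measurableSet_Iic]
    rw [lintegral_congr hfeq]
    rw [lintegral_indicator measurableSet_Icc, Measure.restrict_restrict measurableSet_Icc]
  -- the distribution function of X on [0,1)
  have hball0 : volume (Metric.ball (0 : Cvec d) 1) ≠ 0 := by
    haveI : Nontrivial (Cvec d) := ⟨⟨e, 0, by intro h; rw [h] at he; simp at he⟩⟩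
    exact (Metric.measure_ball_pos volume 0 one_pos).ne'
  have hballtop : volume (Metric.ball (0 : Cvec d) 1) ≠ ⊤ := measure_ball_lt_top.ne
  have keyG : ∀ t : ℝ, 0 ≤ t → t < 1 →
      μ {u : USphere d | t < ‖(inner ℂ e ((u : Cvec d)) : ℂ)‖ ^ 2}
        = ENNReal.ofReal ((1 - t) ^ (d - 1)) := by
    intro t ht0 ht1
    have h1 := fubini_key hd μ hμ e he t
    rw [cone_volume hd e he ht0 ht1, T0_vol e he] at h1
    have cancel : ∀ x : ENNReal, x * volume (Metric.ball (0 : Cvec d) 1)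
        * (volume (Metric.ball (0 : Cvec d) 1))⁻¹ = x := fun x => by
      rw [mul_assoc, ENNReal.mul_inv_cancel hball0 hballtop, mul_one]
    calc μ {u : USphere d | t < ‖(inner ℂ e ((u : Cvec d)) : ℂ)‖ ^ 2}
        = μ {u : USphere d | t < ‖(inner ℂ e ((u : Cvec d)) : ℂ)‖ ^ 2}
          * volume (Metric.ball (0 : Cvec d) 1)
          * (volume (Metric.ball (0 : Cvec d) 1))⁻¹ := (cancel _).symm
      _ = ENNReal.ofReal ((1 - t) ^ (d - 1))
          * volume (Metric.ball (0 : Cvec d) 1)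
          * (volume (Metric.ball (0 : Cvec d) 1))⁻¹ := by rw [h1]
      _ = ENNReal.ofReal ((1 - t) ^ (d - 1)) := cancel _
  have hGmeas : ∀ t : ℝ,
      MeasurableSet {u : USphere d | t < ‖(inner ℂ e ((u : Cvec d)) : ℂ)‖ ^ 2} :=
    fun t => measurableSet_lt measurable_const hXmeas
  refine Measure.ext_of_Iic (μ.map X) _ (fun t => ?_)
  rw [Measure.map_apply hXmeas measurableSet_Iic, hRHS t]
  rcases lt_or_ge t 0 with ht | ht0
  · have h1 : X ⁻¹' Set.Iic t = ∅ := by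
      ext u
      simp only [Set.mem_preimage, Set.mem_Iic, Set.mem_empty_iff_false, iff_false, not_le]
      exact lt_of_lt_of_le ht (by positivity)
    have h2 : Set.Icc (0:ℝ) 1 ∩ Set.Iic t = ∅ := by
      ext x
      simp only [Set.mem_inter_iff, Set.mem_Icc, Set.mem_Iic, Set.mem_empty_iff_false, iff_false,
        not_and]
      rintro ⟨hx0, -⟩
      intro hxt; linarith
    rw [h1, h2]
    simp
  · rcases lt_or_ge t 1 with ht1 | ht1
    · have hpre : X ⁻¹' Set.Iic t
          = {u : USphere d | t < ‖(inner ℂ e ((u : Cvec d)) : ℂ)‖ ^ 2}ᶜ := by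
        ext u
        simp only [Set.mem_preimage, Set.mem_Iic, Set.mem_compl_iff, Set.mem_setOf_eq, not_lt, hX]
      rw [hpre, measure_compl (hGmeas t) (measure_ne_top μ _), measure_univ,
        keyG t ht0 ht1]
      have hinter : Set.Icc (0:ℝ) 1 ∩ Set.Iic t = Set.Icc 0 t := by
        ext x
        simp only [Set.mem_inter_iff, Set.mem_Icc, Set.mem_Iic]
        constructor
        · rintro ⟨⟨h1, h2⟩, h3⟩; exact ⟨h1, h3⟩
        · rintro ⟨h1, h2⟩; exact ⟨⟨h1, le_trans h2 ht1.le⟩, h2⟩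
      rw [hinter, rhs_calc hd ht0 ht1.le]
      rw [ENNReal.ofReal_sub _ (pow_nonneg (by linarith) _), ENNReal.ofReal_one]
    · have hpre : X ⁻¹' Set.Iic t = Set.univ := by
        ext u
        simp only [Set.mem_preimage, Set.mem_Iic, Set.mem_univ, iff_true]
        have hu : ‖(u : Cvec d)‖ = 1 := mem_sphere_zero_iff_norm.mp u.2
        have hCS : ‖(inner ℂ e ((u : Cvec d)) : ℂ)‖ ≤ 1 := by
          have := norm_inner_le_norm (𝕜 := ℂ) e ((u : Cvec d))
          rwa [he, hu, one_mul] at this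
        have : X u ≤ 1 := pow_le_one₀ (norm_nonneg _) hCS
        linarith
      rw [hpre, measure_univ]
      have hinter : Set.Icc (0:ℝ) 1 ∩ Set.Iic t = Set.Icc 0 1 := by
        ext x
        simp only [Set.mem_inter_iff, Set.mem_Icc, Set.mem_Iic]
        constructor
        · rintro ⟨⟨h1, h2⟩, -⟩; exact ⟨h1, h2⟩
        · rintro ⟨h1, h2⟩; exact ⟨⟨h1, h2⟩, le_trans h2 ht1⟩
      rw [hinter, rhs_calc hd zero_le_one le_rfl]
      rw [sub_self, zero_pow (by omega : d - 1 ≠ 0)]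
      simp


end
end

section
/- Let d ≥ 1, k ≥ 1, let φ, ψ ∈ ℂ^d be unit vectors, let f = |⟨φ,ψ⟩|², and let C = C(d+k-1, k). Then C² · ∬ |⟨u,v⟩|² · |⟨φ,u⟩|^{2k} · |⟨ψ,v⟩|^{2k} dμ_d(u) dμ_d(v) = (d+2k)/(d+k)² + (k²/(d+k)²)·f. In other words, the estimator w = ((d+k)²·|⟨u,v⟩|² − (d+2k))/k², where u and v are independently drawn from the measures with densities C·|⟨φ,u⟩|^{2k} and C·|⟨ψ,v⟩|^{2k} with respect to μ_d, is an unbiased estimator of f. -/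
open MeasureTheory

noncomputable section

section aux
open Complex Finset
variable {d : ℕ}

lemma inner_self_one {a : Cvec d} (ha : ‖a‖ = 1) : (inner ℂ a a : ℂ) = 1 := by
  rw [inner_self_eq_norm_sq_to_K, ha]; norm_num

/-- linear map u ↦ u + (z-1)⟨a,u⟩a -/
def phaseL (a : Cvec d) (z : ℂ) : Cvec d →ₗ[ℂ] Cvec d where
  toFun u := u + (z - 1) • ((inner ℂ a u : ℂ) • a)
  map_add' u v := by simp [inner_add_right, add_smul]; module
  map_smul' c u := by simp [inner_smul_right, smul_smul]; module

lemma phaseL_apply (a : Cvec d) (z : ℂ) (u : Cvec d) :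
    phaseL a z u = u + (z - 1) • ((inner ℂ a u : ℂ) • a) := rfl

lemma inner_phaseL (a : Cvec d) (ha : ‖a‖ = 1) (z : ℂ) (u : Cvec d) :
    (inner ℂ a (phaseL a z u) : ℂ) = z * inner ℂ a u := by
  simp [phaseL_apply, inner_add_right, inner_smul_right, inner_self_one ha, ha]
  ring

lemma inner_phaseL_orth (a b : Cvec d) (hba : (inner ℂ b a : ℂ) = 0) (z : ℂ) (u : Cvec d) :
    (inner ℂ b (phaseL a z u) : ℂ) = inner ℂ b u := by
  simp [phaseL_apply, inner_add_right, inner_smul_right, hba]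

lemma phaseL_comp (a : Cvec d) (ha : ‖a‖ = 1) (z w : ℂ) (u : Cvec d) :
    phaseL a z (phaseL a w u) = phaseL a (z * w) u := by
  simp [phaseL_apply, inner_add_right, inner_smul_right, inner_self_one ha, ha, smul_smul]
  module

/-- unitary multiplying the `a`-component by a phase `z`. -/
def phaseU (a : Cvec d) (ha : ‖a‖ = 1) (z : ℂ) (hz : ‖z‖ = 1) : Cvec d ≃ₗᵢ[ℂ] Cvec d := by
  have hz0 : z ≠ 0 := by intro h; simp [h] at hz
  have hzz : (starRingEnd ℂ) z * z = 1 := by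
    rw [mul_comm, Complex.mul_conj]
    norm_cast
    rw [Complex.normSq_eq_norm_sq, hz]; norm_num
  refine LinearIsometryEquiv.mk (LinearEquiv.mk (phaseL a z) (phaseL a z⁻¹) ?_ ?_) ?_
  · intro u
    show phaseL a z⁻¹ (phaseL a z u) = u
    rw [phaseL_comp a ha, inv_mul_cancel₀ hz0]
    simp [phaseL_apply]
  · intro u
    show phaseL a z (phaseL a z⁻¹ u) = u
    rw [phaseL_comp a ha, mul_inv_cancel₀ hz0]
    simp [phaseL_apply]
  · intro u
    show ‖phaseL a z u‖ = ‖u‖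
    have key : (inner ℂ (phaseL a z u) (phaseL a z u) : ℂ) = inner ℂ u u := by
      rw [phaseL_apply]
      rw [inner_add_add_self]
      simp only [inner_smul_left, inner_smul_right, inner_self_one ha, mul_one,
        ← inner_conj_symm u a]
      simp only [map_sub, map_add, map_neg, map_one]
      ring_nf
      linear_combination (((inner ℂ a u : ℂ) * (starRingEnd ℂ) (inner ℂ a u))) * hzz
    rw [norm_eq_sqrt_re_inner (𝕜 := ℂ), norm_eq_sqrt_re_inner (𝕜 := ℂ), key]


lemma continuous_sphereRot (e : Cvec d ≃ₗᵢ[ℂ] Cvec d) : Continuous (sphereRot d e) :=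
  Continuous.subtype_mk (e.continuous.comp continuous_subtype_val) _

lemma integrable_cont {E : Type*} [NormedAddCommGroup E] {μ : Measure (USphere d)}
    [IsFiniteMeasure μ] {g : USphere d → E} (hg : Continuous g) : Integrable g μ :=
  hg.integrable_of_hasCompactSupport (HasCompactSupport.of_compactSpace g)

lemma integral_rot {μ : Measure (USphere d)} (hμ : IsUniformOnSphere d μ)
    (e : Cvec d ≃ₗᵢ[ℂ] Cvec d) {E : Type*} [NormedAddCommGroup E] [NormedSpace ℝ E]
    {g : USphere d → E} (hg : Continuous g) :
    ∫ x, g (sphereRot d e x) ∂μ = ∫ x, g x ∂μ := by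
  conv_rhs => rw [← hμ.2 e]
  rw [integral_map (continuous_sphereRot e).aemeasurable]
  rw [hμ.2 e]
  exact hg.aestronglyMeasurable

lemma exists_unitary_map (x y : Cvec d) (hx : ‖x‖ = 1) (hy : ‖y‖ = 1) :
    ∃ e : Cvec d ≃ₗᵢ[ℂ] Cvec d, e x = y := by
  have hd : 0 < d := by
    rcases Nat.eq_zero_or_pos d with h | h
    · subst h
      have : x = 0 := Subsingleton.elim x 0
      simp [this] at hx
    · exact h
  let i0 : Fin d := ⟨0, hd⟩
  have hcard : Module.finrank ℂ (Cvec d) = Fintype.card (Fin d) := by simp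
  have hox : Orthonormal ℂ (Set.restrict {i0} (fun _ => x)) := by
    constructor
    · rintro ⟨i, hi⟩; exact hx
    · rintro ⟨i, hi⟩ ⟨j, hj⟩ hij
      exact absurd (Subtype.ext ((Set.mem_singleton_iff.mp hi).trans
        (Set.mem_singleton_iff.mp hj).symm)) hij
  have hoy : Orthonormal ℂ (Set.restrict {i0} (fun _ => y)) := by
    constructor
    · rintro ⟨i, hi⟩; exact hy
    · rintro ⟨i, hi⟩ ⟨j, hj⟩ hij
      exact absurd (Subtype.ext ((Set.mem_singleton_iff.mp hi).trans
        (Set.mem_singleton_iff.mp hj).symm)) hij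
  obtain ⟨bx, hbx⟩ := hox.exists_orthonormalBasis_extension_of_card_eq hcard
  obtain ⟨by', hby⟩ := hoy.exists_orthonormalBasis_extension_of_card_eq hcard
  refine ⟨bx.repr.trans by'.repr.symm, ?_⟩
  have h0 : i0 ∈ ({i0} : Set (Fin d)) := rfl
  have : bx i0 = x := hbx i0 h0
  have h2 : by' i0 = y := hby i0 h0
  rw [LinearIsometryEquiv.trans_apply, ← this, bx.repr_self]
  rw [← h2, ← by'.repr_self i0]
  exact by'.repr.symm_apply_apply _


def zc (a : Cvec d) (u : USphere d) : ℂ := inner ℂ a (u : Cvec d)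

lemma continuous_zc (a : Cvec d) : Continuous (zc a) :=
  (continuous_const.inner continuous_subtype_val :
    Continuous fun u : USphere d => (inner ℂ a (u:Cvec d) : ℂ))

lemma phaseU_apply (a : Cvec d) (ha : ‖a‖ = 1) (z : ℂ) (hz : ‖z‖ = 1) (u : Cvec d) :
    phaseU a ha z hz u = phaseL a z u := rfl

lemma inner_phaseU (a : Cvec d) (ha : ‖a‖ = 1) (z : ℂ) (hz : ‖z‖ = 1) (u : Cvec d) :
    (inner ℂ a (phaseU a ha z hz u) : ℂ) = z * inner ℂ a u := by
  rw [phaseU_apply]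
  exact inner_phaseL a ha z u

lemma inner_phaseU_orth (a : Cvec d) (ha : ‖a‖ = 1) {b : Cvec d} (hba : (inner ℂ b a : ℂ) = 0)
    (z : ℂ) (hz : ‖z‖ = 1) (u : Cvec d) :
    (inner ℂ b (phaseU a ha z hz u) : ℂ) = inner ℂ b u := by
  rw [phaseU_apply]
  exact inner_phaseL_orth a b hba z u

lemma integral_rot' {μ : Measure (USphere d)} (hμ : IsUniformOnSphere d μ)
    (e : Cvec d ≃ₗᵢ[ℂ] Cvec d) {E : Type*} [NormedAddCommGroup E] [NormedSpace ℝ E]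
    (g : USphere d → E) (hg : Continuous g) :
    ∫ x, g (sphereRot d e x) ∂μ = ∫ x, g x ∂μ := by
  conv_rhs => rw [← hμ.2 e]
  rw [integral_map (continuous_sphereRot e).aemeasurable]
  rw [hμ.2 e]
  exact hg.aestronglyMeasurable

lemma phase_kill {μ : Measure (USphere d)} (hμ : IsUniformOnSphere d μ)
    {a b : Cvec d} (ha : ‖a‖ = 1) (hba : (inner ℂ b a : ℂ) = 0)
    {p q : ℕ} (r s : ℕ) (hpq : p ≠ q) :
    ∫ u, (zc a u) ^ p * (starRingEnd ℂ) (zc a u) ^ q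
        * (zc b u) ^ r * (starRingEnd ℂ) (zc b u) ^ s ∂μ = 0 := by
  set θ : ℝ := 2 * Real.pi / (p + q + 1) with hθ
  set z : ℂ := Complex.exp (θ * Complex.I) with hzdef
  have hz : ‖z‖ = 1 := by
    rw [hzdef]; exact Complex.norm_exp_ofReal_mul_I θ
  set c : ℂ := z ^ p * (starRingEnd ℂ) z ^ q with hc
  have hcexp : c = Complex.exp ((((p:ℝ) - q) * θ) * Complex.I) := by
    rw [hc, hzdef, ← Complex.exp_nat_mul, ← Complex.exp_conj, ← Complex.exp_nat_mul,
      ← Complex.exp_add]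
    congr 1
    have : (starRingEnd ℂ) ((θ:ℂ) * Complex.I) = -((θ:ℂ) * Complex.I) := by
      simp [Complex.conj_ofReal]
    rw [this]
    push_cast
    ring
  have hc1 : c ≠ 1 := by
    rw [hcexp]
    intro h
    rw [Complex.exp_eq_one_iff] at h
    obtain ⟨n, hn⟩ := h
    have hπ : (0:ℝ) < Real.pi := Real.pi_pos
    have h' : ((((p:ℝ) - q) * θ : ℝ) : ℂ) * Complex.I = (((n : ℝ) * (2*Real.pi) : ℝ) : ℂ) * Complex.I := by
      push_cast at hn ⊢
      linear_combination hn
    have hre : ((p:ℝ) - q) * θ = (n : ℝ) * (2*Real.pi) := by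
      have := mul_right_cancel₀ Complex.I_ne_zero h'
      exact_mod_cast this
    rw [hθ] at hre
    have hden : (0:ℝ) < ((p:ℝ) + q + 1) := by positivity
    have hint : ((p:ℝ) - q) = (n : ℝ) * ((p:ℝ) + q + 1) := by
      field_simp at hre
      nlinarith [hre, hπ]
    have hintz : (p:ℤ) - q = n * ((p:ℤ) + q + 1) := by exact_mod_cast hint
    have hpqz : (p:ℤ) ≠ q := by exact_mod_cast fun h => hpq (by exact_mod_cast h)
    rcases lt_trichotomy n 0 with h | h | h
    · nlinarith [hintz, Int.ofNat_nonneg p, Int.ofNat_nonneg q]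
    · rw [h] at hintz; simp at hintz; omega
    · nlinarith [hintz, Int.ofNat_nonneg p, Int.ofNat_nonneg q]
  set g : USphere d → ℂ := fun u => (zc a u) ^ p * (starRingEnd ℂ) (zc a u) ^ q
        * (zc b u) ^ r * (starRingEnd ℂ) (zc b u) ^ s with hg
  have hgc : Continuous g := by
    apply Continuous.mul
    apply Continuous.mul
    apply Continuous.mul
    · exact (continuous_zc a).pow p
    · exact (Continuous.star (continuous_zc a)).pow q
    · exact (continuous_zc b).pow r
    · exact (Continuous.star (continuous_zc b)).pow s
  have key : ∀ u, g (sphereRot d (phaseU a ha z hz) u) = c * g u := by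
    intro u
    have h1 : zc a (sphereRot d (phaseU a ha z hz) u) = z * zc a u :=
      inner_phaseU a ha z hz (u : Cvec d)
    have h2 : zc b (sphereRot d (phaseU a ha z hz) u) = zc b u :=
      inner_phaseU_orth a ha hba z hz (u : Cvec d)
    rw [hg]
    simp only [h1, h2, map_mul, mul_pow, hc]
    ring
  have hI : ∫ u, g u ∂μ = c * ∫ u, g u ∂μ := by
    conv_lhs => rw [← integral_rot' hμ (phaseU a ha z hz) g hgc]
    simp only [key]
    rw [MeasureTheory.integral_const_mul]
  have : (c - 1) * ∫ u, g u ∂μ = 0 := by linear_combination -hI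
  rcases mul_eq_zero.mp this with h | h
  · exact absurd (sub_eq_zero.mp h) hc1
  · exact h

/-- real mixed moment -/
def mom2 {d : ℕ} (μ : Measure (USphere d)) (a b : Cvec d) (p q : ℕ) : ℝ :=
  ∫ u, ‖zc a u‖ ^ (2*p) * ‖zc b u‖ ^ (2*q) ∂μ

def mom {d : ℕ} (μ : Measure (USphere d)) (a : Cvec d) (p : ℕ) : ℝ :=
  ∫ u, ‖zc a u‖ ^ (2*p) ∂μ

lemma zc_mul_conj (a : Cvec d) (u : USphere d) :
    zc a u * (starRingEnd ℂ) (zc a u) = ((‖zc a u‖ ^ 2 : ℝ) : ℂ) := by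
  rw [Complex.mul_conj]
  congr 1
  rw [Complex.normSq_eq_norm_sq]

/-- the complex-integral form of `mom2` -/
lemma mom2_complex {μ : Measure (USphere d)} [IsFiniteMeasure μ] (a b : Cvec d) (p q : ℕ) :
    ∫ u, (zc a u) ^ p * (starRingEnd ℂ) (zc a u) ^ p
        * (zc b u) ^ q * (starRingEnd ℂ) (zc b u) ^ q ∂μ = ((mom2 μ a b p q : ℝ) : ℂ) := by
  rw [mom2]
  have step : ∫ u, (zc a u) ^ p * (starRingEnd ℂ) (zc a u) ^ p
        * (zc b u) ^ q * (starRingEnd ℂ) (zc b u) ^ q ∂μ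
      = ∫ u, (((‖zc a u‖ ^ (2*p) * ‖zc b u‖ ^ (2*q) : ℝ)) : ℂ) ∂μ := by
    congr 1
    funext u
    rw [show (((‖zc a u‖ ^ (2*p) * ‖zc b u‖ ^ (2*q) : ℝ)) : ℂ)
        = (((‖zc a u‖^2 :ℝ)):ℂ) ^ p * (((‖zc b u‖^2:ℝ)):ℂ) ^ q by push_cast; ring]
    rw [← zc_mul_conj, ← zc_mul_conj]
    ring
  rw [step]
  exact integral_ofReal

lemma mom_complex {μ : Measure (USphere d)} [IsFiniteMeasure μ] (a : Cvec d) (p : ℕ) :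
    ∫ u, (zc a u) ^ p * (starRingEnd ℂ) (zc a u) ^ p ∂μ = ((mom μ a p : ℝ) : ℂ) := by
  rw [mom]
  have step : ∫ u, (zc a u) ^ p * (starRingEnd ℂ) (zc a u) ^ p ∂μ
      = ∫ u, (((‖zc a u‖ ^ (2*p) : ℝ)) : ℂ) ∂μ := by
    congr 1
    funext u
    rw [show (((‖zc a u‖ ^ (2*p) : ℝ)) : ℂ) = (((‖zc a u‖^2 :ℝ)):ℂ) ^ p by push_cast; ring]
    rw [← zc_mul_conj]
    ring
  rw [step]
  exact integral_ofReal

/-- moments only depend on the direction through nothing: all unit vectors equal -/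
lemma mom_indep {μ : Measure (USphere d)} (hμ : IsUniformOnSphere d μ)
    {x y : Cvec d} (hx : ‖x‖ = 1) (hy : ‖y‖ = 1) (m : ℕ) :
    mom μ x m = mom μ y m := by
  obtain ⟨e, he⟩ := exists_unitary_map y x hy hx
  have key : ∀ u : USphere d, ‖zc x (sphereRot d e u)‖ ^ (2*m) = ‖zc y u‖ ^ (2*m) := by
    intro u
    have : zc x (sphereRot d e u) = zc y u := by
      show (inner ℂ x (e (u : Cvec d)) : ℂ) = inner ℂ y (u : Cvec d)
      rw [← he]
      exact e.inner_map_map y (u : Cvec d)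
    rw [this]
  rw [mom, mom, ← integral_rot' hμ e (fun u => ‖zc x u‖ ^ (2*m)) ((continuous_zc x).norm.pow (2*m))]
  congr 1
  funext u
  rw [key]

lemma expand_sum {μ : Measure (USphere d)} (hμ : IsUniformOnSphere d μ) {a b : Cvec d}
    (ha : ‖a‖ = 1) (hab : (inner ℂ a b : ℂ) = 0) (n : ℕ) (t : ℝ) :
    ∫ u, ‖zc ((t:ℂ) • a + b) u‖ ^ (2*n) ∂μ
    = ∑ j ∈ Finset.range (n+1), (n.choose j : ℝ)^2 * t^(2*j) * mom2 μ a b j (n-j) := by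
  haveI := hμ.1
  have hba : (inner ℂ b a : ℂ) = 0 := by rw [← inner_conj_symm, hab, map_zero]
  set c : Cvec d := (t:ℂ) • a + b with hcdef
  set F : ℕ → ℕ → USphere d → ℂ := fun p q u =>
    zc a u ^ p * (starRingEnd ℂ) (zc a u) ^ q
      * zc b u ^ (n-p) * (starRingEnd ℂ) (zc b u) ^ (n-q) with hF
  have hFc : ∀ p q, Continuous (F p q) := by
    intro p q
    exact ((((continuous_zc a).pow p).mul ((continuous_zc a).star.pow q)).mul
      ((continuous_zc b).pow (n-p))).mul ((continuous_zc b).star.pow (n-q))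
  have claim1 : ∀ u : USphere d, ((‖zc c u‖ ^ (2*n) : ℝ) : ℂ)
      = ∑ p ∈ Finset.range (n+1), ∑ q ∈ Finset.range (n+1),
          ((t:ℂ)^(p+q) * (n.choose p : ℂ) * (n.choose q : ℂ)) * F p q u := by
    intro u
    have hw : zc c u = (t:ℂ) * zc a u + zc b u := by
      show (inner ℂ ((t:ℂ) • a + b) (u:Cvec d) : ℂ) = _
      rw [inner_add_left, inner_smul_left]
      simp [Complex.conj_ofReal]
      rfl
    have hcast : ((‖zc c u‖ ^ (2*n) : ℝ) : ℂ) = (zc c u * (starRingEnd ℂ) (zc c u)) ^ n := by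
      rw [zc_mul_conj]
      push_cast
      ring
    rw [hcast, hw, mul_pow, map_add, map_mul, Complex.conj_ofReal, add_pow, add_pow,
      Finset.sum_mul_sum]
    apply Finset.sum_congr rfl
    intro p hp
    apply Finset.sum_congr rfl
    intro q hq
    rw [hF]
    simp only [mul_pow]
    ring
  have key : ((∫ u, ‖zc c u‖ ^ (2*n) ∂μ : ℝ) : ℂ)
      = ((∑ j ∈ Finset.range (n+1), (n.choose j : ℝ)^2 * t^(2*j) * mom2 μ a b j (n-j) : ℝ) : ℂ) :=
    calc ((∫ u, ‖zc c u‖ ^ (2*n) ∂μ : ℝ) : ℂ)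
        = ∫ u, ((‖zc c u‖ ^ (2*n) : ℝ) : ℂ) ∂μ := integral_ofReal.symm
      _ = ∫ u, ∑ p ∈ Finset.range (n+1), ∑ q ∈ Finset.range (n+1),
            ((t:ℂ)^(p+q) * (n.choose p : ℂ) * (n.choose q : ℂ)) * F p q u ∂μ := by
          simp only [claim1]
      _ = ∑ p ∈ Finset.range (n+1), ∑ q ∈ Finset.range (n+1),
            ((t:ℂ)^(p+q) * (n.choose p : ℂ) * (n.choose q : ℂ)) * ∫ u, F p q u ∂μ := by
          rw [integral_finset_sum]
          · apply Finset.sum_congr rfl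
            intro p _
            rw [integral_finset_sum]
            · apply Finset.sum_congr rfl
              intro q _
              exact MeasureTheory.integral_const_mul _ _
            · intro q _
              exact integrable_cont (continuous_const.mul (hFc p q))
          · intro p _
            exact integrable_finset_sum _ (fun q _ => integrable_cont (continuous_const.mul (hFc p q)))
      _ = ∑ p ∈ Finset.range (n+1),
            ((t:ℂ)^(p+p) * (n.choose p : ℂ) * (n.choose p : ℂ)) * ((mom2 μ a b p (n-p) : ℝ) : ℂ) := by
          apply Finset.sum_congr rfl
          intro p hp
          rw [Finset.sum_eq_single_of_mem p hp]
          · rw [hF]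
            rw [mom2_complex]
          · intro q _ hqp
            rw [hF]
            rw [phase_kill hμ ha hba (n-p) (n-q) (Ne.symm hqp), mul_zero]
      _ = ((∑ j ∈ Finset.range (n+1), (n.choose j : ℝ)^2 * t^(2*j) * mom2 μ a b j (n-j) : ℝ) : ℂ) := by
          push_cast
          apply Finset.sum_congr rfl
          intro p _
          ring
  exact_mod_cast key


lemma lhs_eval {μ : Measure (USphere d)} (hμ : IsUniformOnSphere d μ) {a b : Cvec d}
    (ha : ‖a‖ = 1) (hb : ‖b‖ = 1) (hab : (inner ℂ a b : ℂ) = 0) (n : ℕ) (t : ℝ) :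
    ∫ u, ‖zc ((t:ℂ) • a + b) u‖ ^ (2*n) ∂μ = (t^2+1)^n * mom μ a n := by
  haveI := hμ.1
  set c : Cvec d := (t:ℂ) • a + b with hcdef
  have hcn : ‖c‖^2 = t^2 + 1 := by
    rw [hcdef, norm_add_sq (𝕜 := ℂ)]
    rw [inner_smul_left, hab, mul_zero]
    simp [norm_smul, ha, hb, sq_abs, mul_pow]
  have hs : (0:ℝ) < t^2 + 1 := by positivity
  set s : ℝ := Real.sqrt (t^2+1) with hsdef
  have hs0 : 0 < s := Real.sqrt_pos.mpr hs
  have hssq : s^2 = t^2+1 := Real.sq_sqrt (le_of_lt hs)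
  have hcnorm : ‖c‖ = s := by
    have h1 : ‖c‖^2 = s^2 := by rw [hcn, hssq]
    nlinarith [norm_nonneg c, hs0]
  set chat : Cvec d := ((s⁻¹ : ℝ) : ℂ) • c with hchat
  have hchatnorm : ‖chat‖ = 1 := by
    have hn : ‖((s⁻¹ : ℝ) : ℂ)‖ = s⁻¹ := by
      rw [Complex.norm_real, Real.norm_eq_abs, abs_of_pos (inv_pos.mpr hs0)]
    rw [hchat, norm_smul, hcnorm, hn, inv_mul_cancel₀ (ne_of_gt hs0)]
  have hzc : ∀ u, zc c u = (s:ℂ) * zc chat u := by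
    intro u
    show (inner ℂ c (u : Cvec d) : ℂ) = (s:ℂ) * inner ℂ chat (u : Cvec d)
    rw [hchat, inner_smul_left]
    rw [Complex.conj_ofReal, ← mul_assoc, ← Complex.ofReal_mul,
      mul_inv_cancel₀ (ne_of_gt hs0)]
    simp
  have : ∫ u, ‖zc c u‖ ^ (2*n) ∂μ = ∫ u, s^(2*n) * ‖zc chat u‖ ^ (2*n) ∂μ := by
    congr 1
    funext u
    rw [hzc u, norm_mul, mul_pow]
    norm_num [abs_of_pos hs0]
  rw [this, MeasureTheory.integral_const_mul]
  rw [show s^(2*n) = (t^2+1)^n by rw [pow_mul, hssq]]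
  rw [show (∫ u, ‖zc chat u‖ ^ (2*n) ∂μ) = mom μ chat n from rfl,
    mom_indep hμ hchatnorm ha n]

lemma choose_mul_mom2 {μ : Measure (USphere d)} (hμ : IsUniformOnSphere d μ) {a b : Cvec d}
    (ha : ‖a‖ = 1) (hb : ‖b‖ = 1) (hab : (inner ℂ a b : ℂ) = 0) {j n : ℕ} (hj : j ≤ n) :
    (n.choose j : ℝ) * mom2 μ a b j (n-j) = mom μ a n := by
  haveI := hμ.1
  set P : Polynomial ℝ := ∑ p ∈ Finset.range (n+1),
    Polynomial.C ((n.choose p : ℝ)^2 * mom2 μ a b p (n-p)) * Polynomial.X^p with hP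
  set Q : Polynomial ℝ := Polynomial.C (mom μ a n) * (Polynomial.X + 1)^n with hQ
  have heval : ∀ x : ℝ, 0 ≤ x → P.eval x = Q.eval x := by
    intro x hx
    set t : ℝ := Real.sqrt x with ht
    have htx : t^2 = x := Real.sq_sqrt hx
    have h1 := expand_sum hμ ha hab n t
    have h2 := lhs_eval hμ ha hb hab n t
    rw [h2] at h1
    rw [hP, hQ]
    simp only [Polynomial.eval_finset_sum, Polynomial.eval_mul, Polynomial.eval_C,
      Polynomial.eval_pow, Polynomial.eval_X, Polynomial.eval_add, Polynomial.eval_one]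
    rw [← htx]
    have h3 : ∑ x ∈ Finset.range (n+1), (n.choose x:ℝ)^2 * mom2 μ a b x (n-x) * (t^2)^x
        = ∑ j ∈ Finset.range (n+1), (n.choose j:ℝ)^2 * t^(2*j) * mom2 μ a b j (n-j) := by
      apply Finset.sum_congr rfl
      intro p _
      rw [pow_mul]
      ring
    rw [h3, ← h1]
    ring
  have hPQ : P = Q := by
    apply Polynomial.eq_of_infinite_eval_eq
    apply Set.Infinite.mono (s := Set.Ici (0:ℝ))
    · intro x hx
      exact heval x hx
    · exact Set.Ici_infinite 0
  have hcoeff := congrArg (Polynomial.coeff · j) hPQ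
  rw [hP, hQ] at hcoeff
  rw [Polynomial.finset_sum_coeff] at hcoeff
  simp only [Polynomial.coeff_C_mul, Polynomial.coeff_X_pow] at hcoeff
  rw [Finset.sum_eq_single_of_mem j (Finset.mem_range.mpr (Nat.lt_succ_of_le hj))] at hcoeff
  · rw [Polynomial.coeff_X_add_one_pow] at hcoeff
    norm_num at hcoeff
    have hcj : (n.choose j : ℝ) ≠ 0 := by
      exact_mod_cast Nat.choose_pos hj |>.ne'
    have : (n.choose j : ℝ) * ((n.choose j : ℝ) * mom2 μ a b j (n-j))
        = (n.choose j : ℝ) * mom μ a n := by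
      rw [← mul_assoc, ← sq]
      rw [hcoeff]
      ring
    exact mul_left_cancel₀ hcj this
  · intro p _ hpj
    simp [Ne.symm hpj]


lemma exists_onb_through (hd : 1 ≤ d) (a : Cvec d) (ha : ‖a‖ = 1) :
    ∃ (B : OrthonormalBasis (Fin d) ℂ (Cvec d)) (i0 : Fin d), B i0 = a := by
  let i0 : Fin d := ⟨0, hd⟩
  have hcard : Module.finrank ℂ (Cvec d) = Fintype.card (Fin d) := by simp
  have hox : Orthonormal ℂ (Set.restrict {i0} (fun _ => a)) := by
    constructor
    · rintro ⟨i, hi⟩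
      exact ha
    · rintro ⟨i, hi⟩ ⟨j, hj⟩ hij
      exact absurd (Subtype.ext ((Set.mem_singleton_iff.mp hi).trans
        (Set.mem_singleton_iff.mp hj).symm)) hij
  obtain ⟨B, hB⟩ := hox.exists_orthonormalBasis_extension_of_card_eq hcard
  exact ⟨B, i0, hB i0 rfl⟩

lemma parseval (B : OrthonormalBasis (Fin d) ℂ (Cvec d)) (u : USphere d) :
    ∑ i, ‖zc (B i) u‖^2 = 1 := by
  have h := B.sum_inner_mul_inner (u : Cvec d) (u : Cvec d)
  have hu : (inner ℂ (u : Cvec d) (u : Cvec d) : ℂ) = 1 := by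
    rw [inner_self_eq_norm_sq_to_K, mem_sphere_zero_iff_norm.mp u.2]
    norm_num
  rw [hu] at h
  have h2 : ∀ i, (inner ℂ (u:Cvec d) (B i) : ℂ) * inner ℂ (B i) (u:Cvec d)
      = ((‖zc (B i) u‖^2 : ℝ) : ℂ) := by
    intro i
    rw [show (inner ℂ (u:Cvec d) (B i) : ℂ) = (starRingEnd ℂ) (zc (B i) u) from
      (inner_conj_symm _ _).symm, mul_comm]
    exact zc_mul_conj (B i) u
  simp only [h2] at h
  exact_mod_cast h

lemma mom_rec {μ : Measure (USphere d)} (hμ : IsUniformOnSphere d μ) (hd : 1 ≤ d)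
    {a : Cvec d} (ha : ‖a‖ = 1) (n : ℕ) :
    ((n:ℝ)+1) * mom μ a n = ((d:ℝ)+n) * mom μ a (n+1) := by
  haveI := hμ.1
  obtain ⟨B, i0, hB⟩ := exists_onb_through hd a ha
  set T : Fin d → ℝ := fun i => ∫ u, ‖zc a u‖^(2*n) * ‖zc (B i) u‖^2 ∂μ with hT
  have h1 : mom μ a n = ∑ i, T i := by
    rw [mom]
    rw [show (∫ u, ‖zc a u‖^(2*n) ∂μ)
        = ∫ u, ∑ i, ‖zc a u‖^(2*n) * ‖zc (B i) u‖^2 ∂μ by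
      congr 1
      funext u
      rw [← Finset.mul_sum, parseval B u, mul_one]]
    rw [integral_finset_sum]
    intro i _
    exact integrable_cont (((continuous_zc a).norm.pow (2*n)).mul
      ((continuous_zc (B i)).norm.pow 2))
  have h2 : T i0 = mom μ a (n+1) := by
    rw [hT, mom]
    simp only [hB]
    congr 1
    funext u
    rw [← pow_add, show 2*n+2 = 2*(n+1) by ring]
  have h3 : ∀ i, i ≠ i0 → ((n:ℝ)+1) * T i = mom μ a (n+1) := by
    intro i hi
    have hBi : ‖B i‖ = 1 := B.orthonormal.1 i
    have habi : (inner ℂ a (B i) : ℂ) = 0 := by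
      rw [← hB]
      exact B.orthonormal.2 (Ne.symm hi)
    have := choose_mul_mom2 hμ ha hBi habi (Nat.le_succ n)
    rw [Nat.succ_sub (le_refl n), Nat.sub_self] at this
    rw [Nat.choose_succ_self_right] at this
    rw [← this, mom2]
    have : T i = ∫ u, ‖zc a u‖ ^ (2*n) * ‖zc (B i) u‖ ^ (2*1) ∂μ := by
      norm_num [hT]
    rw [this]
    push_cast
    ring
  have hsum : ((n:ℝ)+1) * mom μ a n = ∑ i, ((n:ℝ)+1) * T i := by
    rw [h1, Finset.mul_sum]
  rw [hsum, ← Finset.add_sum_erase _ _ (Finset.mem_univ i0)]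
  have hrest : ∑ i ∈ Finset.univ.erase i0, ((n:ℝ)+1) * T i
      = ((d:ℝ) - 1) * mom μ a (n+1) := by
    rw [Finset.sum_congr rfl (fun i hi => h3 i (Finset.ne_of_mem_erase hi))]
    rw [Finset.sum_const, Finset.card_erase_of_mem (Finset.mem_univ i0)]
    simp only [Finset.card_univ, Fintype.card_fin, nsmul_eq_mul]
    congr 1
    rw [Nat.cast_sub hd]
    norm_num
  rw [hrest, h2]
  have hd' : (1:ℝ) ≤ (d:ℝ) := by exact_mod_cast hd
  ring

lemma mom_zero {μ : Measure (USphere d)} (hμ : IsUniformOnSphere d μ) (a : Cvec d) :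
    mom μ a 0 = 1 := by
  haveI := hμ.1
  rw [mom]
  simp

lemma mom_choose {μ : Measure (USphere d)} (hμ : IsUniformOnSphere d μ) (hd : 1 ≤ d)
    {a : Cvec d} (ha : ‖a‖ = 1) (n : ℕ) :
    (((d+n-1).choose n : ℕ) : ℝ) * mom μ a n = 1 := by
  induction n with
  | zero => simp [mom_zero hμ a]
  | succ n ih =>
    have hrec := mom_rec hμ hd ha n
    have hidn : (d+n) * ((d+n-1).choose n) = ((d+n).choose (n+1)) * (n+1) := by
      have := Nat.add_one_mul_choose_eq (d+n-1) n
      rw [show d+n-1+1 = d+n by omega] at this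
      simpa using this
    have hid : ((d:ℝ)+n) * (((d+n-1).choose n : ℕ) : ℝ)
        = (((d+n).choose (n+1) : ℕ) : ℝ) * ((n:ℝ)+1) := by
      exact_mod_cast congrArg (Nat.cast (R := ℝ)) hidn
    rw [show d+(n+1)-1 = d+n by omega]
    have hdn : ((d:ℝ)+n) ≠ 0 := by positivity
    apply mul_left_cancel₀ hdn
    rw [mul_one]
    linear_combination (-(((d+n).choose (n+1) : ℕ) : ℝ)) * hrec
      + (-(mom μ a n)) * hid + ((d:ℝ)+n) * ih


lemma cconj (z : ℂ) : z * (starRingEnd ℂ) z = ((‖z‖^2 : ℝ) : ℂ) := by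
  rw [Complex.mul_conj]
  congr 1
  rw [Complex.normSq_eq_norm_sq]

lemma mom2_zero {μ : Measure (USphere d)} (a c : Cvec d) (p : ℕ) :
    mom2 μ a c p 0 = mom μ a p := by
  rw [mom2, mom]
  congr 1
  funext u
  norm_num

lemma J_eval {μ : Measure (USphere d)} (hμ : IsUniformOnSphere d μ)
    {a b : Cvec d} (ha : ‖a‖ = 1) (hb : ‖b‖ = 1) (k : ℕ) :
    ((k:ℝ)+1) * ∫ u, ‖zc b u‖^2 * ‖zc a u‖^(2*k) ∂μ
      = mom μ a (k+1) * (1 + k * ‖(inner ℂ a b : ℂ)‖^2) := by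
  haveI := hμ.1
  set β : ℂ := (inner ℂ a b : ℂ) with hβdef
  set w : Cvec d := b - β • a with hwdef
  have haw : (inner ℂ a w : ℂ) = 0 := by
    rw [hwdef, inner_sub_right, inner_smul_right, inner_self_one ha]
    rw [← hβdef]
    ring
  have hwb : b = β • a + w := by rw [hwdef]; abel
  by_cases hw : w = 0
  · -- b = β • a
    have hba : b = β • a := by rw [hwb, hw, add_zero]
    have hβ1 : ‖β‖ = 1 := by
      have : ‖b‖ = ‖β‖ * ‖a‖ := by rw [hba, norm_smul]
      rw [hb, ha, mul_one] at this
      exact this.symm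
    have hzb : ∀ u, ‖zc b u‖^2 = ‖zc a u‖^2 := by
      intro u
      have : zc b u = (starRingEnd ℂ) β * zc a u := by
        show (inner ℂ b (u:Cvec d) : ℂ) = _
        rw [hba, inner_smul_left]
        rfl
      rw [this, norm_mul, RCLike.norm_conj, hβ1, one_mul]
    have hI : (∫ u, ‖zc b u‖^2 * ‖zc a u‖^(2*k) ∂μ) = mom μ a (k+1) := by
      rw [mom]
      congr 1
      funext u
      rw [hzb u, ← pow_add, show 2 + 2*k = 2*(k+1) by ring]
    rw [hI, hβ1]
    push_cast
    ring
  · -- general case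
    set r : ℝ := ‖w‖ with hrdef
    have hr : 0 < r := norm_pos_iff.mpr hw
    set b' : Cvec d := ((r⁻¹ : ℝ) : ℂ) • w with hb'def
    have hb' : ‖b'‖ = 1 := by
      rw [hb'def, norm_smul, Complex.norm_real, Real.norm_eq_abs,
        abs_of_pos (inv_pos.mpr hr), ← hrdef, inv_mul_cancel₀ (ne_of_gt hr)]
    have hab' : (inner ℂ a b' : ℂ) = 0 := by
      rw [hb'def, inner_smul_right, haw, mul_zero]
    have hwr : w = ((r : ℝ) : ℂ) • b' := by
      rw [hb'def, smul_smul, ← Complex.ofReal_mul, mul_inv_cancel₀ (ne_of_gt hr)]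
      simp
    have hr2 : r^2 = 1 - ‖β‖^2 := by
      have h1 : ‖b‖^2 = ‖β • a + w‖^2 := by rw [← hwb]
      rw [norm_add_sq (𝕜 := ℂ), inner_smul_left, haw, mul_zero] at h1
      rw [hb, norm_smul, ha] at h1
      simp at h1
      rw [← hrdef] at h1
      have h1' : 1 = ‖β‖^2 + r^2 := by
        exact h1
      nlinarith [h1']
    have hdecomp : ∀ u : USphere d, zc b u
        = (starRingEnd ℂ) β * zc a u + ((r:ℝ):ℂ) * zc b' u := by
      intro u
      show (inner ℂ b (u:Cvec d) : ℂ) = _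
      rw [hwb, hwr, inner_add_left, inner_smul_left, inner_smul_left, Complex.conj_ofReal]
      rfl
    set G : ℕ → ℕ → ℕ → ℕ → USphere d → ℂ := fun p q m l u =>
      zc a u ^ p * (starRingEnd ℂ) (zc a u) ^ q * zc b' u ^ m * (starRingEnd ℂ) (zc b' u) ^ l
      with hG
    have hGc : ∀ p q m l, Continuous (G p q m l) := by
      intro p q m l
      exact ((((continuous_zc a).pow p).mul ((continuous_zc a).star.pow q)).mul
        ((continuous_zc b').pow m)).mul ((continuous_zc b').star.pow l)
    have claim : ∀ u : USphere d, ((‖zc b u‖^2 * ‖zc a u‖^(2*k) : ℝ) : ℂ)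
        = (β * (starRingEnd ℂ) β) * G (k+1) (k+1) 0 0 u
          + ((starRingEnd ℂ) β * ((r:ℝ):ℂ)) * G (k+1) k 0 1 u
          + (β * ((r:ℝ):ℂ)) * G k (k+1) 1 0 u
          + (((r:ℝ):ℂ) * ((r:ℝ):ℂ)) * G k k 1 1 u := by
      intro u
      have hc : ((‖zc b u‖^2 * ‖zc a u‖^(2*k) : ℝ) : ℂ)
          = (zc b u * (starRingEnd ℂ) (zc b u))
            * (zc a u * (starRingEnd ℂ) (zc a u))^k := by
        rw [cconj, cconj]
        push_cast
        ring
      rw [hc, hdecomp u, map_add, map_mul, map_mul, Complex.conj_conj, Complex.conj_ofReal, hG]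
      simp only []
      ring
    have key : ((∫ u, ‖zc b u‖^2 * ‖zc a u‖^(2*k) ∂μ : ℝ) : ℂ)
        = ((‖β‖^2 : ℝ) : ℂ) * ((mom μ a (k+1) : ℝ) : ℂ)
          + ((r^2 : ℝ) : ℂ) * ((mom2 μ a b' k 1 : ℝ) : ℂ) := by
      have hb'a : (inner ℂ b' a : ℂ) = 0 := by
        rw [← inner_conj_symm, hab', map_zero]
      calc ((∫ u, ‖zc b u‖^2 * ‖zc a u‖^(2*k) ∂μ : ℝ) : ℂ)
          = ∫ u, ((‖zc b u‖^2 * ‖zc a u‖^(2*k) : ℝ) : ℂ) ∂μ := integral_ofReal.symm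
        _ = ∫ u, ((β * (starRingEnd ℂ) β) * G (k+1) (k+1) 0 0 u
              + ((starRingEnd ℂ) β * ((r:ℝ):ℂ)) * G (k+1) k 0 1 u
              + (β * ((r:ℝ):ℂ)) * G k (k+1) 1 0 u
              + (((r:ℝ):ℂ) * ((r:ℝ):ℂ)) * G k k 1 1 u) ∂μ := by
            simp only [claim]
        _ = ((β * (starRingEnd ℂ) β) * ∫ u, G (k+1) (k+1) 0 0 u ∂μ)
              + (((starRingEnd ℂ) β * ((r:ℝ):ℂ)) * ∫ u, G (k+1) k 0 1 u ∂μ)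
              + ((β * ((r:ℝ):ℂ)) * ∫ u, G k (k+1) 1 0 u ∂μ)
              + ((((r:ℝ):ℂ) * ((r:ℝ):ℂ)) * ∫ u, G k k 1 1 u ∂μ) := by
            rw [integral_add, integral_add, integral_add]
            · rw [MeasureTheory.integral_const_mul, MeasureTheory.integral_const_mul,
                MeasureTheory.integral_const_mul, MeasureTheory.integral_const_mul]
            all_goals
              first
              | exact integrable_cont (continuous_const.mul (hGc _ _ _ _))
              | exact Integrable.add (integrable_cont (continuous_const.mul (hGc _ _ _ _)))
                  (integrable_cont (continuous_const.mul (hGc _ _ _ _)))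
              | exact Integrable.add (Integrable.add
                  (integrable_cont (continuous_const.mul (hGc _ _ _ _)))
                  (integrable_cont (continuous_const.mul (hGc _ _ _ _))))
                  (integrable_cont (continuous_const.mul (hGc _ _ _ _)))
        _ = ((‖β‖^2 : ℝ) : ℂ) * ((mom μ a (k+1) : ℝ) : ℂ)
              + ((r^2 : ℝ) : ℂ) * ((mom2 μ a b' k 1 : ℝ) : ℂ) := by
            rw [hG]
            rw [show (∫ u, zc a u ^ (k+1) * (starRingEnd ℂ) (zc a u) ^ (k+1)
                * zc b' u ^ 0 * (starRingEnd ℂ) (zc b' u) ^ 0 ∂μ)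
              = ((mom2 μ a b' (k+1) 0 : ℝ) : ℂ) from mom2_complex a b' (k+1) 0]
            rw [show (∫ u, zc a u ^ (k+1) * (starRingEnd ℂ) (zc a u) ^ k
                * zc b' u ^ 0 * (starRingEnd ℂ) (zc b' u) ^ 1 ∂μ) = 0 from
              phase_kill hμ ha hb'a 0 1 (Nat.succ_ne_self k)]
            rw [show (∫ u, zc a u ^ k * (starRingEnd ℂ) (zc a u) ^ (k+1)
                * zc b' u ^ 1 * (starRingEnd ℂ) (zc b' u) ^ 0 ∂μ) = 0 from
              phase_kill hμ ha hb'a 1 0 (Nat.succ_ne_self k).symm]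
            rw [show (∫ u, zc a u ^ k * (starRingEnd ℂ) (zc a u) ^ k
                * zc b' u ^ 1 * (starRingEnd ℂ) (zc b' u) ^ 1 ∂μ)
              = ((mom2 μ a b' k 1 : ℝ) : ℂ) from mom2_complex a b' k 1]
            rw [mom2_zero, cconj]
            push_cast
            ring
    have keyR : (∫ u, ‖zc b u‖^2 * ‖zc a u‖^(2*k) ∂μ)
        = ‖β‖^2 * mom μ a (k+1) + r^2 * mom2 μ a b' k 1 := by
      exact_mod_cast key
    have hM : ((k:ℝ)+1) * mom2 μ a b' k 1 = mom μ a (k+1) := by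
      have := choose_mul_mom2 hμ ha hb' hab' (Nat.le_succ k)
      rw [Nat.succ_sub (le_refl k), Nat.sub_self, Nat.choose_succ_self_right] at this
      rw [← this]
      push_cast
      ring
    rw [keyR, hr2]
    linear_combination (1 - ‖β‖^2) * hM
  


end aux

/-- Unbiasedness of the multi-copy estimator: with `f = |⟨φ,ψ⟩|²` and
`C = C(d+k-1,k)`,
`C² ∬ |⟨u,v⟩|² |⟨φ,u⟩|^{2k} |⟨ψ,v⟩|^{2k} dμ(u) dμ(v) = (d+2k)/(d+k)² + (k²/(d+k)²)·f`. -/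
theorem stmt3 (d k : ℕ) (hd : 1 ≤ d) (hk : 1 ≤ k)
    (μ : Measure (USphere d)) (hμ : IsUniformOnSphere d μ)
    (φ ψ : Cvec d) (hφ : ‖φ‖ = 1) (hψ : ‖ψ‖ = 1) :
    (Nat.choose (d + k - 1) k : ℝ) ^ 2 *
      ∫ u : USphere d, ∫ v : USphere d,
        ‖(inner ℂ (u : Cvec d) (v : Cvec d) : ℂ)‖ ^ 2 *
          ‖(inner ℂ φ (u : Cvec d) : ℂ)‖ ^ (2 * k) *
          ‖(inner ℂ ψ (v : Cvec d) : ℂ)‖ ^ (2 * k) ∂μ ∂μ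
      = ((d : ℝ) + 2 * k) / ((d : ℝ) + k) ^ 2
        + ((k : ℝ) ^ 2 / ((d : ℝ) + k) ^ 2) * ‖(inner ℂ φ ψ : ℂ)‖ ^ 2 := by
  haveI := hμ.1
  set Ak : ℝ := mom μ φ k with hAk
  set A1 : ℝ := mom μ φ (k+1) with hA1
  set f : ℝ := ‖(inner ℂ φ ψ : ℂ)‖^2 with hf
  have hCA : (((d+k-1).choose k : ℕ) : ℝ) * Ak = 1 := mom_choose hμ hd hφ k
  have hrec : ((k:ℝ)+1) * Ak = ((d:ℝ)+k) * A1 := mom_rec hμ hd hφ k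
  have hk1 : ((k:ℝ)+1) ≠ 0 := by positivity
  have hdk : ((d:ℝ)+k) ≠ 0 := by positivity
  have hAkne : Ak ≠ 0 := by
    intro h
    rw [h, mul_zero] at hCA
    exact one_ne_zero hCA.symm
  -- inner ℂ integral
  have hin : ∀ u : USphere d,
      (∫ v : USphere d, ‖(inner ℂ (u : Cvec d) (v : Cvec d) : ℂ)‖ ^ 2 *
          ‖(inner ℂ φ (u : Cvec d) : ℂ)‖ ^ (2 * k) *
          ‖(inner ℂ ψ (v : Cvec d) : ℂ)‖ ^ (2 * k) ∂μ)
      = (A1 * (1 + (k:ℝ) * ‖zc ψ u‖^2) / ((k:ℝ)+1)) * ‖zc φ u‖^(2*k) := by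
    intro u
    have hu : ‖(u : Cvec d)‖ = 1 := mem_sphere_zero_iff_norm.mp u.2
    have step1 : (∫ v : USphere d, ‖(inner ℂ (u : Cvec d) (v : Cvec d) : ℂ)‖ ^ 2 *
          ‖(inner ℂ φ (u : Cvec d) : ℂ)‖ ^ (2 * k) *
          ‖(inner ℂ ψ (v : Cvec d) : ℂ)‖ ^ (2 * k) ∂μ)
        = ∫ v : USphere d,
            (‖zc (u : Cvec d) v‖^2 * ‖zc ψ v‖^(2*k)) * ‖zc φ u‖^(2*k) ∂μ := by
      congr 1
      funext v
      show ‖zc (u : Cvec d) v‖ ^ 2 * ‖zc φ u‖ ^ (2*k) * ‖zc ψ v‖ ^ (2*k) = _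
      ring
    rw [step1, MeasureTheory.integral_mul_const]
    have hJ := J_eval hμ hψ hu k
    have hmi : mom μ ψ (k+1) = A1 := mom_indep hμ hψ hφ (k+1)
    rw [hmi] at hJ
    congr 1
    rw [eq_div_iff hk1]
    show (∫ v, ‖zc (u : Cvec d) v‖^2 * ‖zc ψ v‖^(2*k) ∂μ) * ((k:ℝ)+1)
      = A1 * (1 + (k:ℝ) * ‖zc ψ u‖^2)
    have hzz : ‖(inner ℂ ψ (u : Cvec d) : ℂ)‖ = ‖zc ψ u‖ := rfl
    rw [hzz] at hJ
    linear_combination hJ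
  have step2 : (∫ u : USphere d, ∫ v : USphere d,
        ‖(inner ℂ (u : Cvec d) (v : Cvec d) : ℂ)‖ ^ 2 *
          ‖(inner ℂ φ (u : Cvec d) : ℂ)‖ ^ (2 * k) *
          ‖(inner ℂ ψ (v : Cvec d) : ℂ)‖ ^ (2 * k) ∂μ ∂μ)
      = (A1/((k:ℝ)+1)) * (Ak + (k:ℝ) * (A1 * (1 + (k:ℝ)*f) / ((k:ℝ)+1))) := by
    rw [show (∫ u : USphere d, ∫ v : USphere d,
        ‖(inner ℂ (u : Cvec d) (v : Cvec d) : ℂ)‖ ^ 2 *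
          ‖(inner ℂ φ (u : Cvec d) : ℂ)‖ ^ (2 * k) *
          ‖(inner ℂ ψ (v : Cvec d) : ℂ)‖ ^ (2 * k) ∂μ ∂μ)
      = ∫ u : USphere d, (A1/((k:ℝ)+1)) * (‖zc φ u‖^(2*k)
          + (k:ℝ) * (‖zc ψ u‖^2 * ‖zc φ u‖^(2*k))) ∂μ from by
        congr 1
        funext u
        rw [hin u]
        ring]
    rw [MeasureTheory.integral_const_mul]
    rw [integral_add (f := fun u => ‖zc φ u‖^(2*k)) (g := fun u => (k:ℝ) * (‖zc ψ u‖^2 * ‖zc φ u‖^(2*k))) (integrable_cont ((continuous_zc φ).norm.pow (2*k)))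
      (integrable_cont (continuous_const.mul (((continuous_zc ψ).norm.pow 2).mul
        ((continuous_zc φ).norm.pow (2*k)))))]
    rw [MeasureTheory.integral_const_mul]
    have hJ2 := J_eval hμ hφ hψ k
    have h2 : (∫ u, ‖zc ψ u‖^2 * ‖zc φ u‖^(2*k) ∂μ) = A1 * (1 + (k:ℝ)*f) / ((k:ℝ)+1) := by
      rw [eq_div_iff hk1]
      linear_combination hJ2
    rw [h2]
    rfl
  rw [step2]
  have hA1e : A1 = ((k:ℝ)+1) * Ak / ((d:ℝ)+k) := by
    rw [eq_div_iff hdk]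
    linear_combination -hrec
  have hCe : (((d+k-1).choose k : ℕ) : ℝ) = 1/Ak := by
    rw [eq_div_iff hAkne]
    exact hCA
  rw [hA1e, hCe]
  field_simp
  ring

end
end

section
/- Let ε ∈ (0, 1/2], let k ≥ 1, and define ψ₀ = √(1/2−ε)·e₀ + √(1/2+ε)·e₁ and ψ₁ = √(1/2+ε)·e₀ + √(1/2−ε)·e₁ in ℂ², where e₀, e₁ is the standard orthonormal basis. Let M be a positive semidefinite complex matrix indexed by (Fin k → Fin 2) such that I − M is also positive semidefinite. If Tr(M · |ψ₁⟩⟨ψ₁|^{⊗k}) − Tr(M · |ψ₀⟩⟨ψ₀|^{⊗k}) ≥ 1/3, then k ≥ 1/(36 ε²). Hence any algorithm estimating the inner product Tr(ρσ) of two states from k copies each to additive error ε with success probability 2/3 requires k = Ω(1/ε²), even with unrestricted joint quantum measurements. -/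
open scoped ComplexOrder

noncomputable section

/-- `|ψ⟩⟨ψ|^{⊗k}`, as a matrix indexed by `Fin k → Fin d`. -/
def ketbraPow (d k : ℕ) (φ : Cvec d) : Matrix (Fin k → Fin d) (Fin k → Fin d) ℂ :=
  fun i j => ∏ a : Fin k, φ (i a) * star (φ (j a))

/-- `ψ₀ = √(1/2−ε)·e₀ + √(1/2+ε)·e₁ ∈ ℂ²`. -/
def psi0 (ε : ℝ) : Cvec 2 :=
  (WithLp.equiv 2 (Fin 2 → ℂ)).symm
    ![((Real.sqrt (1 / 2 - ε) : ℝ) : ℂ), ((Real.sqrt (1 / 2 + ε) : ℝ) : ℂ)]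

/-- `ψ₁ = √(1/2+ε)·e₀ + √(1/2−ε)·e₁ ∈ ℂ²`. -/
def psi1 (ε : ℝ) : Cvec 2 :=
  (WithLp.equiv 2 (Fin 2 → ℂ)).symm
    ![((Real.sqrt (1 / 2 + ε) : ℝ) : ℂ), ((Real.sqrt (1 / 2 - ε) : ℝ) : ℂ)]

open Matrix in
/-- Trace of `M` against a pure product state is a quadratic form. -/
lemma trace_ketbra {d k : ℕ} (M : Matrix (Fin k → Fin d) (Fin k → Fin d) ℂ) (ψ : Cvec d) :
    (M * ketbraPow d k ψ).trace
      = star (fun x : Fin k → Fin d => ∏ a, ψ (x a)) ⬝ᵥ (M *ᵥ fun x => ∏ a, ψ (x a)) := by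
  simp only [Matrix.trace, Matrix.diag, Matrix.mul_apply, ketbraPow, dotProduct,
    Matrix.mulVec, Pi.star_apply, Finset.mul_sum]
  refine Finset.sum_congr rfl fun x _ => Finset.sum_congr rfl fun j _ => ?_
  rw [Finset.prod_mul_distrib, star_prod]
  ring

open Matrix in
/-- Dot product of product vectors factorizes. -/
lemma dot_prod_vec {d k : ℕ} (ψ χ : Cvec d) :
    star (fun x : Fin k → Fin d => ∏ a, ψ (x a)) ⬝ᵥ (fun x => ∏ a, χ (x a))
      = (∑ b, star (ψ b) * χ b) ^ k := by
  rw [Fintype.sum_pow]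
  simp only [dotProduct, Pi.star_apply, star_prod]
  congr 1; funext x
  rw [← Finset.prod_mul_distrib]

open Matrix in
/-- The core inequality: a POVM element distinguishes two unit vectors with
advantage at most `√(1 - c²)` where `c` is their (real, nonnegative) overlap. -/
lemma abstract_bound {ι : Type*} [Fintype ι] [DecidableEq ι]
    (M : Matrix ι ι ℂ) (hM : M.PosSemidef) (hM' : (1 - M).PosSemidef)
    (u v : ι → ℂ) (hu : star u ⬝ᵥ u = 1) (hv : star v ⬝ᵥ v = 1)
    (c : ℝ) (hc0 : 0 ≤ c) (hc1 : c < 1)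
    (huv : star u ⬝ᵥ v = (c:ℂ)) :
    Complex.re (star v ⬝ᵥ (M *ᵥ v) - star u ⬝ᵥ (M *ᵥ u)) ≤ Real.sqrt (1 - c^2) := by
  have hvu : star v ⬝ᵥ u = (c:ℂ) := by
    rw [star_dotProduct, huv, Complex.star_def, Complex.conj_ofReal]
  set s : ℝ := Real.sqrt (1 - c^2) with hs_def
  have hs2 : s^2 = 1 - c^2 := Real.sq_sqrt (by nlinarith)
  have hs_pos : 0 < s := Real.sqrt_pos.2 (by nlinarith)
  set φ : ι → ℂ := ((s:ℂ))⁻¹ • (v - (c:ℂ) • u) with hφ_def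
  have hsC : (s:ℂ) ≠ 0 := Complex.ofReal_ne_zero.2 hs_pos.ne'
  have hveq : v = (c:ℂ) • u + (s:ℂ) • φ := by
    rw [hφ_def, smul_inv_smul₀ hsC]; abel
  have huφ : star u ⬝ᵥ φ = 0 := by
    simp [hφ_def, dotProduct_smul, dotProduct_sub, huv, hu]
  have hφu : star φ ⬝ᵥ u = 0 := by
    simp [hφ_def, star_smul, smul_dotProduct, sub_dotProduct, star_sub, hvu, hu,
      Complex.star_def, Complex.conj_ofReal]
  have hφφ : star φ ⬝ᵥ φ = 1 := by
    rw [hφ_def]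
    simp only [star_smul, star_sub, star_smul, smul_dotProduct, dotProduct_smul,
      sub_dotProduct, dotProduct_sub, huv, hvu, hu, hv, Complex.star_def,
      Complex.conj_ofReal, map_inv₀]
    field_simp
    norm_cast
    have hS2' : (s:ℂ)^2 = 1 - (c:ℂ)^2 := by norm_cast
    simp only [Complex.real_smul, smul_eq_mul, mul_one]
    push_cast
    field_simp
    linear_combination -hS2'
  clear_value φ
  clear hφ_def
  set Buu := star u ⬝ᵥ (M *ᵥ u) with hBuu
  set Buφ := star u ⬝ᵥ (M *ᵥ φ) with hBuφ
  set Bφu := star φ ⬝ᵥ (M *ᵥ u) with hBφu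
  set Bφφ := star φ ⬝ᵥ (M *ᵥ φ) with hBφφ
  set t : ℝ := 1 + s with ht_def
  have ht_pos : 0 < t := by positivity
  set wp : ι → ℂ := (c:ℂ) • u + (t:ℂ) • φ with hwp
  set wm : ι → ℂ := (-(t:ℂ)) • u + (c:ℂ) • φ with hwm
  have hqv : star v ⬝ᵥ (M *ᵥ v)
      = (c:ℂ)^2*Buu + (c:ℂ)*(s:ℂ)*Buφ + (c:ℂ)*(s:ℂ)*Bφu + (s:ℂ)^2*Bφφ := by
    rw [hveq]
    simp only [star_add, star_smul, Matrix.mulVec_add, Matrix.mulVec_smul,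
      add_dotProduct, smul_dotProduct, dotProduct_add, dotProduct_smul,
      Complex.star_def, Complex.conj_ofReal, smul_eq_mul, ← hBuu, ← hBuφ, ← hBφu, ← hBφφ]
    ring
  have hqwp : star wp ⬝ᵥ (M *ᵥ wp)
      = (c:ℂ)^2*Buu + (c:ℂ)*(t:ℂ)*Buφ + (c:ℂ)*(t:ℂ)*Bφu + (t:ℂ)^2*Bφφ := by
    rw [hwp]
    simp only [star_add, star_smul, Matrix.mulVec_add, Matrix.mulVec_smul,
      add_dotProduct, smul_dotProduct, dotProduct_add, dotProduct_smul,
      Complex.star_def, Complex.conj_ofReal, smul_eq_mul, ← hBuu, ← hBuφ, ← hBφu, ← hBφφ]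
    ring
  have hqwm : star wm ⬝ᵥ (M *ᵥ wm)
      = (t:ℂ)^2*Buu - (c:ℂ)*(t:ℂ)*Buφ - (c:ℂ)*(t:ℂ)*Bφu + (c:ℂ)^2*Bφφ := by
    rw [hwm]
    simp only [star_add, star_smul, star_neg, Matrix.mulVec_add, Matrix.mulVec_smul,
      add_dotProduct, smul_dotProduct, dotProduct_add, dotProduct_smul, neg_dotProduct,
      dotProduct_neg, Matrix.mulVec_neg, neg_smul,
      Complex.star_def, Complex.conj_ofReal, smul_eq_mul, ← hBuu, ← hBuφ, ← hBφu, ← hBφφ]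
    ring
  have hwpnorm : star wp ⬝ᵥ wp = ((2*t : ℝ) : ℂ) := by
    rw [hwp]
    simp only [star_add, star_smul, add_dotProduct, smul_dotProduct, dotProduct_add,
      dotProduct_smul, Complex.star_def, Complex.conj_ofReal, smul_eq_mul,
      hu, hφφ, huφ, hφu]
    have hS2 : (s:ℂ)^2 = 1 - (c:ℂ)^2 := by norm_cast
    have htC : ((t:ℝ):ℂ) = 1 + (s:ℂ) := by rw [ht_def]; push_cast; ring
    push_cast
    rw [htC]
    linear_combination hS2
  have hm_pos : 0 ≤ Complex.re (star wm ⬝ᵥ (M *ᵥ wm)) := by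
    have := (Matrix.posSemidef_iff_dotProduct_mulVec.mp hM).2 wm
    exact (Complex.le_def.mp this).1
  have hp_le : Complex.re (star wp ⬝ᵥ (M *ᵥ wp)) ≤ 2*t := by
    have h0 := (Matrix.posSemidef_iff_dotProduct_mulVec.mp hM').2 wp
    have h1 : star wp ⬝ᵥ ((1 - M) *ᵥ wp) = ((2*t:ℝ):ℂ) - star wp ⬝ᵥ (M *ᵥ wp) := by
      rw [Matrix.sub_mulVec, dotProduct_sub, Matrix.one_mulVec, hwpnorm]
    rw [h1] at h0
    have := (Complex.le_def.mp h0).1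
    simp only [Complex.zero_re, Complex.sub_re, Complex.ofReal_re] at this
    linarith
  have hid : star v ⬝ᵥ (M *ᵥ v) - star u ⬝ᵥ (M *ᵥ u)
      = (((s/(2*t)) : ℝ) : ℂ) * (star wp ⬝ᵥ (M *ᵥ wp) - star wm ⬝ᵥ (M *ᵥ wm)) := by
    rw [hqv, hqwp, hqwm]
    have hS2 : (s:ℂ)^2 = 1 - (c:ℂ)^2 := by norm_cast
    have htC : ((t:ℝ):ℂ) = 1 + (s:ℂ) := by rw [ht_def]; push_cast; ring
    have ht0 : (1:ℂ) + (s:ℂ) ≠ 0 := by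
      rw [← htC]; exact_mod_cast ht_pos.ne'
    push_cast
    rw [htC]
    field_simp
    linear_combination ((2+(s:ℂ))*Buu + (s:ℂ)*Bφφ) * hS2
  rw [hid, Complex.re_ofReal_mul]
  have hre : Complex.re (star wp ⬝ᵥ (M *ᵥ wp) - star wm ⬝ᵥ (M *ᵥ wm)) ≤ 2*t := by
    rw [Complex.sub_re]; linarith
  have hr0 : 0 ≤ s/(2*t) := by positivity
  calc s/(2*t) * Complex.re (star wp ⬝ᵥ (M *ᵥ wp) - star wm ⬝ᵥ (M *ᵥ wm))
      ≤ s/(2*t) * (2*t) := mul_le_mul_of_nonneg_left hre hr0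
    _ = s := by field_simp

open Matrix in
set_option maxHeartbeats 2000000 in
/-- Optimality of the SWAP test: any two-outcome POVM `{M, I−M}` on
`(ℂ²)^{⊗k}` distinguishing `ψ₁^{⊗k}` from `ψ₀^{⊗k}` with advantage `≥ 1/3` requires
`k ≥ 1/(36 ε²)`. -/
theorem stmt9 (ε : ℝ) (hε : 0 < ε) (hε' : ε ≤ 1 / 2) (k : ℕ) (hk : 1 ≤ k)
    (M : Matrix (Fin k → Fin 2) (Fin k → Fin 2) ℂ)
    (hM : M.PosSemidef) (hM' : ((1 : Matrix (Fin k → Fin 2) (Fin k → Fin 2) ℂ) - M).PosSemidef)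
    (hgap : Complex.re ((M * ketbraPow 2 k (psi1 ε)).trace
        - (M * ketbraPow 2 k (psi0 ε)).trace) ≥ 1 / 3) :
    (k : ℝ) ≥ 1 / (36 * ε ^ 2) := by
  set p : ℝ := Real.sqrt (1/2 - ε) with hp_def
  set q : ℝ := Real.sqrt (1/2 + ε) with hq_def
  have hp2 : p^2 = 1/2 - ε := Real.sq_sqrt (by linarith)
  have hq2 : q^2 = 1/2 + ε := Real.sq_sqrt (by linarith)
  have hp0 : 0 ≤ p := Real.sqrt_nonneg _
  have hq0 : 0 ≤ q := Real.sqrt_nonneg _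
  -- the two product vectors
  set u : (Fin k → Fin 2) → ℂ := fun x => ∏ a, psi0 ε (x a) with hu_def
  set v : (Fin k → Fin 2) → ℂ := fun x => ∏ a, psi1 ε (x a) with hv_def
  have hpsi0 : ∀ b, psi0 ε b = ![((p:ℝ):ℂ), ((q:ℝ):ℂ)] b := by
    intro b
    simp [psi0, hp_def, hq_def, WithLp.equiv_symm_apply, PiLp.toLp_apply]
  have hpsi1 : ∀ b, psi1 ε b = ![((q:ℝ):ℂ), ((p:ℝ):ℂ)] b := by
    intro b
    simp [psi1, hp_def, hq_def, WithLp.equiv_symm_apply, PiLp.toLp_apply]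
  have hnorm1 : ((p:ℂ)^2 + (q:ℂ)^2) = 1 := by
    norm_cast
    rw [hp2, hq2]; norm_num
  have hc1 : (1 : ℝ) - 4*ε^2 = (2*p*q)^2 := by
    have : (2*p*q)^2 = 4 * p^2 * q^2 := by ring
    rw [this, hp2, hq2]; ring
  set c1 : ℝ := 2*p*q with hc1_def
  have hc1_0 : 0 ≤ c1 := by positivity
  have hc1_lt : c1 < 1 := by nlinarith
  -- dot products
  have hu1 : star u ⬝ᵥ u = 1 := by
    rw [hu_def, dot_prod_vec]
    have : (∑ b, star (psi0 ε b) * psi0 ε b) = 1 := by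
      simp only [hpsi0, Fin.sum_univ_two, Matrix.cons_val_zero, Matrix.cons_val_one,
        Matrix.head_cons, Complex.star_def, Complex.conj_ofReal]
      linear_combination hnorm1
    rw [this, one_pow]
  have hv1 : star v ⬝ᵥ v = 1 := by
    rw [hv_def, dot_prod_vec]
    have : (∑ b, star (psi1 ε b) * psi1 ε b) = 1 := by
      simp only [hpsi1, Fin.sum_univ_two, Matrix.cons_val_zero, Matrix.cons_val_one,
        Matrix.head_cons, Complex.star_def, Complex.conj_ofReal]
      linear_combination hnorm1
    rw [this, one_pow]
  have huv : star u ⬝ᵥ v = ((c1^k : ℝ) : ℂ) := by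
    rw [hu_def, hv_def, dot_prod_vec]
    have : (∑ b, star (psi0 ε b) * psi1 ε b) = ((c1 : ℝ) : ℂ) := by
      simp only [hpsi0, hpsi1, Fin.sum_univ_two, Matrix.cons_val_zero, Matrix.cons_val_one,
        Matrix.head_cons, Complex.star_def, Complex.conj_ofReal, hc1_def]
      push_cast
      ring
    rw [this]
    push_cast
    ring
  set c : ℝ := c1^k with hc_def
  have hc0 : 0 ≤ c := by positivity
  have hclt : c < 1 := pow_lt_one₀ hc1_0 hc1_lt (by omega)
  -- apply the abstract bound
  have hbound := abstract_bound M hM hM' u v hu1 hv1 c hc0 hclt huv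
  rw [trace_ketbra, trace_ketbra, ← hu_def, ← hv_def] at hgap
  have hsqrt : (1:ℝ)/3 ≤ Real.sqrt (1 - c^2) := le_trans hgap hbound
  have h19 : (1:ℝ)/9 ≤ 1 - c^2 := by
    have := Real.sqrt_le_sqrt (le_of_eq (rfl : (1:ℝ) - c^2 = 1 - c^2))
    nlinarith [Real.sq_sqrt (show (0:ℝ) ≤ 1 - c^2 by nlinarith), Real.sqrt_nonneg (1 - c^2)]
  have hck : c^2 = (1 - 4*ε^2)^k := by
    rw [hc_def, hc1]
    rw [← pow_mul, ← pow_mul, Nat.mul_comm]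
  have hbern : 1 - (k:ℝ)*(4*ε^2) ≤ (1 - 4*ε^2)^k := by
    have h := one_add_mul_le_pow (a := -(4*ε^2)) (by nlinarith) k
    calc 1 - (k:ℝ)*(4*ε^2) = 1 + (k:ℝ)*(-(4*ε^2)) := by ring
      _ ≤ (1 + -(4*ε^2))^k := h
      _ = (1 - 4*ε^2)^k := by ring_nf
  have hkey : (1:ℝ)/9 ≤ (k:ℝ)*(4*ε^2) := by nlinarith [hck ▸ h19]
  rw [ge_iff_le, div_le_iff₀ (by positivity)]
  nlinarith
end
end

section
/- Let d ≥ 1, k ≥ 1, ε ∈ (0,1), and let φ ∈ ℂ^d be a unit vector. For θ ∈ ℝ define the d×d matrix M(θ) = (1−ε)·|e₀⟩⟨e₀| + √(ε(1−ε))·e^{iθ}·|e₀⟩⟨φ| + √(ε(1−ε))·e^{−iθ}·|φ⟩⟨e₀| + ε·|φ⟩⟨φ|, where e₀ is the first standard basis vector. Then (2π)^{-1} ∫₀^{2π} M(θ)^{⊗k} dθ = Σ_{t=0}^{k} ε^t (1−ε)^{k−t} C(k,t)² · P_sym^{d,k} (|e₀⟩⟨e₀|^{⊗(k−t)} ⊗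 |φ⟩⟨φ|^{⊗t}) P_sym^{d,k}, as matrices indexed by (Fin k → Fin d), where the factor |e₀⟩⟨e₀|^{⊗(k−t)} acts on the first k−t tensor factors. -/
noncomputable section

/-- The permutation operator `P_d(π)` on `(ℂ^d)^{⊗k}`. -/
def permMat (d k : ℕ) (π : Equiv.Perm (Fin k)) : Matrix (Fin k → Fin d) (Fin k → Fin d) ℂ :=
  fun i j => if i = j ∘ π then 1 else 0

/-- The projector `P_sym^{d,k} = (k!)⁻¹ Σ_{π ∈ S_k} P_d(π)` onto the symmetric subspace. -/
def PsymM (d k : ℕ) : Matrix (Fin k → Fin d) (Fin k → Fin d) ℂ :=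
  ((k.factorial : ℂ))⁻¹ • ∑ π : Equiv.Perm (Fin k), permMat d k π

/-- The `k`-fold Kronecker power of a `d×d` matrix. -/
def kronPow (d m : ℕ) (Q : Matrix (Fin d) (Fin d) ℂ) :
    Matrix (Fin m → Fin d) (Fin m → Fin d) ℂ :=
  fun i j => ∏ a : Fin m, Q (i a) (j a)

/-- The first standard basis vector `e₀` of `ℂ^d` (as a coordinate function). -/
def e0vec (d : ℕ) : Fin d → ℂ := fun i => if (i : ℕ) = 0 then 1 else 0

/-- `|x⟩⟨y|` as a `d×d` matrix, for coordinate functions `x, y`. -/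
def ketbraF (d : ℕ) (x y : Fin d → ℂ) : Matrix (Fin d) (Fin d) ℂ :=
  fun i j => x i * star (y j)

/-- `M(θ) = (1−ε)|e₀⟩⟨e₀| + √(ε(1−ε))e^{iθ}|e₀⟩⟨φ| + √(ε(1−ε))e^{−iθ}|φ⟩⟨e₀| + ε|φ⟩⟨φ|`. -/
def Mtheta (d : ℕ) (ε : ℝ) (φ : Cvec d) (θ : ℝ) : Matrix (Fin d) (Fin d) ℂ :=
  ((1 - ε : ℝ) : ℂ) • ketbraF d (e0vec d) (e0vec d)
    + (((Real.sqrt (ε * (1 - ε)) : ℝ) : ℂ) * Complex.exp (θ * Complex.I)) •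
        ketbraF d (e0vec d) (fun i => φ i)
    + (((Real.sqrt (ε * (1 - ε)) : ℝ) : ℂ) * Complex.exp (-θ * Complex.I)) •
        ketbraF d (fun i => φ i) (e0vec d)
    + ((ε : ℝ) : ℂ) • ketbraF d (fun i => φ i) (fun i => φ i)

/-- `|e₀⟩⟨e₀|^{⊗(k−t)} ⊗ |φ⟩⟨φ|^{⊗t}` on `(ℂ^d)^{⊗k}`, with `|e₀⟩⟨e₀|` acting on the
first `k−t` tensor factors. -/
def mixedBlock (d k t : ℕ) (φ : Cvec d) : Matrix (Fin k → Fin d) (Fin k → Fin d) ℂ :=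
  fun i j => ∏ a : Fin k,
    (if (a : ℕ) < k - t then e0vec d (i a) * star (e0vec d (j a))
     else φ (i a) * star (φ (j a)))

namespace Stmt10Aux

open Finset

/-- the vector attached to a boolean label: `φ` for `true`, `e₀` for `false`. -/
def vx (d : ℕ) (φ : Cvec d) : Bool → Fin d → ℂ :=
  fun b => if b then (fun i => φ i) else e0vec d

/-- scalar weight attached to a boolean label. -/
def sb (ε : ℝ) : Bool → ℝ := fun b => if b then Real.sqrt ε else Real.sqrt (1 - ε)

/-- phase attached to a pair of boolean labels. -/
def zph : Bool × Bool → ℤ := fun c => (if c.2 then 1 else 0) - (if c.1 then 1 else 0)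

/-- tensor-product vector entry associated to a boolean pattern `g`. -/
def Vf (d k : ℕ) (φ : Cvec d) (g : Fin k → Bool) (i : Fin k → Fin d) : ℂ :=
  ∏ a, vx d φ (g a) (i a)

/-- number of `true`s in a boolean pattern. -/
def cnt (k : ℕ) (g : Fin k → Bool) : ℕ := (univ.filter fun a => g a = true).card

/-- scalar weight of a boolean pattern. -/
def Wp (k : ℕ) (ε : ℝ) (g : Fin k → Bool) : ℝ := ∏ a, sb ε (g a)

/-- the canonical pattern with `t` `true`s at the end. -/
def g0 (k t : ℕ) : Fin k → Bool := fun a => decide (k - t ≤ (a : ℕ))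

variable {d k : ℕ} {ε : ℝ} {φ : Cvec d}

lemma Mtheta_apply (hε0 : 0 ≤ ε) (hε1 : ε ≤ 1) (θ : ℝ) (p q : Fin d) :
    Mtheta d ε φ θ p q
      = ∑ c : Bool × Bool, ((sb ε c.1 * sb ε c.2 : ℝ) : ℂ) *
          Complex.exp ((zph c : ℂ) * θ * Complex.I) * (vx d φ c.1 p * star (vx d φ c.2 q)) := by
  have h1 : Real.sqrt (ε * (1 - ε)) = Real.sqrt ε * Real.sqrt (1 - ε) := Real.sqrt_mul hε0 _
  have h2 : Real.sqrt ε * Real.sqrt ε = ε := Real.mul_self_sqrt hε0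
  have h3 : Real.sqrt (1 - ε) * Real.sqrt (1 - ε) = 1 - ε := Real.mul_self_sqrt (by linarith)
  simp only [Fintype.sum_prod_type, Fintype.sum_bool, Mtheta, Matrix.add_apply, Matrix.smul_apply,
    ketbraF, smul_eq_mul, vx, sb, zph, if_true, if_false, Bool.false_eq_true, h1]
  push_cast
  have e1 : (1 : ℂ) * ↑θ * Complex.I = ↑θ * Complex.I := by ring
  have e2 : (-1 : ℂ) * ↑θ * Complex.I = -↑θ * Complex.I := by ring
  have e3 : (0 : ℂ) * ↑θ * Complex.I = 0 := by ring
  have hc2 : ((Real.sqrt ε : ℝ) : ℂ) * ((Real.sqrt ε : ℝ) : ℂ) = ((ε : ℝ) : ℂ) := by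
    rw [← Complex.ofReal_mul, h2]
  have hc3 : ((Real.sqrt (1 - ε) : ℝ) : ℂ) * ((Real.sqrt (1 - ε) : ℝ) : ℂ)
      = 1 - ((ε : ℝ) : ℂ) := by
    rw [← Complex.ofReal_mul, h3]
    push_cast
    ring
  simp only [e1, e2, e3, Complex.exp_zero]
  rw [hc2, hc3]
  ring

lemma kron_entry (hε0 : 0 ≤ ε) (hε1 : ε ≤ 1) (θ : ℝ) (i j : Fin k → Fin d) :
    kronPow d k (Mtheta d ε φ θ) i j
      = ∑ p : (Fin k → Bool) × (Fin k → Bool),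
          (((Wp k ε p.1 * Wp k ε p.2 : ℝ) : ℂ) * Vf d k φ p.1 i * star (Vf d k φ p.2 j)) *
            Complex.exp ((((cnt k p.2 : ℤ) - (cnt k p.1 : ℤ) : ℤ) : ℂ) * θ * Complex.I) := by
  classical
  unfold kronPow
  have step1 : ∏ a, Mtheta d ε φ θ (i a) (j a)
      = ∑ f : Fin k → Bool × Bool, ∏ a,
          (((sb ε (f a).1 * sb ε (f a).2 : ℝ) : ℂ) *
            Complex.exp ((zph (f a) : ℂ) * θ * Complex.I) *
            (vx d φ (f a).1 (i a) * star (vx d φ (f a).2 (j a)))) := by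
    rw [show (∏ a, Mtheta d ε φ θ (i a) (j a)) = ∏ a, ∑ c : Bool × Bool,
        (((sb ε c.1 * sb ε c.2 : ℝ) : ℂ) * Complex.exp ((zph c : ℂ) * θ * Complex.I) *
          (vx d φ c.1 (i a) * star (vx d φ c.2 (j a)))) from
      Finset.prod_congr rfl fun a _ => Mtheta_apply hε0 hε1 θ (i a) (j a)]
    exact Fintype.prod_sum _
  rw [step1]
  rw [← ((Equiv.arrowProdEquivProdArrow (Fin k) (fun _ => Bool) (fun _ => Bool)).symm.sum_comp
      (fun f : Fin k → Bool × Bool => ∏ a,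
        (((sb ε (f a).1 * sb ε (f a).2 : ℝ) : ℂ) *
          Complex.exp ((zph (f a) : ℂ) * θ * Complex.I) *
          (vx d φ (f a).1 (i a) * star (vx d φ (f a).2 (j a))))))]
  refine Finset.sum_congr rfl fun p _ => ?_
  have hsymm : ∀ a, ((Equiv.arrowProdEquivProdArrow (Fin k) (fun _ => Bool) (fun _ => Bool)).symm p) a
      = (p.1 a, p.2 a) := fun a => rfl
  simp only [hsymm]
  rw [Finset.prod_mul_distrib, Finset.prod_mul_distrib]
  have hA : (∏ a, ((sb ε (p.1 a) * sb ε (p.2 a) : ℝ) : ℂ))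
      = ((Wp k ε p.1 * Wp k ε p.2 : ℝ) : ℂ) := by
    rw [Wp, Wp, ← Finset.prod_mul_distrib]
    push_cast
    rfl
  have hE : (∏ a, Complex.exp ((zph (p.1 a, p.2 a) : ℂ) * θ * Complex.I))
      = Complex.exp ((((cnt k p.2 : ℤ) - (cnt k p.1 : ℤ) : ℤ) : ℂ) * θ * Complex.I) := by
    rw [← Complex.exp_sum]
    congr 1
    rw [← Finset.sum_mul, ← Finset.sum_mul]
    congr 2
    have : (∑ a, (zph (p.1 a, p.2 a) : ℂ))
        = (∑ a, (if p.2 a then (1:ℂ) else 0)) - ∑ a, (if p.1 a then (1:ℂ) else 0) := by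
      rw [← Finset.sum_sub_distrib]
      refine Finset.sum_congr rfl fun a _ => ?_
      simp only [zph]
      push_cast
      rfl
    rw [this]
    simp only [Finset.sum_boole, cnt]
    push_cast
    rfl
  have hV : (∏ a, (vx d φ (p.1 a) (i a) * star (vx d φ (p.2 a) (j a))))
      = Vf d k φ p.1 i * star (Vf d k φ p.2 j) := by
    rw [Finset.prod_mul_distrib, Vf, Vf, star_prod]
  rw [hA, hE, hV]
  ring

lemma integral_exp_int (n : ℤ) :
    (∫ θ in (0:ℝ)..(2 * Real.pi), Complex.exp ((n : ℂ) * θ * Complex.I))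
      = if n = 0 then ((2 * Real.pi : ℝ) : ℂ) else 0 := by
  rcases eq_or_ne n 0 with hn | hn
  · subst hn
    simp only [Int.cast_zero, zero_mul, Complex.exp_zero, if_true]
    rw [intervalIntegral.integral_const]
    rw [Complex.real_smul]
    push_cast
    ring
  · have hc : (n : ℂ) * Complex.I ≠ 0 :=
      mul_ne_zero (by exact_mod_cast hn) Complex.I_ne_zero
    have h : ∀ θ : ℝ, (n : ℂ) * θ * Complex.I = ((n : ℂ) * Complex.I) * θ := fun θ => by ring
    simp only [h]
    rw [integral_exp_mul_complex hc, if_neg hn]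
    have h2 : ((n : ℂ) * Complex.I) * ((2 * Real.pi : ℝ) : ℂ) = (n : ℂ) * (2 * Real.pi * Complex.I) := by
      push_cast
      ring
    rw [h2, Complex.exp_int_mul_two_pi_mul_I]
    norm_num

lemma avg_entry (hε0 : 0 ≤ ε) (hε1 : ε ≤ 1) (i j : Fin k → Fin d) :
    (((2 * Real.pi)⁻¹ : ℝ) : ℂ) *
        ∫ θ in (0:ℝ)..(2 * Real.pi), kronPow d k (Mtheta d ε φ θ) i j
      = ∑ p : (Fin k → Bool) × (Fin k → Bool),
          if cnt k p.1 = cnt k p.2 then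
            ((Wp k ε p.1 * Wp k ε p.2 : ℝ) : ℂ) * Vf d k φ p.1 i * star (Vf d k φ p.2 j)
          else 0 := by
  classical
  simp only [kron_entry hε0 hε1]
  have hint := intervalIntegral.integral_finset_sum (μ := MeasureTheory.volume)
    (a := (0:ℝ)) (b := 2 * Real.pi) (s := (Finset.univ : Finset ((Fin k → Bool) × (Fin k → Bool))))
    (f := fun p θ =>
      (((Wp k ε p.1 * Wp k ε p.2 : ℝ) : ℂ) * Vf d k φ p.1 i * star (Vf d k φ p.2 j)) *
        Complex.exp ((((cnt k p.2 : ℤ) - (cnt k p.1 : ℤ) : ℤ) : ℂ) * θ * Complex.I))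
    (fun p _ => Continuous.intervalIntegrable (by fun_prop) _ _)
  rw [hint]
  rw [Finset.mul_sum]
  refine Finset.sum_congr rfl fun p _ => ?_
  rw [intervalIntegral.integral_const_mul, integral_exp_int]
  by_cases hc : ((cnt k p.2 : ℤ) - (cnt k p.1 : ℤ) : ℤ) = 0
  · rw [if_pos hc, if_pos (by omega : cnt k p.1 = cnt k p.2)]
    have h1 : (((2 * Real.pi)⁻¹ : ℝ) : ℂ) * (((2 * Real.pi : ℝ)) : ℂ) = 1 := by
      rw [← Complex.ofReal_mul, inv_mul_cancel₀ (by positivity), Complex.ofReal_one]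
    calc (((2 * Real.pi)⁻¹ : ℝ) : ℂ) *
          (((Wp k ε p.1 * Wp k ε p.2 : ℝ) : ℂ) * Vf d k φ p.1 i * star (Vf d k φ p.2 j) *
            ((2 * Real.pi : ℝ) : ℂ))
        = ((((2 * Real.pi)⁻¹ : ℝ) : ℂ) * (((2 * Real.pi : ℝ)) : ℂ)) *
            (((Wp k ε p.1 * Wp k ε p.2 : ℝ) : ℂ) * Vf d k φ p.1 i * star (Vf d k φ p.2 j)) := by
          ring
      _ = _ := by rw [h1, one_mul]
  · rw [if_neg hc, if_neg (by omega : ¬ cnt k p.1 = cnt k p.2), mul_zero, mul_zero]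

lemma cnt_le (g : Fin k → Bool) : cnt k g ≤ k := by
  classical
  calc cnt k g ≤ (univ : Finset (Fin k)).card := card_filter_le _ _
  _ = k := by simp

lemma cnt_comp_perm (g : Fin k → Bool) (π : Equiv.Perm (Fin k)) :
    cnt k (g ∘ ⇑π) = cnt k g := by
  classical
  unfold cnt
  apply Finset.card_bij (fun a _ => π a)
  · intro a ha
    simp only [Finset.mem_filter, Finset.mem_univ, true_and, Function.comp_apply] at ha ⊢
    exact ha
  · intro a _ b _ hab
    exact π.injective hab
  · intro b hb
    refine ⟨π⁻¹ b, ?_, by simp⟩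
    simp only [Finset.mem_filter, Finset.mem_univ, true_and, Function.comp_apply] at hb ⊢
    simpa using hb

lemma cnt_g0 {t : ℕ} (ht : t ≤ k) : cnt k (g0 k t) = t := by
  classical
  unfold cnt g0
  simp only [decide_eq_true_eq]
  rw [Finset.card_filter]
  rw [Fin.sum_univ_eq_sum_range (fun a => if k - t ≤ a then 1 else 0)]
  rw [← Finset.card_filter]
  have : (Finset.range k).filter (fun a => k - t ≤ a) = Finset.Ico (k - t) k := by
    ext x
    simp only [Finset.mem_filter, Finset.mem_range, Finset.mem_Ico]
    omega
  rw [this, Nat.card_Ico]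
  omega

lemma Wp_mul {t : ℕ} (hε0 : 0 ≤ ε) (hε1 : ε ≤ 1) {g h : Fin k → Bool}
    (hg : cnt k g = t) (hh : cnt k h = t) :
    Wp k ε g * Wp k ε h = ε ^ t * (1 - ε) ^ (k - t) := by
  classical
  have key : ∀ g' : Fin k → Bool, Wp k ε g'
      = Real.sqrt ε ^ cnt k g' * Real.sqrt (1 - ε) ^ (k - cnt k g') := by
    intro g'
    have hadd := Finset.card_filter_add_card_filter_not
      (s := (Finset.univ : Finset (Fin k))) (p := fun a => g' a = true)
    simp only [Finset.card_univ, Fintype.card_fin] at hadd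
    unfold Wp sb
    rw [Finset.prod_ite (fun _ => Real.sqrt ε) (fun _ => Real.sqrt (1 - ε)),
      Finset.prod_const, Finset.prod_const]
    have h1 : (Finset.univ.filter fun a => g' a = true).card = cnt k g' := rfl
    have h2 : (Finset.univ.filter fun a => ¬ (g' a = true)).card = k - cnt k g' := by
      rw [← h1] at *
      omega
    rw [h1, h2]
  rw [key g, key h, hg, hh]
  have h2 : Real.sqrt ε * Real.sqrt ε = ε := Real.mul_self_sqrt hε0
  have h3 : Real.sqrt (1 - ε) * Real.sqrt (1 - ε) = 1 - ε := Real.mul_self_sqrt (by linarith)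
  calc Real.sqrt ε ^ t * Real.sqrt (1 - ε) ^ (k - t) *
        (Real.sqrt ε ^ t * Real.sqrt (1 - ε) ^ (k - t))
      = (Real.sqrt ε * Real.sqrt ε) ^ t * (Real.sqrt (1 - ε) * Real.sqrt (1 - ε)) ^ (k - t) := by
        rw [mul_pow, mul_pow]; ring
    _ = ε ^ t * (1 - ε) ^ (k - t) := by rw [h2, h3]

lemma exists_perm {t : ℕ} (ht : t ≤ k) {g : Fin k → Bool} (hg : cnt k g = t) :
    ∃ π : Equiv.Perm (Fin k), g0 k t ∘ ⇑π = g := by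
  classical
  have hc1 : Fintype.card {a // g a = true} = Fintype.card {a // g0 k t a = true} := by
    rw [Fintype.card_subtype, Fintype.card_subtype]
    show cnt k g = cnt k (g0 k t)
    rw [hg, cnt_g0 ht]
  have hc2 : Fintype.card {a // ¬ (g a = true)} = Fintype.card {a // ¬ (g0 k t a = true)} := by
    rw [Fintype.card_subtype_compl, Fintype.card_subtype_compl, hc1]
  obtain e1 := Fintype.equivOfCardEq hc1
  obtain e2 := Fintype.equivOfCardEq hc2
  refine ⟨Equiv.subtypeCongr e1 e2, funext fun a => ?_⟩
  by_cases ha : g a = true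
  · have : Equiv.subtypeCongr e1 e2 a = (e1 ⟨a, ha⟩ : Fin k) := by
      simp [Equiv.subtypeCongr, ha]
    simp only [Function.comp_apply, this]
    rw [(e1 ⟨a, ha⟩).2, ha]
  · have : Equiv.subtypeCongr e1 e2 a = (e2 ⟨a, ha⟩ : Fin k) := by
      simp [Equiv.subtypeCongr, ha]
    simp only [Function.comp_apply, this]
    have h2 := (e2 ⟨a, ha⟩).2
    simp only [Bool.not_eq_true] at h2 ha
    rw [h2, ha]

lemma fiber_card {t : ℕ} (ht : t ≤ k) {g : Fin k → Bool} (hg : cnt k g = t) :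
    (univ.filter fun π : Equiv.Perm (Fin k) => g = g0 k t ∘ ⇑π).card
      = t.factorial * (k - t).factorial := by
  classical
  obtain ⟨π₀, hπ₀⟩ := exists_perm ht hg
  have hbij : (Finset.univ.filter fun π : Equiv.Perm (Fin k) => g = g0 k t ∘ ⇑π).card
      = (Finset.univ.filter fun σ : Equiv.Perm (Fin k) => g0 k t ∘ ⇑σ = g0 k t).card := by
    apply Finset.card_bij (fun π _ => π * π₀⁻¹)
    · intro π hπ
      simp only [Finset.mem_filter, Finset.mem_univ, true_and] at hπ ⊢
      funext a
      have h1 : g0 k t (π (π₀⁻¹ a)) = g (π₀⁻¹ a) := by rw [hπ]; rfl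
      have h2 : g (π₀⁻¹ a) = g0 k t (π₀ (π₀⁻¹ a)) := by rw [← hπ₀]; rfl
      simp only [Function.comp_apply, Equiv.Perm.coe_mul]
      rw [h1, h2]; simp
    · intro a _ b _ hab
      exact mul_right_cancel hab
    · intro σ hσ
      refine ⟨σ * π₀, Finset.mem_filter.2 ⟨Finset.mem_univ _, ?_⟩, by group⟩
      simp only [Finset.mem_filter, Finset.mem_univ, true_and] at hσ
      funext a
      have : g0 k t (σ (π₀ a)) = g0 k t (π₀ a) := congrFun hσ (π₀ a)
      rw [← hπ₀]
      simp only [Function.comp_apply, Equiv.Perm.coe_mul]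
      rw [this]
  rw [hbij]
  have hcard := DomMulAct.stabilizer_card (g0 k t)
  rw [Fintype.card_subtype] at hcard
  have hprod : (∏ b : Bool, (Fintype.card {a // g0 k t a = b}).factorial)
      = (Fintype.card {a // g0 k t a = true}).factorial *
          (Fintype.card {a // g0 k t a = false}).factorial := by
    rw [Fintype.prod_bool]
  have htrue : Fintype.card {a // g0 k t a = true} = t := by
    rw [Fintype.card_subtype]
    exact cnt_g0 ht
  have hfalse : Fintype.card {a // g0 k t a = false} = k - t := by
    have e : {a // g0 k t a = false} ≃ {a // ¬ (g0 k t a = true)} :=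
      Equiv.subtypeEquivRight (by intro a; cases g0 k t a <;> simp)
    rw [Fintype.card_congr e, Fintype.card_subtype_compl, htrue, Fintype.card_fin]
  rw [hprod, htrue, hfalse] at hcard
  exact hcard

lemma perm_sum {t : ℕ} (ht : t ≤ k) (F : (Fin k → Bool) → ℂ) :
    ∑ π : Equiv.Perm (Fin k), F (g0 k t ∘ ⇑π)
      = ((t.factorial * (k - t).factorial : ℕ) : ℂ) *
          ∑ g ∈ univ.filter (fun g => cnt k g = t), F g := by
  classical
  have hmem : ∀ π : Equiv.Perm (Fin k),
      (g0 k t ∘ ⇑π) ∈ Finset.univ.filter (fun g => cnt k g = t) := by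
    intro π
    simp only [Finset.mem_filter, Finset.mem_univ, true_and]
    rw [cnt_comp_perm, cnt_g0 ht]
  have step1 : ∑ π : Equiv.Perm (Fin k), F (g0 k t ∘ ⇑π)
      = ∑ π : Equiv.Perm (Fin k), ∑ g ∈ Finset.univ.filter (fun g => cnt k g = t),
          if g = g0 k t ∘ ⇑π then F g else 0 := by
    refine Finset.sum_congr rfl fun π _ => ?_
    rw [Finset.sum_ite_eq' _ (g0 k t ∘ ⇑π) F, if_pos (hmem π)]
  rw [step1, Finset.sum_comm, Finset.mul_sum]
  refine Finset.sum_congr rfl fun g hgmem => ?_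
  have hg : cnt k g = t := (Finset.mem_filter.1 hgmem).2
  rw [← Finset.sum_filter, Finset.sum_const, fiber_card ht hg]
  rw [nsmul_eq_mul]
  try push_cast
  try ring_nf

lemma Vf_comp (g : Fin k → Bool) (i : Fin k → Fin d) (π : Equiv.Perm (Fin k)) :
    Vf d k φ g (i ∘ ⇑π) = Vf d k φ (g ∘ ⇑π⁻¹) i := by
  unfold Vf
  apply Fintype.prod_equiv π
  intro a
  simp

lemma mixedBlock_apply {t : ℕ} (i j : Fin k → Fin d) :
    mixedBlock d k t φ i j = Vf d k φ (g0 k t) i * star (Vf d k φ (g0 k t) j) := by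
  unfold mixedBlock Vf vx g0
  rw [star_prod, ← Finset.prod_mul_distrib]
  refine Finset.prod_congr rfl fun a _ => ?_
  by_cases ha : (a : ℕ) < k - t
  · rw [if_pos ha]
    have h : ¬ (k - t ≤ (a : ℕ)) := by omega
    simp [h]
  · rw [if_neg ha]
    have h : k - t ≤ (a : ℕ) := by omega
    simp [h]

lemma permMat_mul_apply (π : Equiv.Perm (Fin k)) (M : Matrix (Fin k → Fin d) (Fin k → Fin d) ℂ)
    (i j : Fin k → Fin d) : (permMat d k π * M) i j = M (i ∘ ⇑π⁻¹) j := by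
  classical
  rw [Matrix.mul_apply]
  have key : ∀ l : Fin k → Fin d, (i = l ∘ ⇑π) ↔ l = i ∘ ⇑π⁻¹ := by
    intro l
    constructor
    · rintro rfl; funext a; simp
    · rintro rfl; funext a; simp
  simp only [permMat, key, ite_mul, one_mul, zero_mul]
  rw [Finset.sum_ite_eq' Finset.univ (i ∘ ⇑π⁻¹) (fun l => M l j)]
  simp

lemma mul_permMat_apply (σ : Equiv.Perm (Fin k)) (M : Matrix (Fin k → Fin d) (Fin k → Fin d) ℂ)
    (i j : Fin k → Fin d) : (M * permMat d k σ) i j = M i (j ∘ ⇑σ) := by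
  classical
  rw [Matrix.mul_apply]
  simp only [permMat, mul_ite, mul_one, mul_zero]
  rw [Finset.sum_ite_eq' Finset.univ (j ∘ ⇑σ) (fun l => M i l)]
  simp

lemma rhs_entry {t : ℕ} (ht : t ≤ k) (i j : Fin k → Fin d) :
    (PsymM d k * mixedBlock d k t φ * PsymM d k) i j
      = ((k.factorial : ℂ))⁻¹ * ((k.factorial : ℂ))⁻¹ *
          (((t.factorial * (k - t).factorial : ℕ) : ℂ) *
              ∑ g ∈ univ.filter (fun g => cnt k g = t), Vf d k φ g i) *
          (((t.factorial * (k - t).factorial : ℕ) : ℂ) *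
              ∑ h ∈ univ.filter (fun h => cnt k h = t), star (Vf d k φ h j)) := by
  classical
  unfold PsymM
  rw [Matrix.smul_mul, Matrix.smul_mul, Matrix.mul_smul]
  rw [Matrix.smul_apply, Matrix.smul_apply, smul_eq_mul, smul_eq_mul]
  have expand : ((∑ π : Equiv.Perm (Fin k), permMat d k π) * mixedBlock d k t φ *
        ∑ σ : Equiv.Perm (Fin k), permMat d k σ) i j
      = ∑ σ : Equiv.Perm (Fin k), ∑ π : Equiv.Perm (Fin k),
          (permMat d k π * mixedBlock d k t φ * permMat d k σ) i j := by
    rw [Matrix.sum_mul, Matrix.mul_sum, Matrix.sum_apply]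
    refine Finset.sum_congr rfl fun σ _ => ?_
    rw [Matrix.sum_mul, Matrix.sum_apply]
  rw [expand, Finset.sum_comm]
  have hterm : ∀ π σ : Equiv.Perm (Fin k),
      (permMat d k π * mixedBlock d k t φ * permMat d k σ) i j
        = Vf d k φ (g0 k t ∘ ⇑π) i * star (Vf d k φ (g0 k t ∘ ⇑σ⁻¹) j) := by
    intro π σ
    rw [mul_permMat_apply, permMat_mul_apply, mixedBlock_apply]
    congr 1
    · rw [show i ∘ ⇑π⁻¹ = i ∘ ⇑(π⁻¹) from rfl, Vf_comp, inv_inv]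
    · rw [Vf_comp]
  simp only [hterm]
  rw [← Finset.sum_mul_sum]
  have hinv : ∑ σ : Equiv.Perm (Fin k), star (Vf d k φ (g0 k t ∘ ⇑σ⁻¹) j)
      = ∑ σ : Equiv.Perm (Fin k), star (Vf d k φ (g0 k t ∘ ⇑σ) j) := by
    exact Fintype.sum_equiv (Equiv.inv (Equiv.Perm (Fin k))) _ _ (fun σ => rfl)
  rw [hinv]
  rw [perm_sum ht (fun g => Vf d k φ g i), perm_sum ht (fun g => star (Vf d k φ g j))]
  ring

end Stmt10Aux

/-- Averaging the `k`-fold tensor power of `M(θ)` over a uniform phase: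
`(2π)⁻¹ ∫₀^{2π} M(θ)^{⊗k} dθ
  = Σ_{t=0}^k ε^t (1−ε)^{k−t} C(k,t)² · P_sym (|e₀⟩⟨e₀|^{⊗(k−t)} ⊗ |φ⟩⟨φ|^{⊗t}) P_sym`. -/
theorem stmt10 (d k : ℕ) (hd : 1 ≤ d) (hk : 1 ≤ k) (ε : ℝ) (hε : ε ∈ Set.Ioo (0 : ℝ) 1)
    (φ : Cvec d) (hφ : ‖φ‖ = 1) :
    ((fun i j => (((2 * Real.pi)⁻¹ : ℝ) : ℂ) *
        ∫ θ in (0 : ℝ)..(2 * Real.pi), kronPow d k (Mtheta d ε φ θ) i j) :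
      Matrix (Fin k → Fin d) (Fin k → Fin d) ℂ)
      = ∑ t ∈ Finset.range (k + 1),
          ((ε ^ t * (1 - ε) ^ (k - t) * (Nat.choose k t : ℝ) ^ 2 : ℝ) : ℂ) •
            (PsymM d k * mixedBlock d k t φ * PsymM d k) := by
  classical
  have hε0 : (0:ℝ) ≤ ε := le_of_lt hε.1
  have hε1 : ε ≤ 1 := le_of_lt hε.2
  funext i j
  rw [Stmt10Aux.avg_entry hε0 hε1 i j]
  have hRHS : (∑ t ∈ Finset.range (k + 1),
      ((ε ^ t * (1 - ε) ^ (k - t) * (Nat.choose k t : ℝ) ^ 2 : ℝ) : ℂ) •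
        (PsymM d k * mixedBlock d k t φ * PsymM d k)) i j
      = ∑ t ∈ Finset.range (k + 1),
          ((ε ^ t * (1 - ε) ^ (k - t) * (Nat.choose k t : ℝ) ^ 2 : ℝ) : ℂ) *
            ((PsymM d k * mixedBlock d k t φ * PsymM d k) i j) := by
    rw [Matrix.sum_apply]
    refine Finset.sum_congr rfl fun t _ => ?_
    rw [Matrix.smul_apply, smul_eq_mul]
  rw [hRHS]
  rw [Fintype.sum_prod_type]
  rw [← Finset.sum_fiberwise_of_maps_to
    (g := fun g : Fin k → Bool => Stmt10Aux.cnt k g) (t := Finset.range (k + 1))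
    (fun g _ => Finset.mem_range.2 (Nat.lt_succ_of_le (Stmt10Aux.cnt_le g)))]
  refine Finset.sum_congr rfl fun t htmem => ?_
  have ht : t ≤ k := Nat.lt_succ_iff.1 (Finset.mem_range.1 htmem)
  have step1 : ∑ g ∈ Finset.univ.filter (fun g => Stmt10Aux.cnt k g = t),
      ∑ h : Fin k → Bool,
        (if Stmt10Aux.cnt k g = Stmt10Aux.cnt k h then
          ((Stmt10Aux.Wp k ε g * Stmt10Aux.Wp k ε h : ℝ) : ℂ) * Stmt10Aux.Vf d k φ g i *
            star (Stmt10Aux.Vf d k φ h j)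
        else 0)
      = ∑ g ∈ Finset.univ.filter (fun g => Stmt10Aux.cnt k g = t),
          ∑ h ∈ Finset.univ.filter (fun h => Stmt10Aux.cnt k h = t),
            ((ε ^ t * (1 - ε) ^ (k - t) : ℝ) : ℂ) * (Stmt10Aux.Vf d k φ g i *
              star (Stmt10Aux.Vf d k φ h j)) := by
    refine Finset.sum_congr rfl fun g hgmem => ?_
    have hg : Stmt10Aux.cnt k g = t := (Finset.mem_filter.1 hgmem).2
    rw [Finset.sum_filter]
    refine Finset.sum_congr rfl fun h _ => ?_
    by_cases hh : Stmt10Aux.cnt k h = t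
    · rw [if_pos hh, if_pos (by rw [hg, hh])]
      rw [Stmt10Aux.Wp_mul hε0 hε1 hg hh]
      ring
    · rw [if_neg hh, if_neg (by rw [hg]; exact fun hc => hh hc.symm)]
  rw [step1, Stmt10Aux.rhs_entry ht i j]
  set S1 := ∑ g ∈ Finset.univ.filter (fun g => Stmt10Aux.cnt k g = t), Stmt10Aux.Vf d k φ g i
    with hS1
  set S2 := ∑ h ∈ Finset.univ.filter (fun h => Stmt10Aux.cnt k h = t),
      star (Stmt10Aux.Vf d k φ h j) with hS2
  have expand2 : ∑ g ∈ Finset.univ.filter (fun g => Stmt10Aux.cnt k g = t),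
      ∑ h ∈ Finset.univ.filter (fun h => Stmt10Aux.cnt k h = t),
        ((ε ^ t * (1 - ε) ^ (k - t) : ℝ) : ℂ) * (Stmt10Aux.Vf d k φ g i *
          star (Stmt10Aux.Vf d k φ h j))
      = ((ε ^ t * (1 - ε) ^ (k - t) : ℝ) : ℂ) * (S1 * S2) := by
    rw [hS1, hS2, Finset.sum_mul_sum]
    rw [Finset.mul_sum]
    refine Finset.sum_congr rfl fun g _ => ?_
    rw [Finset.mul_sum]
  rw [expand2]
  have hAch : ((t.factorial * (k - t).factorial : ℕ) : ℂ) * ((Nat.choose k t : ℝ) : ℂ)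
      = (k.factorial : ℂ) := by
    push_cast
    rw [← Nat.choose_mul_factorial_mul_factorial ht]
    push_cast
    ring
  have hkf : (k.factorial : ℂ) ≠ 0 := Nat.cast_ne_zero.2 (Nat.factorial_ne_zero k)
  have key : ((k.factorial : ℂ))⁻¹ * ((k.factorial : ℂ))⁻¹ *
      (((t.factorial * (k - t).factorial : ℕ) : ℂ) * ((t.factorial * (k - t).factorial : ℕ) : ℂ)) *
      (((Nat.choose k t : ℝ) : ℂ) * ((Nat.choose k t : ℝ) : ℂ)) = 1 := by
    calc ((k.factorial : ℂ))⁻¹ * ((k.factorial : ℂ))⁻¹ *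
        (((t.factorial * (k - t).factorial : ℕ) : ℂ) *
          ((t.factorial * (k - t).factorial : ℕ) : ℂ)) *
        (((Nat.choose k t : ℝ) : ℂ) * ((Nat.choose k t : ℝ) : ℂ))
        = (((t.factorial * (k - t).factorial : ℕ) : ℂ) * ((Nat.choose k t : ℝ) : ℂ)) *
            (((t.factorial * (k - t).factorial : ℕ) : ℂ) * ((Nat.choose k t : ℝ) : ℂ)) *
            (((k.factorial : ℂ))⁻¹ * ((k.factorial : ℂ))⁻¹) := by ring
      _ = 1 := by
          rw [hAch]
          field_simp
  have hsplit : ((ε ^ t * (1 - ε) ^ (k - t) * (Nat.choose k t : ℝ) ^ 2 : ℝ) : ℂ)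
      = ((ε ^ t * (1 - ε) ^ (k - t) : ℝ) : ℂ) *
          (((Nat.choose k t : ℝ) : ℂ) * ((Nat.choose k t : ℝ) : ℂ)) := by
    push_cast
    ring
  rw [hsplit]
  linear_combination (-(((ε ^ t * (1 - ε) ^ (k - t) : ℝ) : ℂ) * S1 * S2)) * key

end
end

section
/- Let d ≥ 1, k ≥ 1, 0 ≤ t ≤ k, and let φ, φ' ∈ ℂ^{d+1} be unit vectors with ⟨e₀, φ⟩ = ⟨e₀, φ'⟩ = 0, where e₀ is the first standard basis vector. Define the vector φ_t in the k-fold tensor power (as a function (Fin k → Fin (d+1)) → ℂ) by φ_t = C(k,t)^{-1/2} · Σ_{S ⊆ Fin k, |S| = t} ⊗_{a<k} (if a ∈ S then φ else e₀), i.e., φ_t(i) = C(k,t)^{-1/2} · Σ_{S, |S|=t} ∏_{a∈S} φ(i a) · ∏_{a∉S} e₀(i a), and define φ'_t analogously from φ'. Then ⟨φ'_t, φ_t⟩ = ⟨φ', φ⟩^t; in particular φ_t is a unit vector and the map φ^{⊗t} ⊗ e₀^{⊗(k−t)} ↦ φ_t preserves inner products. -/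
noncomputable section

/-- `φ_t = C(k,t)^{-1/2} Σ_{S ⊆ [k], |S| = t} ⊗_{a<k} (if a ∈ S then φ else e₀)`, as a
vector in `(ℂ^{d+1})^{⊗k}` realized as a function `(Fin k → Fin (d+1)) → ℂ`. -/
def phiT (d k t : ℕ) (φ : Cvec (d + 1)) : (Fin k → Fin (d + 1)) → ℂ :=
  fun i => (((Real.sqrt (Nat.choose k t) : ℝ) : ℂ))⁻¹ *
    ∑ S ∈ Finset.powersetCard t (Finset.univ : Finset (Fin k)),
      ∏ a : Fin k, (if a ∈ S then φ (i a) else e0vec (d + 1) (i a))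

/-- The inner product on `(ℂ^{d+1})^{⊗k}` realized as functions, conjugate-linear in the
first argument. -/
def tensorInner (d k : ℕ) (x y : (Fin k → Fin (d + 1)) → ℂ) : ℂ :=
  ∑ i : Fin k → Fin (d + 1), star (x i) * y i

open Finset in
theorem key (d k t : ℕ) (ht : t ≤ k) (φ φ' : Cvec (d + 1))
    (hφ0 : φ 0 = 0) (hφ'0 : φ' 0 = 0) :
    tensorInner d k (phiT d k t φ') (phiT d k t φ) = (inner ℂ φ' φ : ℂ) ^ t := by
  classical
  set c : ℂ := (((Real.sqrt (Nat.choose k t) : ℝ) : ℂ))⁻¹ with hc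
  have hstarc : star c = c := by
    simp [hc, ← Complex.ofReal_inv, Complex.conj_ofReal]
  set P := powersetCard t (univ : Finset (Fin k)) with hP
  set u : Finset (Fin k) → Fin k → Fin (d+1) → ℂ :=
    fun S a j => if a ∈ S then φ' j else e0vec (d+1) j with hu
  set v : Finset (Fin k) → Fin k → Fin (d+1) → ℂ :=
    fun S a j => if a ∈ S then φ j else e0vec (d+1) j with hv
  have step1 : tensorInner d k (phiT d k t φ') (phiT d k t φ)
      = c * c * ∑ S' ∈ P, ∑ S ∈ P,
          ∏ a : Fin k, ∑ j : Fin (d+1), star (u S' a j) * v S a j := by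
    unfold tensorInner phiT
    rw [← hc, ← hP]
    have h1 : ∀ i : Fin k → Fin (d+1),
        star (c * ∑ S ∈ P, ∏ a : Fin k, u S a (i a)) *
          (c * ∑ S ∈ P, ∏ a : Fin k, v S a (i a))
        = c * c * ∑ S' ∈ P, ∑ S ∈ P,
            ∏ a : Fin k, star (u S' a (i a)) * v S a (i a) := by
      intro i
      rw [star_mul', hstarc, mul_mul_mul_comm, star_sum, Finset.sum_mul_sum]
      congr 1
      refine Finset.sum_congr rfl fun S' _ => Finset.sum_congr rfl fun S _ => ?_
      rw [star_prod, ← Finset.prod_mul_distrib]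
    rw [Finset.sum_congr rfl fun i _ => h1 i]
    rw [← Finset.mul_sum]
    congr 1
    rw [Finset.sum_comm]
    refine Finset.sum_congr rfl fun S' _ => ?_
    rw [Finset.sum_comm]
    refine Finset.sum_congr rfl fun S _ => ?_
    rw [Finset.prod_univ_sum, Fintype.piFinset_univ]
  have he0 : ∀ w : Fin (d+1) → ℂ, (∑ j : Fin (d+1), star (e0vec (d+1) j) * w j) = w 0 := by
    intro w
    have h : ∀ j : Fin (d+1), star (e0vec (d+1) j) * w j = if j = 0 then w 0 else 0 := by
      intro j
      rcases eq_or_ne j 0 with h | h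
      · simp [e0vec, h]
      · have h2 : (j : ℕ) ≠ 0 := fun hh => h (Fin.ext hh)
        simp [e0vec, h, h2]
    rw [Finset.sum_congr rfl fun j _ => h j]
    simp
  have he0' : ∀ w : Fin (d+1) → ℂ,
      (∑ j : Fin (d+1), star (w j) * e0vec (d+1) j) = star (w 0) := by
    intro w
    have h : ∀ j : Fin (d+1), star (w j) * e0vec (d+1) j = if j = 0 then star (w 0) else 0 := by
      intro j
      rcases eq_or_ne j 0 with h | h
      · simp [e0vec, h]
      · have h2 : (j : ℕ) ≠ 0 := fun hh => h (Fin.ext hh)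
        simp [e0vec, h, h2]
    rw [Finset.sum_congr rfl fun j _ => h j]
    simp
  have factor : ∀ (S' S : Finset (Fin k)) (a : Fin k),
      (∑ j : Fin (d+1), star (u S' a j) * v S a j)
      = if a ∈ S' then (if a ∈ S then (inner ℂ φ' φ : ℂ) else 0)
        else (if a ∈ S then 0 else 1) := by
    intro S' S a
    by_cases h1 : a ∈ S' <;> by_cases h2 : a ∈ S <;>
      simp only [hu, hv, h1, h2, if_true, if_false]
    · simp [PiLp.inner_apply, RCLike.inner_apply, mul_comm]
    · rw [he0' φ', hφ'0, star_zero]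
    · rw [he0 φ, hφ0]
    · rw [he0 (e0vec (d+1))]; simp [e0vec]
  have prodval : ∀ S' ∈ P, ∀ S ∈ P,
      (∏ a : Fin k, ∑ j : Fin (d+1), star (u S' a j) * v S a j)
      = if S' = S then (inner ℂ φ' φ : ℂ) ^ t else 0 := by
    intro S' hS' S hS
    rw [hP, Finset.mem_powersetCard_univ] at hS' hS
    by_cases h : S' = S
    · subst h
      rw [if_pos rfl]
      calc (∏ a : Fin k, ∑ j : Fin (d+1), star (u S' a j) * v S' a j)
          = ∏ a : Fin k, (if a ∈ S' then (inner ℂ φ' φ : ℂ) else 1) := by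
            refine Finset.prod_congr rfl fun a _ => ?_
            rw [factor]
            by_cases ha : a ∈ S' <;> simp [ha]
        _ = (inner ℂ φ' φ : ℂ) ^ t := by
            rw [Finset.prod_ite_mem, Finset.univ_inter, Finset.prod_const, hS']
    · rw [if_neg h]
      have hne : (S' \ S).Nonempty := by
        rw [Finset.sdiff_nonempty]
        intro hsub
        exact h (Finset.eq_of_subset_of_card_le hsub (le_of_eq (hS.trans hS'.symm)))
      obtain ⟨a, ha⟩ := hne
      rw [Finset.mem_sdiff] at ha
      refine Finset.prod_eq_zero (Finset.mem_univ a) ?_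
      rw [factor, if_pos ha.1, if_neg ha.2]
  rw [step1, Finset.sum_congr rfl fun S' hS' => Finset.sum_congr rfl fun S hS =>
    prodval S' hS' S hS]
  have hsum : ∑ S' ∈ P, ∑ S ∈ P, (if S' = S then (inner ℂ φ' φ : ℂ) ^ t else 0)
      = (Nat.choose k t : ℂ) * (inner ℂ φ' φ : ℂ) ^ t := by
    have h2 : ∀ S' ∈ P, (∑ S ∈ P, if S' = S then (inner ℂ φ' φ : ℂ) ^ t else 0)
        = (inner ℂ φ' φ : ℂ) ^ t := by
      intro S' hS'
      rw [Finset.sum_ite_eq, if_pos hS']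
    rw [Finset.sum_congr rfl h2, Finset.sum_const, nsmul_eq_mul]
    congr 2
    simp [hP, Finset.card_powersetCard]
  rw [hsum]
  have hcc : c * c = ((Nat.choose k t : ℂ))⁻¹ := by
    rw [hc, ← mul_inv, ← Complex.ofReal_mul, Real.mul_self_sqrt (Nat.cast_nonneg _)]
    push_cast
    ring
  rw [hcc, ← mul_assoc, inv_mul_cancel₀, one_mul]
  exact_mod_cast Nat.cast_ne_zero.mpr (Nat.choose_pos ht).ne'


/-- For unit vectors `φ, φ' ⊥ e₀` in `ℂ^{d+1}`,
`⟨φ'_t, φ_t⟩ = ⟨φ', φ⟩^t`; in particular `φ_t` is a unit vector, so the map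
`φ^{⊗t} ⊗ e₀^{⊗(k−t)} ↦ φ_t` preserves inner products. -/
theorem stmt11 (d k t : ℕ) (hd : 1 ≤ d) (hk : 1 ≤ k) (ht : t ≤ k)
    (φ φ' : Cvec (d + 1)) (hφ : ‖φ‖ = 1) (hφ' : ‖φ'‖ = 1)
    (hφ0 : (inner ℂ (EuclideanSpace.single (0 : Fin (d + 1)) (1 : ℂ)) φ : ℂ) = 0)
    (hφ'0 : (inner ℂ (EuclideanSpace.single (0 : Fin (d + 1)) (1 : ℂ)) φ' : ℂ) = 0) :
    tensorInner d k (phiT d k t φ') (phiT d k t φ) = (inner ℂ φ' φ : ℂ) ^ t ∧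
    tensorInner d k (phiT d k t φ) (phiT d k t φ) = 1 := by
  have h0 : φ 0 = 0 := by
    rw [EuclideanSpace.inner_single_left] at hφ0; simpa using hφ0
  have h0' : φ' 0 = 0 := by
    rw [EuclideanSpace.inner_single_left] at hφ'0; simpa using hφ'0
  refine ⟨key d k t ht φ φ' h0 h0', ?_⟩
  rw [key d k t ht φ φ h0 h0]
  have : (inner ℂ φ φ : ℂ) = 1 := by
    rw [inner_self_eq_norm_sq_to_K, hφ]; norm_num
  rw [this, one_pow]

end
end

section
/- Let d ≥ 1, m ≥ 1, and let p, q be probability measures on Fin d. On the product space (Fin m → Fin d) × (Fin m → Fin d) equipped with the measure (⊗_{j<m} p) × (⊗_{j<m} q) (i.e., x₁,…,x_m are i.i.d. with law p, independent of y₁,…,y_m i.i.d. with law q), define the collision estimator g̃(x,y) = m^{-2} Σ_{j,k<m} 1[x_j = y_k], and let g = Σ_{b} p({b})·q({b}). Then E[g̃] = g, and Var(g̃) ≤ g/m² + (1/m)·(Σ_b p({b})·q({b})² + Σ_b p({b})²·q({b})). -/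
open MeasureTheory

noncomputable section

/-- The collision estimator `g̃(x,y) = m⁻² Σ_{j,k} 1[x_j = y_k]`. -/
def collisionEst (d m : ℕ) (xy : (Fin m → Fin d) × (Fin m → Fin d)) : ℝ :=
  ((m : ℝ) ^ 2)⁻¹ * ∑ j : Fin m, ∑ k : Fin m, (if xy.1 j = xy.2 k then (1 : ℝ) else 0)

section Aux

variable {d m : ℕ}

/-- one-coordinate marginal computation -/
lemma sum_mul_pi (P : Fin d → ℝ) (hP : ∑ b, P b = 1) (j : Fin m) (f : Fin d → ℝ) :
    ∑ x : Fin m → Fin d, (∏ i, P (x i)) * f (x j) = ∑ b, P b * f b := by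
  have h1 : ∀ x : Fin m → Fin d, (∏ i, P (x i)) * f (x j)
      = ∏ i, (P (x i) * if i = j then f (x i) else 1) := by
    intro x
    rw [Finset.prod_mul_distrib, Finset.prod_ite_eq' Finset.univ j (fun i => f (x i))]
    simp
  simp_rw [h1]
  rw [← Fintype.piFinset_univ,
    Finset.sum_prod_piFinset Finset.univ (fun i a => P a * if i = j then f a else 1)]
  have h2 : ∀ i : Fin m, ∑ a, (P a * if i = j then f a else 1)
      = if i = j then (∑ b, P b * f b) else 1 := by
    intro i; by_cases h : i = j <;> simp [h, hP]
  simp_rw [h2]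
  rw [Finset.prod_ite_eq' Finset.univ j (fun _ => ∑ b, P b * f b)]
  simp

/-- two-coordinate marginal computation -/
lemma sum_mul_pi2 (P : Fin d → ℝ) (hP : ∑ b, P b = 1) {j j' : Fin m} (hjj : j ≠ j')
    (f g : Fin d → ℝ) :
    ∑ x : Fin m → Fin d, (∏ i, P (x i)) * (f (x j) * g (x j'))
      = (∑ b, P b * f b) * (∑ b, P b * g b) := by
  have h1 : ∀ x : Fin m → Fin d, (∏ i, P (x i)) * (f (x j) * g (x j'))
      = ∏ i, (P (x i) * ((if i = j then f (x i) else 1) * (if i = j' then g (x i) else 1))) := by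
    intro x
    rw [Finset.prod_mul_distrib, Finset.prod_mul_distrib,
      Finset.prod_ite_eq' Finset.univ j (fun i => f (x i)),
      Finset.prod_ite_eq' Finset.univ j' (fun i => g (x i))]
    simp
  simp_rw [h1]
  rw [← Fintype.piFinset_univ, Finset.sum_prod_piFinset Finset.univ
    (fun i a => P a * ((if i = j then f a else 1) * (if i = j' then g a else 1)))]
  have h2 : ∀ i : Fin m, ∑ a, (P a * ((if i = j then f a else 1) * (if i = j' then g a else 1)))
      = (if i = j then (∑ b, P b * f b) else 1) * (if i = j' then (∑ b, P b * g b) else 1) := by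
    intro i
    by_cases h : i = j
    · subst h
      simp [if_neg hjj, hP]
    · by_cases h' : i = j' <;> simp [h, h', Ne.symm hjj, hP]
  simp_rw [h2]
  rw [Finset.prod_mul_distrib,
    Finset.prod_ite_eq' Finset.univ j (fun _ => ∑ b, P b * f b),
    Finset.prod_ite_eq' Finset.univ j' (fun _ => ∑ b, P b * g b)]
  simp

lemma sum_ite_line (j : Fin m) (u v : ℝ) :
    ∑ j' : Fin m, (if j = j' then u else v) = u + ((m : ℝ) - 1) * v := by
  have h : ∀ j' : Fin m, (if j = j' then u else v) = v + (if j = j' then u - v else 0) := by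
    intro j'; split <;> ring
  simp_rw [h]
  rw [Finset.sum_add_distrib, Finset.sum_const, Finset.sum_ite_eq]
  simp only [Finset.card_univ, Fintype.card_fin, nsmul_eq_mul, Finset.mem_univ, if_true]
  ring

lemma quad_sum (u v : ℝ) :
    ∑ j : Fin m, ∑ j' : Fin m, (if j = j' then u else v)
      = (m : ℝ) * u + ((m : ℝ) ^ 2 - m) * v := by
  simp_rw [sum_ite_line]
  rw [Finset.sum_const]
  simp only [Finset.card_univ, Fintype.card_fin, nsmul_eq_mul]
  ring

/-- pull a sum out of a product-weighted double sum -/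
lemma pull_sum {α β ι : Type*} [Fintype α] [Fintype β] [Fintype ι]
    (c : ℝ) (W : α → ℝ) (V : β → ℝ) (G : α → β → ι → ℝ) :
    ∑ x : α, ∑ y : β, (W x * V y) * (c * ∑ t : ι, G x y t)
      = c * ∑ t : ι, ∑ x : α, ∑ y : β, (W x * V y) * G x y t := by
  have h : ∀ (x : α) (y : β), (W x * V y) * (c * ∑ t : ι, G x y t)
      = ∑ t : ι, c * ((W x * V y) * G x y t) := by
    intro x y
    rw [Finset.mul_sum, Finset.mul_sum]
    exact Finset.sum_congr rfl fun t _ => by ring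
  simp_rw [h]
  have h2 : ∀ x : α, ∑ y : β, ∑ t : ι, c * ((W x * V y) * G x y t)
      = ∑ t : ι, ∑ y : β, c * ((W x * V y) * G x y t) :=
    fun x => Finset.sum_comm
  simp_rw [h2]
  rw [Finset.sum_comm, Finset.mul_sum]
  refine Finset.sum_congr rfl fun t _ => ?_
  rw [Finset.mul_sum]
  refine Finset.sum_congr rfl fun x _ => ?_
  rw [Finset.mul_sum]

end Aux

/-- The collision estimator is unbiased for the inner product
`g = Σ_b p_b q_b` of two distributions on `Fin d`, and its variance is at most
`g/m² + (Σ_b p_b q_b² + Σ_b p_b² q_b)/m`. -/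
theorem stmt14 (d m : ℕ) (hd : 1 ≤ d) (hm : 1 ≤ m)
    (p q : Measure (Fin d)) [IsProbabilityMeasure p] [IsProbabilityMeasure q] :
    (∫ xy : (Fin m → Fin d) × (Fin m → Fin d), collisionEst d m xy
        ∂((Measure.pi fun _ : Fin m => p).prod (Measure.pi fun _ : Fin m => q)))
      = ∑ b : Fin d, (p {b}).toReal * (q {b}).toReal ∧
    (∫ xy : (Fin m → Fin d) × (Fin m → Fin d), (collisionEst d m xy) ^ 2
        ∂((Measure.pi fun _ : Fin m => p).prod (Measure.pi fun _ : Fin m => q)))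
      - (∑ b : Fin d, (p {b}).toReal * (q {b}).toReal) ^ 2
      ≤ (∑ b : Fin d, (p {b}).toReal * (q {b}).toReal) / (m : ℝ) ^ 2
        + (1 / (m : ℝ)) *
            (∑ b : Fin d, (p {b}).toReal * (q {b}).toReal ^ 2
              + ∑ b : Fin d, (p {b}).toReal ^ 2 * (q {b}).toReal) := by
  classical
  set P : Fin d → ℝ := fun b => (p {b}).toReal with hPdef
  set Q : Fin d → ℝ := fun b => (q {b}).toReal with hQdef
  set W : (Fin m → Fin d) → ℝ := fun x => ∏ i, P (x i) with hWdef
  set V : (Fin m → Fin d) → ℝ := fun y => ∏ i, Q (y i) with hVdef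
  have hP : ∑ b, P b = 1 := by
    have h := integral_fintype (μ := p) (f := fun _ => (1 : ℝ)) Integrable.of_finite
    simpa [Measure.real] using h.symm
  have hQ : ∑ b, Q b = 1 := by
    have h := integral_fintype (μ := q) (f := fun _ => (1 : ℝ)) Integrable.of_finite
    simpa [Measure.real] using h.symm
  -- reduce integrals to finite sums
  have key : ∀ f : (Fin m → Fin d) × (Fin m → Fin d) → ℝ,
      (∫ xy, f xy ∂((Measure.pi fun _ : Fin m => p).prod (Measure.pi fun _ : Fin m => q)))
        = ∑ x : Fin m → Fin d, ∑ y : Fin m → Fin d, (W x * V y) * f (x, y) := by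
    intro f
    rw [integral_fintype (f := f) Integrable.of_finite, Fintype.sum_prod_type]
    refine Finset.sum_congr rfl fun x _ => Finset.sum_congr rfl fun y _ => ?_
    have h1 : ({(x, y)} : Set _) = {x} ×ˢ {y} := (Set.singleton_prod_singleton).symm
    rw [smul_eq_mul, Measure.real, h1, Measure.prod_prod]
    have h2 : ∀ (z : Fin m → Fin d),
        ({z} : Set (Fin m → Fin d)) = Set.pi Set.univ fun i => {z i} :=
      fun z => (Set.univ_pi_singleton z).symm
    rw [h2 x, h2 y, Measure.pi_pi, Measure.pi_pi, ENNReal.toReal_mul,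
      ENNReal.toReal_prod, ENNReal.toReal_prod]
  set g : ℝ := ∑ b, P b * Q b with hgdef
  set A : ℝ := ∑ b, P b * Q b ^ 2 with hAdef
  set B : ℝ := ∑ b, P b ^ 2 * Q b with hBdef
  -- expectation of a single collision indicator
  have e1 : ∀ j k : Fin m, ∑ x : Fin m → Fin d, ∑ y : Fin m → Fin d,
      (W x * V y) * (if x j = y k then (1 : ℝ) else 0) = g := by
    intro j k
    have inner : ∀ x : Fin m → Fin d,
        ∑ y : Fin m → Fin d, (W x * V y) * (if x j = y k then (1 : ℝ) else 0)
          = W x * Q (x j) := by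
      intro x
      have h := sum_mul_pi Q hQ k (fun a => if x j = a then (1 : ℝ) else 0)
      have h' : ∑ b, Q b * (if x j = b then (1 : ℝ) else 0) = Q (x j) := by
        simp [mul_ite, mul_one, mul_zero, Finset.sum_ite_eq]
      calc ∑ y : Fin m → Fin d, (W x * V y) * (if x j = y k then (1 : ℝ) else 0)
          = W x * ∑ y : Fin m → Fin d, V y * (if x j = y k then (1 : ℝ) else 0) := by
            rw [Finset.mul_sum]; exact Finset.sum_congr rfl fun y _ => by ring
        _ = W x * Q (x j) := by rw [h, h']
    simp_rw [inner]
    rw [sum_mul_pi P hP j Q]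
  -- second moment of a pair of collision indicators
  have e2 : ∀ j k j' k' : Fin m, ∑ x : Fin m → Fin d, ∑ y : Fin m → Fin d,
      (W x * V y) * ((if x j = y k then (1 : ℝ) else 0) * (if x j' = y k' then (1 : ℝ) else 0))
      = if j = j' then (if k = k' then g else A) else (if k = k' then B else g * g) := by
    intro j k j' k'
    by_cases hj : j = j'
    · subst hj
      by_cases hk : k = k'
      · subst hk
        rw [if_pos rfl, if_pos rfl]
        have hsq : ∀ (c : Prop) [Decidable c],
            (if c then (1 : ℝ) else 0) * (if c then (1 : ℝ) else 0) = if c then 1 else 0 := by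
          intro c _; split <;> simp
        simp_rw [hsq]
        exact e1 j k
      · rw [if_pos rfl, if_neg hk]
        have inner : ∀ x : Fin m → Fin d,
            ∑ y : Fin m → Fin d, (W x * V y) *
              ((if x j = y k then (1 : ℝ) else 0) * (if x j = y k' then (1 : ℝ) else 0))
            = W x * (Q (x j) * Q (x j)) := by
          intro x
          have h := sum_mul_pi2 Q hQ hk (fun a => if x j = a then (1 : ℝ) else 0)
            (fun a => if x j = a then (1 : ℝ) else 0)
          have h' : ∑ b, Q b * (if x j = b then (1 : ℝ) else 0) = Q (x j) := by
            simp [mul_ite, mul_one, mul_zero, Finset.sum_ite_eq]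
          calc ∑ y : Fin m → Fin d, (W x * V y) *
                ((if x j = y k then (1 : ℝ) else 0) * (if x j = y k' then (1 : ℝ) else 0))
              = W x * ∑ y : Fin m → Fin d, V y *
                ((if x j = y k then (1 : ℝ) else 0) * (if x j = y k' then (1 : ℝ) else 0)) := by
                rw [Finset.mul_sum]; exact Finset.sum_congr rfl fun y _ => by ring
            _ = W x * (Q (x j) * Q (x j)) := by rw [h, h']
        simp_rw [inner]
        rw [sum_mul_pi P hP j (fun b => Q b * Q b)]
        rw [hAdef]
        exact Finset.sum_congr rfl fun b _ => by ring
    · rw [if_neg hj]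
      by_cases hk : k = k'
      · subst hk
        rw [if_pos rfl]
        rw [Finset.sum_comm]
        have inner : ∀ y : Fin m → Fin d,
            ∑ x : Fin m → Fin d, (W x * V y) *
              ((if x j = y k then (1 : ℝ) else 0) * (if x j' = y k then (1 : ℝ) else 0))
            = V y * (P (y k) * P (y k)) := by
          intro y
          have h := sum_mul_pi2 P hP hj (fun a => if a = y k then (1 : ℝ) else 0)
            (fun a => if a = y k then (1 : ℝ) else 0)
          have h' : ∑ b, P b * (if b = y k then (1 : ℝ) else 0) = P (y k) := by
            simp [mul_ite, mul_one, mul_zero, Finset.sum_ite_eq']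
          calc ∑ x : Fin m → Fin d, (W x * V y) *
                ((if x j = y k then (1 : ℝ) else 0) * (if x j' = y k then (1 : ℝ) else 0))
              = V y * ∑ x : Fin m → Fin d, W x *
                ((if x j = y k then (1 : ℝ) else 0) * (if x j' = y k then (1 : ℝ) else 0)) := by
                rw [Finset.mul_sum]; exact Finset.sum_congr rfl fun x _ => by ring
            _ = V y * (P (y k) * P (y k)) := by rw [h, h']
        simp_rw [inner]
        rw [sum_mul_pi Q hQ k (fun b => P b * P b)]
        rw [hBdef]
        exact Finset.sum_congr rfl fun b _ => by ring
      · rw [if_neg hk]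
        have inner : ∀ x : Fin m → Fin d,
            ∑ y : Fin m → Fin d, (W x * V y) *
              ((if x j = y k then (1 : ℝ) else 0) * (if x j' = y k' then (1 : ℝ) else 0))
            = W x * (Q (x j) * Q (x j')) := by
          intro x
          have h := sum_mul_pi2 Q hQ hk (fun a => if x j = a then (1 : ℝ) else 0)
            (fun a => if x j' = a then (1 : ℝ) else 0)
          have h' : ∑ b, Q b * (if x j = b then (1 : ℝ) else 0) = Q (x j) := by
            simp [mul_ite, mul_one, mul_zero, Finset.sum_ite_eq]
          have h'' : ∑ b, Q b * (if x j' = b then (1 : ℝ) else 0) = Q (x j') := by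
            simp [mul_ite, mul_one, mul_zero, Finset.sum_ite_eq]
          calc ∑ y : Fin m → Fin d, (W x * V y) *
                ((if x j = y k then (1 : ℝ) else 0) * (if x j' = y k' then (1 : ℝ) else 0))
              = W x * ∑ y : Fin m → Fin d, V y *
                ((if x j = y k then (1 : ℝ) else 0) * (if x j' = y k' then (1 : ℝ) else 0)) := by
                rw [Finset.mul_sum]; exact Finset.sum_congr rfl fun y _ => by ring
            _ = W x * (Q (x j) * Q (x j')) := by rw [h, h', h'']
        simp_rw [inner]
        exact sum_mul_pi2 P hP hj Q Q
  have hm' : (1 : ℝ) ≤ (m : ℝ) := by exact_mod_cast hm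
  have hm0 : (0 : ℝ) < (m : ℝ) := lt_of_lt_of_le one_pos hm'
  -- first part: expectation
  have part1 : (∫ xy : (Fin m → Fin d) × (Fin m → Fin d), collisionEst d m xy
      ∂((Measure.pi fun _ : Fin m => p).prod (Measure.pi fun _ : Fin m => q))) = g := by
    rw [key (collisionEst d m)]
    have hc : ∀ x y : Fin m → Fin d, collisionEst d m (x, y)
        = ((m : ℝ) ^ 2)⁻¹ * ∑ t : Fin m × Fin m, (if x t.1 = y t.2 then (1 : ℝ) else 0) := by
      intro x y
      rw [collisionEst, Fintype.sum_prod_type]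
    simp_rw [hc]
    rw [pull_sum]
    have : ∀ t : Fin m × Fin m, ∑ x : Fin m → Fin d, ∑ y : Fin m → Fin d,
        (W x * V y) * (if x t.1 = y t.2 then (1 : ℝ) else 0) = g := fun t => e1 t.1 t.2
    simp_rw [this]
    rw [Finset.sum_const, Finset.card_univ, Fintype.card_prod, Fintype.card_fin,
      nsmul_eq_mul]
    push_cast
    have hm0 : (0 : ℝ) < (m : ℝ) := by exact_mod_cast hm
    field_simp
  refine ⟨part1, ?_⟩
  -- second part: second moment
  have part2 : (∫ xy : (Fin m → Fin d) × (Fin m → Fin d), (collisionEst d m xy) ^ 2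
      ∂((Measure.pi fun _ : Fin m => p).prod (Measure.pi fun _ : Fin m => q)))
      = (((m : ℝ) ^ 2)⁻¹) ^ 2 * ((m : ℝ) * ((m : ℝ) * g + ((m : ℝ) ^ 2 - m) * A)
          + ((m : ℝ) ^ 2 - m) * ((m : ℝ) * B + ((m : ℝ) ^ 2 - m) * (g * g))) := by
    rw [key (fun xy => (collisionEst d m xy) ^ 2)]
    have hc2 : ∀ x y : Fin m → Fin d, (collisionEst d m (x, y)) ^ 2
        = (((m : ℝ) ^ 2)⁻¹) ^ 2 * ∑ s : (Fin m × Fin m) × (Fin m × Fin m),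
            ((if x s.1.1 = y s.1.2 then (1 : ℝ) else 0)
              * (if x s.2.1 = y s.2.2 then (1 : ℝ) else 0)) := by
      intro x y
      have hS : ∑ j : Fin m, ∑ k : Fin m, (if x j = y k then (1 : ℝ) else 0)
          = ∑ t : Fin m × Fin m, (if x t.1 = y t.2 then (1 : ℝ) else 0) :=
        (Fintype.sum_prod_type
          (fun t : Fin m × Fin m => if x t.1 = y t.2 then (1 : ℝ) else 0)).symm
      rw [collisionEst, hS, mul_pow,
        pow_two (∑ t : Fin m × Fin m, (if x t.1 = y t.2 then (1 : ℝ) else 0)),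
        Fintype.sum_mul_sum]
      congr 1
      exact (Fintype.sum_prod_type
        (fun s : (Fin m × Fin m) × (Fin m × Fin m) =>
          (if x s.1.1 = y s.1.2 then (1 : ℝ) else 0)
            * (if x s.2.1 = y s.2.2 then (1 : ℝ) else 0))).symm
    simp_rw [hc2]
    rw [pull_sum]
    congr 1
    have hT : ∀ s : (Fin m × Fin m) × (Fin m × Fin m),
        ∑ x : Fin m → Fin d, ∑ y : Fin m → Fin d, (W x * V y) *
          ((if x s.1.1 = y s.1.2 then (1 : ℝ) else 0)
            * (if x s.2.1 = y s.2.2 then (1 : ℝ) else 0))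
        = if s.1.1 = s.2.1 then (if s.1.2 = s.2.2 then g else A)
          else (if s.1.2 = s.2.2 then B else g * g) :=
      fun s => e2 s.1.1 s.1.2 s.2.1 s.2.2
    simp_rw [hT]
    rw [Fintype.sum_prod_type]
    have inner2 : ∀ j j' : Fin m, ∑ k : Fin m, ∑ k' : Fin m,
        (if j = j' then (if k = k' then g else A) else (if k = k' then B else g * g))
        = if j = j' then ((m : ℝ) * g + ((m : ℝ) ^ 2 - m) * A)
          else ((m : ℝ) * B + ((m : ℝ) ^ 2 - m) * (g * g)) := by
      intro j j'
      by_cases h : j = j'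
      · simp only [if_pos h]; exact quad_sum g A
      · simp only [if_neg h]; exact quad_sum B (g * g)
    calc ∑ t : Fin m × Fin m, ∑ s : Fin m × Fin m,
          (if t.1 = s.1 then (if t.2 = s.2 then g else A)
            else (if t.2 = s.2 then B else g * g))
        = ∑ j : Fin m, ∑ k : Fin m, ∑ j' : Fin m, ∑ k' : Fin m,
            (if j = j' then (if k = k' then g else A) else (if k = k' then B else g * g)) := by
          rw [Fintype.sum_prod_type]
          exact Finset.sum_congr rfl fun j _ => Finset.sum_congr rfl fun k _ => by
            rw [Fintype.sum_prod_type]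
      _ = ∑ j : Fin m, ∑ j' : Fin m, ∑ k : Fin m, ∑ k' : Fin m,
            (if j = j' then (if k = k' then g else A) else (if k = k' then B else g * g)) := by
          exact Finset.sum_congr rfl fun j _ => Finset.sum_comm
      _ = ∑ j : Fin m, ∑ j' : Fin m,
            (if j = j' then ((m : ℝ) * g + ((m : ℝ) ^ 2 - m) * A)
              else ((m : ℝ) * B + ((m : ℝ) ^ 2 - m) * (g * g))) := by
          exact Finset.sum_congr rfl fun j _ => Finset.sum_congr rfl fun j' _ => inner2 j j'
      _ = (m : ℝ) * ((m : ℝ) * g + ((m : ℝ) ^ 2 - m) * A)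
            + ((m : ℝ) ^ 2 - m) * ((m : ℝ) * B + ((m : ℝ) ^ 2 - m) * (g * g)) :=
          quad_sum _ _
  rw [part2]
  -- final arithmetic
  have hg0 : 0 ≤ g := Finset.sum_nonneg fun b _ => mul_nonneg ENNReal.toReal_nonneg
    ENNReal.toReal_nonneg
  have hA0 : 0 ≤ A := Finset.sum_nonneg fun b _ => mul_nonneg ENNReal.toReal_nonneg
    (sq_nonneg _)
  have hB0 : 0 ≤ B := Finset.sum_nonneg fun b _ => mul_nonneg (sq_nonneg _)
    ENNReal.toReal_nonneg
  set M : ℝ := (m : ℝ) with hM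
  rw [← sub_nonneg]
  have expand : g / M ^ 2 + 1 / M * (A + B)
      - ((((M ^ 2)⁻¹) ^ 2 * (M * (M * g + (M ^ 2 - M) * A)
          + (M ^ 2 - M) * (M * B + (M ^ 2 - M) * (g * g)))) - g ^ 2)
      = ((A + B) + (2 * M - 1) * g ^ 2) / M ^ 2 := by
    field_simp
    ring
  rw [expand]
  apply div_nonneg _ (le_of_lt (by positivity : (0 : ℝ) < M ^ 2))
  nlinarith [mul_nonneg (by linarith : (0 : ℝ) ≤ 2 * M - 1) (sq_nonneg g)]

end
end
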